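/- arXiv:2003.05515 — 5 statements merged into one kernel-verified Lean document; each statement's English description precedes it below -/
import Mathlib

section
/- Let h(t) = e^{C/t} F(t) where F(t) = P(τ ≤ t) satisfies lim_{t→0+} t ln F(t) = −C < 0. For any p > −1 and q > −1, the ratio of ∫₀^∞ s^p e^{−√(λC)(s+1/s)} h(√(C/λ) s) ds to ∫₀^∞ s^q e^{−√(λC)(s+1/s)} h(√(C/λ) s) ds tends to 1 as λ → ∞. -/
set_option maxHeartbeats 1000000
open MeasureTheory ProbabilityTheory Filter
open scoped ENNReal

namespace LaplaceAux

lemma gamma_integrable {r : ℝ} (hr : -1 < r) :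
    IntegrableOn (fun s : ℝ => s ^ r * Real.exp (-s)) (Set.Ioi 0) := by
  have h := Real.GammaIntegral_convergent (s := r + 1) (by linarith)
  simp only [add_sub_cancel_right] at h
  exact h.congr_fun (fun x _ => by ring) measurableSet_Ioi

lemma gamma_value {r : ℝ} (hr : -1 < r) :
    (∫ s in Set.Ioi (0:ℝ), s ^ r * Real.exp (-s)) = Real.Gamma (r + 1) := by
  rw [Real.Gamma_eq_integral (by linarith : (0:ℝ) < r + 1)]
  rw [show r + 1 - 1 = r by ring]
  exact setIntegral_congr_fun measurableSet_Ioi (fun x _ => by ring)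

-- Claim A : tail lower bound on the exponent
lemma claimA {δ s : ℝ} (hδ0 : 0 < δ) (hδ2 : δ ≤ 1/2) (hs : 0 < s)
    (hout : s ≤ 1 - δ ∨ 1 + δ ≤ s) :
    2 + δ^2/4 ≤ s + (1 - δ^2/16)/s := by
  rw [← sub_nonneg]
  have key : 0 ≤ (s^2 - (2 + δ^2/4)*s + (1 - δ^2/16)) := by
    rcases hout with h1 | h1
    · nlinarith [mul_nonneg (by linarith : (0:ℝ) ≤ 1 - δ - s)
        (by nlinarith : (0:ℝ) ≤ (2 + δ^2/4) - s - (1 - δ))]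
    · nlinarith [mul_nonneg (by linarith : (0:ℝ) ≤ s - (1 + δ))
        (by nlinarith : (0:ℝ) ≤ s + (1 + δ) - (2 + δ^2/4))]
  have : s + (1 - δ^2/16)/s - (2 + δ^2/4)
      = (s^2 - (2 + δ^2/4)*s + (1 - δ^2/16))/s := by field_simp; ring
  rw [this]
  positivity

lemma core (h : ℝ → ℝ) (hmeas : Measurable h) (C : ℝ) (hC : 0 < C)
    (hub : ∀ t, 0 < t → 0 ≤ h t ∧ h t ≤ Real.exp (C / t))
    (r r' ε δ m t₀ M : ℝ)
    (hr : -1 < r) (hr' : -1 < r') (hε : 0 < ε)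
    (hδ0 : 0 < δ) (hδ2 : δ ≤ 1/2)
    (hδc : ∀ s : ℝ, 1 - δ ≤ s → s ≤ 1 + δ → s ^ (r - r') ≤ 1 + ε/2)
    (hm : m = min 1 (2 ^ r'))
    (ht₀ : 0 < t₀)
    (hsm : ∀ t, 0 < t → t ≤ t₀ →
      Real.exp (-(δ^2/16 * C) / t) ≤ h t ∧ h t ≤ Real.exp ((δ^2/16 * C) / t))
    (hM1 : 1 ≤ M) (hM2 : 2 ≤ M) (hM3 : 8 * C / t₀ ≤ M)
    (hcov : C * (1 + δ) / t₀ ≤ M)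
    (hE4 : Real.exp 3 * Real.Gamma (r + 1) * Real.exp (-(M * (δ^2/8)))
        ≤ ε/4 * (δ^2/16) * m)
    (hE5 : Real.Gamma (r + 1) * Real.exp (-M) ≤ ε/4 * (δ^2/16) * m) :
    (∫ s in Set.Ioi (0:ℝ), s ^ r * Real.exp (-M * (s + 1/s)) * h (C / M * s))
      ≤ (1 + ε) * ∫ s in Set.Ioi (0:ℝ), s ^ r' * Real.exp (-M * (s + 1/s)) * h (C / M * s)
    ∧ 0 < ∫ s in Set.Ioi (0:ℝ), s ^ r' * Real.exp (-M * (s + 1/s)) * h (C / M * s) := by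
  have hM0 : 0 < M := by linarith
  set f : ℝ → ℝ → ℝ := fun ρ s => s ^ ρ * Real.exp (-M * (s + 1/s)) * h (C / M * s) with hf
  -- basic pointwise facts
  have hts : ∀ s : ℝ, 0 < s → C / (C / M * s) = M / s := by
    intro s hs; field_simp
  have htpos : ∀ s : ℝ, 0 < s → 0 < C / M * s := fun s hs => by positivity
  have hfnn : ∀ ρ, ∀ s ∈ Set.Ioi (0:ℝ), 0 ≤ f ρ s := by
    intro ρ s hs
    have hs0 : (0:ℝ) < s := hs
    have h1 := (hub _ (htpos s hs0)).1
    exact mul_nonneg (by positivity) h1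
  have hfub : ∀ ρ, ∀ s : ℝ, 0 < s → f ρ s ≤ s ^ ρ * Real.exp (-(M * s)) := by
    intro ρ s hs
    have h1 : h (C / M * s) ≤ Real.exp (M / s) := by
      have := (hub _ (htpos s hs)).2; rwa [hts s hs] at this
    have h2 : Real.exp (-M * (s + 1/s)) * Real.exp (M / s) = Real.exp (-(M * s)) := by
      rw [← Real.exp_add]; congr 1; field_simp; ring
    calc f ρ s ≤ s ^ ρ * Real.exp (-M * (s + 1/s)) * Real.exp (M / s) := by
          apply mul_le_mul_of_nonneg_left h1 (by positivity)
      _ = s ^ ρ * Real.exp (-(M * s)) := by rw [mul_assoc, h2]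
  have hmeasf : ∀ ρ, Measurable (f ρ) := by
    intro ρ
    fun_prop
  have hint : ∀ ρ, -1 < ρ → IntegrableOn (f ρ) (Set.Ioi 0) := by
    intro ρ hρ
    apply (gamma_integrable hρ).mono' ((hmeasf ρ).aestronglyMeasurable.restrict)
    rw [ae_restrict_iff' measurableSet_Ioi]
    filter_upwards with s hs
    rw [Real.norm_eq_abs, abs_of_nonneg (hfnn ρ s hs)]
    refine (hfub ρ s hs).trans (mul_le_mul_of_nonneg_left ?_ (Real.rpow_nonneg hs.le ρ))
    exact Real.exp_le_exp.mpr (by nlinarith [(show (0:ℝ) < s from hs).le])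
  -- ===== lower bound part =====
  set c₁ : ℝ := m * Real.exp (-M * (2 + δ^2/8)) with hc₁
  have hmpos : 0 < m := by
    rw [hm]; apply lt_min one_pos (Real.rpow_pos_of_pos two_pos r')
  have hc₁pos : 0 < c₁ := by rw [hc₁]; positivity
  have hNsub : Set.Icc (1:ℝ) (1 + δ^2/16) ⊆ Set.Ioi 0 := by
    intro x hx; exact lt_of_lt_of_le one_pos hx.1
  have hKsub : Set.Icc (1-δ) (1+δ) ⊆ Set.Ioi 0 := by
    intro x hx; have := hx.1; simp only [Set.mem_Ioi]; linarith
  have hlow : ∀ s ∈ Set.Icc (1:ℝ) (1 + δ^2/16), c₁ ≤ f r' s := by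
    intro s hs
    have hs0 : (0:ℝ) < s := lt_of_lt_of_le one_pos hs.1
    have hs2 : s ≤ 2 := by nlinarith [hs.2]
    have hm' : m ≤ s ^ r' := by
      rcases le_or_gt 0 r' with h0 | h0
      · calc m ≤ 1 := by rw [hm]; exact min_le_left _ _
          _ = (1:ℝ) ^ r' := (Real.one_rpow r').symm
          _ ≤ s ^ r' := Real.rpow_le_rpow zero_le_one hs.1 h0
      · calc m ≤ 2 ^ r' := by rw [hm]; exact min_le_right _ _
          _ ≤ s ^ r' := Real.rpow_le_rpow_of_nonpos hs0 hs2 h0.le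
    have htle : C / M * s ≤ t₀ := by
      have h1 : C / M * s ≤ C / M * (1 + δ) := by
        apply mul_le_mul_of_nonneg_left _ (by positivity)
        nlinarith [hs.2, hδ0.le, hδ2]
      have h2 : C / M * (1 + δ) ≤ t₀ := by
        rw [div_mul_eq_mul_div, div_le_iff₀ hM0]
        have := (div_le_iff₀ ht₀).mp hcov
        nlinarith
      linarith
    have hhl : Real.exp (-(δ^2/16 * M) / s) ≤ h (C / M * s) := by
      have h3 := (hsm _ (htpos s hs0) htle).1
      have heq : -(δ^2/16 * C) / (C / M * s) = -(δ^2/16 * M) / s := by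
        field_simp
      rwa [heq] at h3
    have hexp : Real.exp (-M * (s + 1/s)) * Real.exp (-(δ^2/16 * M) / s)
        = Real.exp (-M * (s + (1 + δ^2/16)/s)) := by
      rw [← Real.exp_add]; congr 1; field_simp; ring
    have hψ : s + (1 + δ^2/16)/s ≤ 2 + δ^2/8 := by
      have h1 : (1 + δ^2/16)/s ≤ 1 + δ^2/16 :=
        div_le_self (by positivity) hs.1
      linarith [hs.2]
    calc c₁ = m * Real.exp (-M * (2 + δ^2/8)) := hc₁
      _ ≤ s ^ r' * Real.exp (-M * (s + (1 + δ^2/16)/s)) := by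
          apply mul_le_mul hm' _ (Real.exp_pos _).le (Real.rpow_nonneg hs0.le _)
          exact Real.exp_le_exp.mpr (by nlinarith)
      _ = s ^ r' * (Real.exp (-M * (s + 1/s)) * Real.exp (-(δ^2/16 * M) / s)) := by
          rw [hexp]
      _ ≤ s ^ r' * (Real.exp (-M * (s + 1/s)) * h (C / M * s)) := by
          apply mul_le_mul_of_nonneg_left _ (Real.rpow_nonneg hs0.le _)
          exact mul_le_mul_of_nonneg_left hhl (Real.exp_pos _).le
      _ = f r' s := by rw [hf]; ring
  have hLband : c₁ * (δ^2/16) ≤ ∫ s in Set.Icc (1:ℝ) (1 + δ^2/16), f r' s := by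
    have hvol : (volume (Set.Icc (1:ℝ) (1 + δ^2/16))).toReal = δ^2/16 := by
      rw [Real.volume_Icc, ENNReal.toReal_ofReal (by nlinarith)]; ring
    have h5 := setIntegral_ge_of_const_le (μ := volume) measurableSet_Icc
      (by rw [Real.volume_Icc]; exact ENNReal.ofReal_ne_top) hlow
      ((hint r' hr').mono_set hNsub)
    rw [measureReal_def, hvol, smul_eq_mul] at h5; linarith
  have hfnn' : ∀ ρ, 0 ≤ᵐ[volume.restrict (Set.Ioi (0:ℝ))] f ρ := by
    intro ρ
    rw [EventuallyLE, ae_restrict_iff' measurableSet_Ioi]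
    filter_upwards with s hs using hfnn ρ s hs
  have hL : c₁ * (δ^2/16) ≤ ∫ s in Set.Ioi (0:ℝ), f r' s := by
    refine hLband.trans (setIntegral_mono_set (hint r' hr') (hfnn' r')
      (HasSubset.Subset.eventuallyLE hNsub))
  have hIpos : 0 < ∫ s in Set.Ioi (0:ℝ), f r' s := lt_of_lt_of_le (by positivity) hL
  refine ⟨?_, hIpos⟩
  -- ===== split =====
  have hsplit : (∫ s in Set.Ioi (0:ℝ), f r s)
      = (∫ s in Set.Icc (1-δ) (1+δ), f r s)
        + ∫ s in Set.Ioi (0:ℝ) \ Set.Icc (1-δ) (1+δ), f r s := by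
    rw [← setIntegral_union Set.disjoint_sdiff_right
      (measurableSet_Ioi.diff measurableSet_Icc)
      ((hint r hr).mono_set hKsub) ((hint r hr).mono_set Set.diff_subset),
      Set.union_diff_cancel hKsub]
  -- ===== middle =====
  have hmid : (∫ s in Set.Icc (1-δ) (1+δ), f r s)
      ≤ (1 + ε/2) * ∫ s in Set.Ioi (0:ℝ), f r' s := by
    have step1 : (∫ s in Set.Icc (1-δ) (1+δ), f r s)
        ≤ ∫ s in Set.Icc (1-δ) (1+δ), (1 + ε/2) * f r' s := by
      apply setIntegral_mono_on ((hint r hr).mono_set hKsub)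
        (((hint r' hr').mono_set hKsub).const_mul _) measurableSet_Icc
      intro s hs
      have hs0 : (0:ℝ) < s := hKsub hs
      have hsplitpow : s ^ r = s ^ (r - r') * s ^ r' := by
        rw [← Real.rpow_add hs0]; ring_nf
      have hrest : (0:ℝ) ≤ s ^ r' * (Real.exp (-M * (s + 1/s)) * h (C / M * s)) := by
        have h6 := (hub _ (htpos s hs0)).1
        have h7 : (0:ℝ) ≤ s ^ r' := Real.rpow_nonneg hs0.le _
        positivity
      calc f r s = s ^ (r - r') * (s ^ r' * (Real.exp (-M * (s + 1/s)) * h (C / M * s))) := by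
            rw [hf]; simp only; rw [hsplitpow]; ring
        _ ≤ (1 + ε/2) * (s ^ r' * (Real.exp (-M * (s + 1/s)) * h (C / M * s))) :=
            mul_le_mul_of_nonneg_right (hδc s hs.1 hs.2) hrest
        _ = (1 + ε/2) * f r' s := by simp only [hf]; ring
    refine step1.trans ?_
    rw [integral_const_mul]
    apply mul_le_mul_of_nonneg_left _ (by linarith)
    exact setIntegral_mono_set (hint r' hr') (hfnn' r')
      (HasSubset.Subset.eventuallyLE hKsub)
  -- ===== tail =====
  set D : ℝ := Real.exp 3 * Real.exp (-M * (2 + δ^2/4))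
      + Real.exp (-M * (2 + δ^2/8)) * Real.exp (-M) with hD
  have htail_pt : ∀ s ∈ Set.Ioi (0:ℝ) \ Set.Icc (1-δ) (1+δ),
      f r s ≤ D * (s ^ r * Real.exp (-s)) := by
    intro s hs
    obtain ⟨hs0', hsK⟩ := hs
    have hs0 : (0:ℝ) < s := hs0'
    have hsr : (0:ℝ) ≤ s ^ r := Real.rpow_nonneg hs0.le _
    have hout : s ≤ 1 - δ ∨ 1 + δ ≤ s := by
      rcases le_or_gt s (1-δ) with h1 | h1
      · exact Or.inl h1
      rcases le_or_gt (1+δ) s with h2 | h2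
      · exact Or.inr h2
      · exact absurd ⟨h1.le, h2.le⟩ hsK
    rcases le_or_gt (C / M * s) t₀ with hcase | hcase
    · -- small-t regime
      have hh2 : h (C / M * s) ≤ Real.exp (δ^2/16 * M / s) := by
        have h8 := (hsm _ (htpos s hs0) hcase).2
        have heq : δ^2/16 * C / (C / M * s) = δ^2/16 * M / s := by field_simp
        rwa [heq] at h8
      have hφ : 2 + δ^2/4 ≤ s + (1 - δ^2/16)/s := claimA hδ0 hδ2 hs0 hout
      have hφs : s ≤ s + (1 - δ^2/16)/s := by
        have h9 : (0:ℝ) ≤ (1 - δ^2/16)/s := by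
          apply div_nonneg _ hs0.le; nlinarith
        linarith
      have hexp1 : Real.exp (-M * (s + 1/s)) * Real.exp (δ^2/16 * M / s)
          = Real.exp (-(M * (s + (1 - δ^2/16)/s))) := by
        rw [← Real.exp_add]; congr 1; field_simp; ring
      have hexp2 : Real.exp (-(M * (s + (1 - δ^2/16)/s)))
          ≤ Real.exp 3 * Real.exp (-M * (2 + δ^2/4)) * Real.exp (-s) := by
        rw [← Real.exp_add, ← Real.exp_add, Real.exp_le_exp]
        have h2' : (s + (1 - δ^2/16)/s) - (2 + δ^2/4)
            ≤ M * ((s + (1 - δ^2/16)/s) - (2 + δ^2/4)) := by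
          nlinarith [sub_nonneg.mpr hφ]
        have hc2 : 2 + δ^2/4 ≤ 3 := by nlinarith
        linarith [hφs, h2', hc2]
      calc f r s ≤ s ^ r * Real.exp (-M * (s + 1/s)) * Real.exp (δ^2/16 * M / s) :=
            mul_le_mul_of_nonneg_left hh2 (by positivity)
        _ = s ^ r * Real.exp (-(M * (s + (1 - δ^2/16)/s))) := by rw [mul_assoc, hexp1]
        _ ≤ s ^ r * (Real.exp 3 * Real.exp (-M * (2 + δ^2/4)) * Real.exp (-s)) :=
            mul_le_mul_of_nonneg_left hexp2 hsr
        _ ≤ D * (s ^ r * Real.exp (-s)) := by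
            rw [hD]
            have h4 : (0:ℝ) ≤ Real.exp (-M * (2 + δ^2/8)) * Real.exp (-M)
                * (s ^ r * Real.exp (-s)) := by positivity
            nlinarith [h4]
    · -- large-s regime
      have h1 : M * t₀ < C * s := by
        rw [div_mul_eq_mul_div, lt_div_iff₀ hM0] at hcase; linarith
      have h2 : 8 * C ≤ M * t₀ := by
        rw [div_le_iff₀ ht₀] at hM3; linarith
      have s8 : 8 ≤ s := by
        have : C * 8 < C * s := by linarith
        exact ((mul_lt_mul_iff_right₀ hC).mp this).le
      have hkey : M * (2 + δ^2/8) + M + s ≤ M * s := by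
        have hδsq : δ^2 ≤ 1/4 := by nlinarith
        have hMδ : M * δ^2 ≤ M * (1/4) := mul_le_mul_of_nonneg_left hδsq (by linarith)
        nlinarith [mul_nonneg (sub_nonneg.mpr s8) (by linarith : (0:ℝ) ≤ M - 1), hMδ]
      calc f r s ≤ s ^ r * Real.exp (-(M * s)) := hfub r s hs0
        _ ≤ s ^ r * (Real.exp (-M * (2 + δ^2/8)) * Real.exp (-M) * Real.exp (-s)) := by
            apply mul_le_mul_of_nonneg_left _ hsr
            rw [← Real.exp_add, ← Real.exp_add, Real.exp_le_exp]; linarith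
        _ ≤ D * (s ^ r * Real.exp (-s)) := by
            rw [hD]
            have h4 : (0:ℝ) ≤ Real.exp 3 * Real.exp (-M * (2 + δ^2/4))
                * (s ^ r * Real.exp (-s)) := by positivity
            nlinarith [h4]
  have hDpos : 0 < D := by rw [hD]; positivity
  have htail : (∫ s in Set.Ioi (0:ℝ) \ Set.Icc (1-δ) (1+δ), f r s)
      ≤ ε/2 * (c₁ * (δ^2/16)) := by
    have hgnn : 0 ≤ᵐ[volume.restrict (Set.Ioi (0:ℝ))]
        fun s : ℝ => s ^ r * Real.exp (-s) := by
      rw [EventuallyLE, ae_restrict_iff' measurableSet_Ioi]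
      filter_upwards with s hs
      exact mul_nonneg (Real.rpow_nonneg (le_of_lt hs) _) (Real.exp_pos _).le
    have step1 : (∫ s in Set.Ioi (0:ℝ) \ Set.Icc (1-δ) (1+δ), f r s)
        ≤ ∫ s in Set.Ioi (0:ℝ) \ Set.Icc (1-δ) (1+δ), D * (s ^ r * Real.exp (-s)) := by
      apply setIntegral_mono_on ((hint r hr).mono_set Set.diff_subset)
        (((gamma_integrable hr).mono_set Set.diff_subset).const_mul _)
        (measurableSet_Ioi.diff measurableSet_Icc) htail_pt
    have step2 : (∫ s in Set.Ioi (0:ℝ) \ Set.Icc (1-δ) (1+δ), D * (s ^ r * Real.exp (-s)))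
        ≤ D * Real.Gamma (r + 1) := by
      rw [integral_const_mul]
      apply mul_le_mul_of_nonneg_left _ hDpos.le
      rw [← gamma_value hr]
      exact setIntegral_mono_set (gamma_integrable hr) hgnn
        (HasSubset.Subset.eventuallyLE Set.diff_subset)
    refine step1.trans (step2.trans ?_)
    have hsplitD : D * Real.Gamma (r + 1)
        = Real.exp 3 * Real.Gamma (r + 1) * Real.exp (-(M * (δ^2/8)))
            * Real.exp (-M * (2 + δ^2/8))
          + Real.Gamma (r + 1) * Real.exp (-M) * Real.exp (-M * (2 + δ^2/8)) := by
      rw [hD]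
      have : Real.exp (-M * (2 + δ^2/4))
          = Real.exp (-(M * (δ^2/8))) * Real.exp (-M * (2 + δ^2/8)) := by
        rw [← Real.exp_add]; congr 1; ring
      rw [this]; ring
    rw [hsplitD]
    have hb1 : Real.exp 3 * Real.Gamma (r + 1) * Real.exp (-(M * (δ^2/8)))
        * Real.exp (-M * (2 + δ^2/8))
        ≤ ε/4 * (δ^2/16) * m * Real.exp (-M * (2 + δ^2/8)) :=
      mul_le_mul_of_nonneg_right hE4 (Real.exp_pos _).le
    have hb2 : Real.Gamma (r + 1) * Real.exp (-M) * Real.exp (-M * (2 + δ^2/8))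
        ≤ ε/4 * (δ^2/16) * m * Real.exp (-M * (2 + δ^2/8)) :=
      mul_le_mul_of_nonneg_right hE5 (Real.exp_pos _).le
    have : ε/4 * (δ^2/16) * m * Real.exp (-M * (2 + δ^2/8))
        + ε/4 * (δ^2/16) * m * Real.exp (-M * (2 + δ^2/8))
        = ε/2 * (c₁ * (δ^2/16)) := by rw [hc₁]; ring
    linarith
  -- ===== conclude =====
  have hfinal : (∫ s in Set.Ioi (0:ℝ), f r s)
      ≤ (1 + ε/2) * (∫ s in Set.Ioi (0:ℝ), f r' s)
        + ε/2 * (∫ s in Set.Ioi (0:ℝ), f r' s) := by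
    rw [hsplit]
    have h10 : ε/2 * (c₁ * (δ^2/16)) ≤ ε/2 * ∫ s in Set.Ioi (0:ℝ), f r' s :=
      mul_le_mul_of_nonneg_left hL (by linarith)
    linarith [hmid, htail]
  calc (∫ s in Set.Ioi (0:ℝ), f r s)
      ≤ (1 + ε/2) * (∫ s in Set.Ioi (0:ℝ), f r' s)
        + ε/2 * (∫ s in Set.Ioi (0:ℝ), f r' s) := hfinal
    _ = (1 + ε) * ∫ s in Set.Ioi (0:ℝ), f r' s := by ring

lemma sqrtM_atTop {C : ℝ} (hC : 0 < C) :
    Tendsto (fun lam : ℝ => Real.sqrt (lam * C)) atTop atTop := by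
  refine tendsto_atTop_atTop.mpr fun b => ⟨(max b 0)^2 / C, fun a ha => ?_⟩
  have h2 : (max b 0)^2 ≤ a * C := by
    rw [div_le_iff₀ hC] at ha; linarith
  calc b ≤ max b 0 := le_max_left _ _
    _ = Real.sqrt ((max b 0)^2) := (Real.sqrt_sq (le_max_right _ _)).symm
    _ ≤ Real.sqrt (a * C) := Real.sqrt_le_sqrt h2

lemma compare (h : ℝ → ℝ) (hmeas : Measurable h) (C : ℝ) (hC : 0 < C)
    (hub : ∀ t, 0 < t → 0 ≤ h t ∧ h t ≤ Real.exp (C / t))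
    (hsmall : ∀ η, 0 < η → ∃ t₀, 0 < t₀ ∧ ∀ t, 0 < t → t ≤ t₀ →
      Real.exp (-η / t) ≤ h t ∧ h t ≤ Real.exp (η / t))
    (r r' : ℝ) (hr : -1 < r) (hr' : -1 < r') (ε : ℝ) (hε : 0 < ε) :
    ∀ᶠ lam in atTop,
      (∫ s in Set.Ioi (0:ℝ), s ^ r * Real.exp (-Real.sqrt (lam * C) * (s + 1/s))
          * h (Real.sqrt (C / lam) * s))
        ≤ (1 + ε) * ∫ s in Set.Ioi (0:ℝ), s ^ r' * Real.exp (-Real.sqrt (lam * C) * (s + 1/s))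
            * h (Real.sqrt (C / lam) * s)
      ∧ 0 < ∫ s in Set.Ioi (0:ℝ), s ^ r' * Real.exp (-Real.sqrt (lam * C) * (s + 1/s))
            * h (Real.sqrt (C / lam) * s) := by
  -- choose δ
  obtain ⟨δ₁, hδ₁0, hδ₁⟩ : ∃ δ₁ > (0:ℝ), ∀ s : ℝ, dist s 1 < δ₁ →
      dist (s ^ (r - r')) ((1:ℝ) ^ (r - r')) < ε/2 := by
    have hcont : ContinuousAt (fun s : ℝ => s ^ (r - r')) 1 :=
      Real.continuousAt_rpow_const 1 (r - r') (Or.inl one_ne_zero)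
    have := Metric.tendsto_nhds.mp hcont (ε/2) (by linarith)
    rw [Metric.eventually_nhds_iff] at this
    obtain ⟨δ₁, h1, h2⟩ := this
    exact ⟨δ₁, h1, fun s hs => h2 hs⟩
  set δ : ℝ := min (δ₁/2) (1/2) with hδdef
  have hδ0 : 0 < δ := lt_min (by linarith) (by norm_num)
  have hδ2 : δ ≤ 1/2 := min_le_right _ _
  have hδc : ∀ s : ℝ, 1 - δ ≤ s → s ≤ 1 + δ → s ^ (r - r') ≤ 1 + ε/2 := by
    intro s h1 h2
    have hd : dist s 1 < δ₁ := by
      rw [Real.dist_eq, abs_lt]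
      constructor <;> nlinarith [min_le_left (δ₁/2) (1/2:ℝ), hδ2]
    have := hδ₁ s hd
    rw [Real.one_rpow, Real.dist_eq, abs_lt] at this
    linarith [this.2]
  set m : ℝ := min 1 (2 ^ r') with hmdef
  have hmpos : 0 < m := lt_min one_pos (Real.rpow_pos_of_pos two_pos r')
  obtain ⟨t₀, ht₀, hsm⟩ := hsmall (δ^2/16 * C) (by positivity)
  -- eventual conditions
  have hMtop := sqrtM_atTop hC
  have hE4' : Tendsto (fun lam : ℝ =>
      Real.exp 3 * Real.Gamma (r + 1) * Real.exp (-(Real.sqrt (lam * C) * (δ^2/8))))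
      atTop (nhds 0) := by
    have h1 : Tendsto (fun M : ℝ => -(M * (δ^2/8))) atTop atBot :=
      tendsto_neg_atBot_iff.mpr (Tendsto.atTop_mul_const (by positivity) tendsto_id)
    have h2 := (Real.tendsto_exp_atBot.comp h1).comp hMtop
    have h3 := h2.const_mul (Real.exp 3 * Real.Gamma (r + 1))
    simpa using h3
  have hE5' : Tendsto (fun lam : ℝ =>
      Real.Gamma (r + 1) * Real.exp (-Real.sqrt (lam * C))) atTop (nhds 0) := by
    have h1 : Tendsto (fun M : ℝ => -M) atTop atBot := tendsto_neg_atBot_iff.mpr tendsto_id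
    have h2 := (Real.tendsto_exp_atBot.comp h1).comp hMtop
    have h3 := h2.const_mul (Real.Gamma (r + 1))
    simpa using h3
  filter_upwards [eventually_gt_atTop (0:ℝ),
    hMtop.eventually_ge_atTop 1, hMtop.eventually_ge_atTop 2,
    hMtop.eventually_ge_atTop (8 * C / t₀), hMtop.eventually_ge_atTop (C * (1 + δ) / t₀),
    hE4'.eventually_le_const (show (0:ℝ) < ε/4 * (δ^2/16) * m by positivity),
    hE5'.eventually_le_const (show (0:ℝ) < ε/4 * (δ^2/16) * m by positivity)]
    with lam hlam hM1 hM2 hM3 hcov hE4 hE5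
  have hMC : Real.sqrt (C / lam) = C / Real.sqrt (lam * C) := by
    have hM0 : 0 < Real.sqrt (lam * C) := Real.sqrt_pos.mpr (mul_pos hlam hC)
    rw [eq_div_iff hM0.ne', ← Real.sqrt_mul (div_nonneg hC.le hlam.le)]
    rw [show C / lam * (lam * C) = C^2 by field_simp]
    exact Real.sqrt_sq hC.le
  rw [hMC]
  exact core h hmeas C hC hub r r' ε δ m t₀ (Real.sqrt (lam * C)) hr hr' hε hδ0 hδ2 hδc
    hmdef ht₀ hsm hM1 hM2 hM3 hcov hE4 hE5

end LaplaceAux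

/-- For `p, q > −1`, the Laplace-type integrals with weights `s^p` and `s^q` are
asymptotically equivalent as `λ → ∞`. -/
theorem laplace_integral_power_invariance
    (Ω : Type*) [MeasureSpace Ω] [IsProbabilityMeasure (ℙ : Measure Ω)]
    (τ : Ω → ℝ) (hτ : Measurable τ)
    (F : ℝ → ℝ) (hF : ∀ t, F t = (ℙ {ω | τ ω ≤ t}).toReal)
    (C : ℝ) (hC : 0 < C)
    (hlog : Tendsto (fun t : ℝ => t * Real.log (F t)) (nhdsWithin 0 (Set.Ioi 0))
      (nhds (-C)))
    (h : ℝ → ℝ) (hh : ∀ t, 0 < t → h t = Real.exp (C / t) * F t)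
    (p q : ℝ) (hp : -1 < p) (hq : -1 < q) :
    Tendsto (fun lam : ℝ =>
        (∫ s in Set.Ioi (0:ℝ),
            s ^ p * Real.exp (-Real.sqrt (lam * C) * (s + 1 / s))
              * h (Real.sqrt (C / lam) * s))
          / ∫ s in Set.Ioi (0:ℝ),
              s ^ q * Real.exp (-Real.sqrt (lam * C) * (s + 1 / s))
                * h (Real.sqrt (C / lam) * s))
      atTop (nhds 1) := by
  classical
  have hF0 : ∀ t, 0 ≤ F t := fun t => by rw [hF]; exact ENNReal.toReal_nonneg
  have hF1 : ∀ t, F t ≤ 1 := fun t => by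
    rw [hF]
    calc (ℙ {ω | τ ω ≤ t}).toReal ≤ (1:ℝ≥0∞).toReal :=
          ENNReal.toReal_mono ENNReal.one_ne_top prob_le_one
      _ = 1 := by simp
  have hFmono : Monotone F := by
    intro a b hab; rw [hF, hF]
    exact ENNReal.toReal_mono (measure_ne_top _ _)
      (measure_mono fun ω hω => le_trans hω hab)
  have hFmeas : Measurable F := hFmono.measurable
  set h' : ℝ → ℝ := fun t => if 0 < t then Real.exp (C / t) * F t else 0 with hh'
  have hmeas' : Measurable h' := by
    apply Measurable.ite (measurableSet_lt measurable_const measurable_id)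
    · exact (Real.measurable_exp.comp (measurable_const.div measurable_id)).mul hFmeas
    · exact measurable_const
  have hub : ∀ t, 0 < t → 0 ≤ h' t ∧ h' t ≤ Real.exp (C / t) := by
    intro t ht
    rw [hh']; simp only [if_pos ht]
    refine ⟨mul_nonneg (Real.exp_pos _).le (hF0 t), ?_⟩
    calc Real.exp (C / t) * F t ≤ Real.exp (C / t) * 1 :=
          mul_le_mul_of_nonneg_left (hF1 t) (Real.exp_pos _).le
      _ = Real.exp (C / t) := mul_one _
  have hsmall : ∀ η, 0 < η → ∃ t₀, 0 < t₀ ∧ ∀ t, 0 < t → t ≤ t₀ →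
      Real.exp (-η / t) ≤ h' t ∧ h' t ≤ Real.exp (η / t) := by
    intro η hη
    set η' : ℝ := min η (C/2) with hη'def
    have hη'0 : 0 < η' := lt_min hη (by linarith)
    have hη'C : η' ≤ C/2 := min_le_right _ _
    have hη'η : η' ≤ η := min_le_left _ _
    have hev := Metric.tendsto_nhds.mp hlog η' hη'0
    rw [eventually_nhdsWithin_iff, Metric.eventually_nhds_iff] at hev
    obtain ⟨t₁, ht₁0, ht₁⟩ := hev
    refine ⟨t₁/2, by linarith, fun t ht0 htle => ?_⟩
    have hdist : dist t 0 < t₁ := by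
      rw [Real.dist_eq, sub_zero, abs_of_pos ht0]; linarith
    have hclose := ht₁ hdist (Set.mem_Ioi.mpr ht0)
    rw [Real.dist_eq, abs_lt] at hclose
    have hlogub : t * Real.log (F t) < -C + η' := by
      have := hclose.2; linarith
    have hloglb : -C - η' < t * Real.log (F t) := by
      have := hclose.1; linarith
    have hlogneg : Real.log (F t) < 0 := by
      by_contra hcon
      push_neg at hcon
      nlinarith [mul_nonneg ht0.le hcon]
    have hFt0 : 0 < F t := by
      rcases lt_or_eq_of_le (hF0 t) with h1 | h1
      · exact h1
      · exfalso; rw [← h1, Real.log_zero] at hlogneg; exact lt_irrefl 0 hlogneg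
    have hht : h' t = Real.exp (C / t + Real.log (F t)) := by
      rw [hh']; simp only [if_pos ht0]
      rw [Real.exp_add, Real.exp_log hFt0]
    have hsplit : C / t + Real.log (F t) = (C + t * Real.log (F t)) / t := by
      field_simp
    constructor
    · rw [hht, Real.exp_le_exp, hsplit]
      rw [div_le_div_iff₀ ht0 ht0]
      nlinarith
    · rw [hht, Real.exp_le_exp, hsplit]
      rw [div_le_div_iff₀ ht0 ht0]
      nlinarith
  -- main argument
  rw [Metric.tendsto_nhds]
  intro ε hε
  set ε' : ℝ := min (ε/2) (1/2) with hε'def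
  have hε'0 : 0 < ε' := lt_min (by linarith) (by norm_num)
  have hε'half : ε' ≤ 1/2 := min_le_right _ _
  have hε'ε : ε' < ε := lt_of_le_of_lt (min_le_left _ _) (by linarith)
  have hcmp1 := LaplaceAux.compare h' hmeas' C hC hub hsmall p q hp hq ε' hε'0
  have hcmp2 := LaplaceAux.compare h' hmeas' C hC hub hsmall q p hq hp ε' hε'0
  filter_upwards [hcmp1, hcmp2, eventually_gt_atTop (0:ℝ)] with lam hc1 hc2 hlam
  have hIrw : ∀ ρ : ℝ,
      (∫ s in Set.Ioi (0:ℝ), s ^ ρ * Real.exp (-Real.sqrt (lam * C) * (s + 1 / s))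
          * h (Real.sqrt (C / lam) * s))
      = ∫ s in Set.Ioi (0:ℝ), s ^ ρ * Real.exp (-Real.sqrt (lam * C) * (s + 1 / s))
          * h' (Real.sqrt (C / lam) * s) := by
    intro ρ
    apply setIntegral_congr_fun measurableSet_Ioi
    intro s hs
    have ht : 0 < Real.sqrt (C / lam) * s :=
      mul_pos (Real.sqrt_pos.mpr (div_pos hC hlam)) hs
    rw [hh']
    simp only [if_pos ht]
    rw [hh _ ht]
  rw [hIrw p, hIrw q]
  obtain ⟨h1, h2⟩ := hc1
  obtain ⟨h3, h4⟩ := hc2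
  set Ip := ∫ s in Set.Ioi (0:ℝ), s ^ p * Real.exp (-Real.sqrt (lam * C) * (s + 1 / s))
      * h' (Real.sqrt (C / lam) * s) with hIp
  set Iq := ∫ s in Set.Ioi (0:ℝ), s ^ q * Real.exp (-Real.sqrt (lam * C) * (s + 1 / s))
      * h' (Real.sqrt (C / lam) * s) with hIq
  have hup : Ip / Iq ≤ 1 + ε' := by
    rw [div_le_iff₀ h2]; linarith
  have hlo : 1 - ε' ≤ Ip / Iq := by
    rw [le_div_iff₀ h2]
    nlinarith [h3, h4.le, hε'half, hε'0.le]
  rw [Real.dist_eq, abs_lt]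
  exact ⟨by linarith, by linarith⟩
end

section
/- Let τ satisfy lim_{t→0+} t ln P(τ ≤ t) = −C < 0 with CDF F, and let σ be gamma with rate λ and shape β, with survival function S_σ and density f_σ. Then for every m ≥ 1, λ^{m/2} · (∫₀^∞ m t^{m−1} S_σ(t) F(t) dt)/(∫₀^∞ f_σ(t) F(t) dt) → 0 as λ → ∞. -/
set_option maxHeartbeats 1000000

open MeasureTheory ProbabilityTheory Filter

section auxx
open MeasureTheory Filter Set

lemma aux_intOn {s b : ℝ} (hs : -1 < s) (hb : 0 < b) :
    IntegrableOn (fun x : ℝ => x ^ s * Real.exp (-(b * x))) (Set.Ioi 0) := by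
  have := integrableOn_rpow_mul_exp_neg_mul_rpow hs one_pos hb
  simpa [Real.rpow_one, neg_mul] using this

lemma aux_gamma_int {β : ℝ} (hβ : 0 < β) :
    IntegrableOn (fun u : ℝ => u ^ (β-1) * Real.exp (-u)) (Set.Ioi 0) :=
  (Real.GammaIntegral_convergent hβ).congr_fun (fun u _ => mul_comm _ _) measurableSet_Ioi

lemma aux_gamma_eq {β : ℝ} (hβ : 0 < β) :
    Real.Gamma β = ∫ u in Set.Ioi (0:ℝ), u ^ (β-1) * Real.exp (-u) := by
  rw [Real.Gamma_eq_integral hβ]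
  exact setIntegral_congr_fun measurableSet_Ioi (fun u _ => mul_comm _ _)

lemma aux_phi_mono {β : ℝ} (hβ : 0 < β) :
    Monotone (fun s : ℝ => ∫ u in Set.Ioc 0 s, u ^ (β-1) * Real.exp (-u)) := by
  intro a b hab
  apply setIntegral_mono_set
  · exact (aux_gamma_int hβ).mono_set Set.Ioc_subset_Ioi_self
  · refine (ae_restrict_iff' measurableSet_Ioc).mpr (Filter.Eventually.of_forall ?_)
    intro u hu
    have hu0 : 0 < u := hu.1
    positivity
  · exact HasSubset.Subset.eventuallyLE (Set.Ioc_subset_Ioc_right hab)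

lemma aux_split {β : ℝ} (hβ : 0 < β) {x : ℝ} (hx : 0 ≤ x) :
    (∫ u in Set.Ioi x, u ^ (β-1) * Real.exp (-u))
      = Real.Gamma β - ∫ u in Set.Ioc 0 x, u ^ (β-1) * Real.exp (-u) := by
  have h : (∫ u in Set.Ioc 0 x, u ^ (β-1) * Real.exp (-u))
      + (∫ u in Set.Ioi x, u ^ (β-1) * Real.exp (-u))
      = ∫ u in Set.Ioi (0:ℝ), u ^ (β-1) * Real.exp (-u) := by
    rw [← setIntegral_union (Set.Ioc_disjoint_Ioi le_rfl) measurableSet_Ioi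
      ((aux_gamma_int hβ).mono_set Set.Ioc_subset_Ioi_self)
      ((aux_gamma_int hβ).mono_set (Set.Ioi_subset_Ioi hx)),
      Set.Ioc_union_Ioi_eq_Ioi hx]
  rw [aux_gamma_eq hβ]
  linarith

lemma aux_pointwise {β x u : ℝ} (hβ : 0 < β) (hx : 2*β + 2 ≤ x) (hxu : x ≤ u) :
    u ^ (β-1) * Real.exp (-u) ≤ (x ^ (β-1) * Real.exp (-(x/2))) * Real.exp (-(2⁻¹ * u)) := by
  have hx0 : (0:ℝ) < x := by linarith
  have hu0 : (0:ℝ) < u := lt_of_lt_of_le hx0 hxu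
  have h1 : u ^ (β-1) = Real.exp (Real.log u * (β-1)) := Real.rpow_def_of_pos hu0 _
  have h2 : x ^ (β-1) = Real.exp (Real.log x * (β-1)) := Real.rpow_def_of_pos hx0 _
  rw [h1, h2, ← Real.exp_add, ← Real.exp_add, ← Real.exp_add, Real.exp_le_exp]
  have hld : Real.log u - Real.log x ≤ (u - x)/x := by
    have h := Real.log_le_sub_one_of_pos (div_pos hu0 hx0)
    rw [Real.log_div hu0.ne' hx0.ne'] at h
    have h' : u / x - 1 = (u - x)/x := by field_simp
    linarith [h' ▸ h]
  have hl0 : 0 ≤ Real.log u - Real.log x := by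
    have := Real.log_le_log hx0 hxu
    linarith
  rcases le_or_gt β 1 with hb1 | hb1
  · nlinarith [mul_nonneg (sub_nonneg.mpr hb1) hl0]
  · have hkey : (Real.log u - Real.log x) * (β - 1) ≤ (u - x)/2 := by
      have h1' : (Real.log u - Real.log x) * (β - 1) ≤ (u - x)/x * (β-1) :=
        mul_le_mul_of_nonneg_right hld (by linarith)
      have h2' : (u - x)/x * (β-1) ≤ (u-x)/2 := by
        rw [div_mul_eq_mul_div, div_le_div_iff₀ hx0 (by norm_num)]
        nlinarith [sub_nonneg.mpr hxu]
      linarith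
    nlinarith

lemma aux_tail {β x : ℝ} (hβ : 0 < β) (hx : 2*β + 2 ≤ x) :
    (∫ u in Set.Ioi x, u ^ (β-1) * Real.exp (-u)) ≤ 2 * (x ^ (β-1) * Real.exp (-x)) := by
  have hx0 : (0:ℝ) < x := by linarith
  have hint : ∫ u in Set.Ioi x, Real.exp (-(2⁻¹ * u)) = 2 * Real.exp (-(2⁻¹*x)) := by
    have := integral_comp_mul_left_Ioi (fun v => Real.exp (-v)) x (by norm_num : (0:ℝ) < 2⁻¹)
    simp only [smul_eq_mul] at this
    rw [this, integral_exp_neg_Ioi]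
    norm_num
  have hle : (∫ u in Set.Ioi x, u ^ (β-1) * Real.exp (-u))
      ≤ ∫ u in Set.Ioi x, (x ^ (β-1) * Real.exp (-(x/2))) * Real.exp (-(2⁻¹ * u)) := by
    apply setIntegral_mono_on
    · exact (aux_gamma_int hβ).mono_set (Set.Ioi_subset_Ioi hx0.le)
    · exact (((exp_neg_integrableOn_Ioi x (by norm_num : (0:ℝ) < 2⁻¹)).congr_fun
        (fun u hu => by rw [neg_mul]) measurableSet_Ioi)).const_mul _
    · exact measurableSet_Ioi
    · exact fun u hu => aux_pointwise hβ hx (le_of_lt hu)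
  rw [integral_const_mul, hint] at hle
  have hexp : Real.exp (-(x/2)) * Real.exp (-(2⁻¹*x)) = Real.exp (-x) := by
    rw [← Real.exp_add]; ring_nf
  calc (∫ u in Set.Ioi x, u ^ (β-1) * Real.exp (-u))
      ≤ x ^ (β-1) * Real.exp (-(x/2)) * (2 * Real.exp (-(2⁻¹*x))) := hle
    _ = 2 * (x ^ (β-1) * Real.exp (-x)) := by
        linear_combination (2 * x ^ (β-1)) * hexp

end auxx

/-- The subtracted term in the conditional-moment formula is negligible: with
`S_σ(t) = Γ(β, λt)/Γ(β)` and `f_σ(t) = λ^β t^{β−1} e^{−λt}/Γ(β)`, for every `m ≥ 1`,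
`λ^{m/2} (∫₀^∞ m t^{m−1} S_σ(t) F(t) dt)/(∫₀^∞ f_σ(t) F(t) dt) → 0` as `λ → ∞`. -/
theorem subtracted_term_negligible
    (Ω : Type*) [MeasureSpace Ω] [IsProbabilityMeasure (ℙ : Measure Ω)]
    (τ : Ω → ℝ) (hτ : Measurable τ)
    (F : ℝ → ℝ) (hF : ∀ t, F t = (ℙ {ω | τ ω ≤ t}).toReal)
    (C : ℝ) (hC : 0 < C)
    (hlog : Tendsto (fun t : ℝ => t * Real.log (F t)) (nhdsWithin 0 (Set.Ioi 0))
      (nhds (-C)))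
    (β : ℝ) (hβ : 0 < β)
    (Sσ fσ : ℝ → ℝ → ℝ)
    (hSσ : ∀ lam t, Sσ lam t
      = (∫ u in Set.Ioi (lam * t), u ^ (β - 1) * Real.exp (-u)) / Real.Gamma β)
    (hfσ : ∀ lam t, fσ lam t
      = lam ^ β * t ^ (β - 1) * Real.exp (-lam * t) / Real.Gamma β)
    (m : ℝ) (hm : 1 ≤ m) :
    Tendsto (fun lam : ℝ =>
        lam ^ (m / 2)
          * ((∫ t in Set.Ioi (0:ℝ), m * t ^ (m - 1) * Sσ lam t * F t)
              / ∫ t in Set.Ioi (0:ℝ), fσ lam t * F t))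
      atTop (nhds 0) := by
  have hΓ : 0 < Real.Gamma β := Real.Gamma_pos_of_pos hβ
  have hm0 : 0 < m := lt_of_lt_of_le one_pos hm
  -- basic facts about F
  have hF0 : ∀ t, 0 ≤ F t := fun t => (hF t) ▸ ENNReal.toReal_nonneg
  have hF1 : ∀ t, F t ≤ 1 := by
    intro t
    rw [hF t]
    exact ENNReal.toReal_le_of_le_ofReal one_pos.le (by simpa using prob_le_one)
  have hFmono : Monotone F := by
    intro a b hab
    rw [hF a, hF b]
    exact ENNReal.toReal_mono (measure_ne_top _ _)
      (measure_mono (fun ω h => le_trans h hab))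
  have hFmeas : Measurable F := hFmono.measurable
  -- small-t bounds on F from hlog
  obtain ⟨t₀, ht₀pos, ht₀⟩ : ∃ t₀ : ℝ, 0 < t₀ ∧ ∀ t, 0 < t → t ≤ t₀ →
      Real.exp (-(3*C/2)/t) ≤ F t ∧ F t ≤ Real.exp (-(C/2)/t) := by
    have h1 : ∀ᶠ t in nhdsWithin (0:ℝ) (Set.Ioi 0),
        |t * Real.log (F t) - (-C)| < C/2 := by
      have := Metric.tendsto_nhds.mp hlog (C/2) (by positivity)
      simpa [Real.dist_eq] using this
    rw [eventually_nhdsWithin_iff, Metric.eventually_nhds_iff] at h1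
    obtain ⟨ε, hε, hball⟩ := h1
    refine ⟨ε/2, by positivity, fun t ht htle => ?_⟩
    have hdist : dist t (0:ℝ) < ε := by
      rw [Real.dist_eq, sub_zero, abs_of_pos ht]; linarith
    have habs := hball hdist (Set.mem_Ioi.mpr ht)
    rw [abs_lt] at habs
    have hlow : -(3*C/2) < t * Real.log (F t) := by linarith [habs.1]
    have hhigh : t * Real.log (F t) < -(C/2) := by linarith [habs.2]
    have hFpos : 0 < F t := by
      rcases lt_or_eq_of_le (hF0 t) with h | h
      · exact h
      · exfalso; rw [← h, Real.log_zero, mul_zero] at hhigh; linarith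
    have hlogup : Real.log (F t) ≤ -(C/2)/t := by
      rw [le_div_iff₀ ht]
      nlinarith [hhigh]
    have hlogdown : -(3*C/2)/t ≤ Real.log (F t) := by
      rw [div_le_iff₀ ht]
      nlinarith [hlow]
    constructor
    · calc Real.exp (-(3*C/2)/t) ≤ Real.exp (Real.log (F t)) :=
          Real.exp_le_exp.mpr hlogdown
        _ = F t := Real.exp_log hFpos
    · calc F t = Real.exp (Real.log (F t)) := (Real.exp_log hFpos).symm
        _ ≤ Real.exp (-(C/2)/t) := Real.exp_le_exp.mpr hlogup
  -- constants
  set T : ℝ := 2*β + 2 with hT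
  have hT0 : 0 < T := by rw [hT]; linarith
  set K : ℝ := 2 + 3*C/2 with hK
  have hK0 : 0 < K := by rw [hK]; linarith
  set R : ℝ := 2*K + 2 with hR
  have hR0 : 0 < R := by rw [hR]; linarith
  have hβm : 0 < β + m - 1 := by linarith
  have hΓm : 0 < Real.Gamma (β + m - 1) := Real.Gamma_pos_of_pos hβm
  set c₂ : ℝ := min 1 ((2:ℝ) ^ (β-1)) with hc₂
  have hc₂0 : 0 < c₂ := lt_min one_pos (Real.rpow_pos_of_pos two_pos _)
  set c₃ : ℝ := c₂ / Real.Gamma β with hc₃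
  have hc₃0 : 0 < c₃ := div_pos hc₂0 hΓ
  set c₁ : ℝ := 2 ^ (β+m-1) * Real.Gamma (β+m-1) / Real.Gamma β with hc₁
  have hc₁0 : 0 < c₁ := by
    rw [hc₁]
    have : (0:ℝ) < 2 ^ (β+m-1) := Real.rpow_pos_of_pos two_pos _
    positivity
  -- the dominating function
  set g : ℝ → ℝ := fun lam =>
    (T^m/c₃) * (lam ^ (m/2) * Real.exp (-(C/(4*T)) * lam))
    + (2*m*R^(m-1)) * lam ^ (-(1/2) : ℝ)
    + (2*m*c₁/c₃) * ((lam ^ ((1:ℝ)/2)) ^ m * Real.exp (-(lam ^ ((1:ℝ)/2)))) with hg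
  have hgto : Tendsto g atTop (nhds 0) := by
    have p1 : Tendsto (fun lam : ℝ => lam ^ (m/2) * Real.exp (-(C/(4*T)) * lam))
        atTop (nhds 0) :=
      tendsto_rpow_mul_exp_neg_mul_atTop_nhds_zero (m/2) (C/(4*T)) (by positivity)
    have p2 : Tendsto (fun lam : ℝ => lam ^ (-(1/2) : ℝ)) atTop (nhds 0) :=
      tendsto_rpow_neg_atTop (by norm_num)
    have p3 : Tendsto (fun lam : ℝ =>
        (lam ^ ((1:ℝ)/2)) ^ m * Real.exp (-(lam ^ ((1:ℝ)/2)))) atTop (nhds 0) := by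
      have h := tendsto_rpow_mul_exp_neg_mul_atTop_nhds_zero m 1 one_pos
      have h2 := h.comp (tendsto_rpow_atTop (by norm_num : 0 < (1:ℝ)/2))
      simpa [Function.comp_def, neg_one_mul] using h2
    have := ((p1.const_mul (T^m/c₃)).add (p2.const_mul (2*m*R^(m-1)))).add
      (p3.const_mul (2*m*c₁/c₃))
    rw [hg]
    simpa using this
  apply squeeze_zero' ?_ ?_ hgto
  · -- nonnegativity
    filter_upwards [eventually_ge_atTop (1:ℝ)] with lam hl1
    have hl0 : (0:ℝ) < lam := by linarith
    have hN : 0 ≤ ∫ t in Set.Ioi (0:ℝ), m * t ^ (m - 1) * Sσ lam t * F t := by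
      apply setIntegral_nonneg measurableSet_Ioi
      intro t ht
      have ht0 : 0 < t := ht
      have hS : 0 ≤ Sσ lam t := by
        rw [hSσ]
        apply div_nonneg _ hΓ.le
        apply setIntegral_nonneg measurableSet_Ioi
        intro v hv
        have hv0 : 0 < v := lt_trans (by positivity) hv
        positivity
      have h1 : 0 ≤ t ^ (m-1) := Real.rpow_nonneg ht0.le _
      have h2 := hF0 t
      positivity
    have hD : 0 ≤ ∫ t in Set.Ioi (0:ℝ), fσ lam t * F t := by
      apply setIntegral_nonneg measurableSet_Ioi
      intro t ht
      have ht0 : 0 < t := ht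
      have h1 : 0 ≤ fσ lam t := by
        rw [hfσ]
        have h2 : 0 ≤ t ^ (β-1) := Real.rpow_nonneg ht0.le _
        have h3 : 0 ≤ lam ^ β := Real.rpow_nonneg hl0.le _
        positivity
      exact mul_nonneg h1 (hF0 t)
    have := Real.rpow_nonneg hl0.le (m/2)
    positivity
  · -- main bound
    set M₀ : ℝ := max 1 (max (4*T*K/C) (2/t₀)) with hM₀
    filter_upwards [eventually_ge_atTop (max (M₀^2) (T/t₀))] with lam hlam
    have hM₀1 : (1:ℝ) ≤ M₀ := le_max_left _ _
    have hlM : M₀^2 ≤ lam := le_trans (le_max_left _ _) hlam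
    have hl1 : (1:ℝ) ≤ lam := by nlinarith
    have hl0 : (0:ℝ) < lam := by linarith
    set u : ℝ := lam ^ ((1:ℝ)/2) with hu
    have hu0 : 0 < u := Real.rpow_pos_of_pos hl0 _
    have hu1 : 1 ≤ u := by
      have h := Real.rpow_le_rpow (by norm_num : (0:ℝ) ≤ 1) hl1 (by norm_num : (0:ℝ) ≤ 1/2)
      rwa [Real.one_rpow] at h
    have huu : u * u = lam := by
      rw [hu, ← Real.rpow_add hl0]; norm_num
    have hMu : M₀ ≤ u := by
      have h2 := Real.rpow_le_rpow (by positivity) hlM (by norm_num : (0:ℝ) ≤ 1/2)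
      calc M₀ = (M₀^2) ^ ((1:ℝ)/2) := by
            rw [← Real.rpow_natCast M₀ 2, ← Real.rpow_mul (by positivity)]
            norm_num
        _ ≤ u := h2
    have hKu : K * u ≤ C/(4*T) * lam := by
      have h1 : 4*T*K/C ≤ u := le_trans (le_trans (le_max_left _ _) (le_max_right _ _)) hMu
      rw [div_le_iff₀ hC] at h1
      have h2 : K * u * (4*T) ≤ C * lam := by
        nlinarith [mul_le_mul_of_nonneg_right h1 hu0.le, huu]
      rw [div_mul_eq_mul_div, le_div_iff₀ (by positivity : (0:ℝ) < 4*T)]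
      linarith
    have hut : 2 * u⁻¹ ≤ t₀ := by
      have h1 : 2/t₀ ≤ u := le_trans (le_trans (le_max_right _ _) (le_max_right _ _)) hMu
      rw [div_le_iff₀ ht₀pos] at h1
      rw [← div_eq_mul_inv, div_le_iff₀ hu0]
      rwa [mul_comm u t₀] at h1
    have hbt : T * lam⁻¹ ≤ t₀ := by
      have h1 : T/t₀ ≤ lam := le_trans (le_max_right _ _) hlam
      rw [div_le_iff₀ ht₀pos] at h1
      rw [← div_eq_mul_inv, div_le_iff₀ hl0]
      rwa [mul_comm lam t₀] at h1
    -- function facts for this lam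
    have hfσ_eq : ∀ t : ℝ, fσ lam t
        = lam^β/Real.Gamma β * (t^(β-1) * Real.exp (-(lam*t))) := by
      intro t
      rw [hfσ lam t, neg_mul]
      ring
    have hfσ_nonneg : ∀ t : ℝ, 0 < t → 0 ≤ fσ lam t := by
      intro t ht0
      rw [hfσ_eq t]
      have h1 : 0 ≤ t ^ (β-1) := Real.rpow_nonneg ht0.le _
      have h2 : 0 ≤ lam ^ β := Real.rpow_nonneg hl0.le _
      positivity
    have hfσ_meas : Measurable (fun t => fσ lam t) := by
      have heq : (fun t => fσ lam t)
          = fun t => lam^β/Real.Gamma β * (t^(β-1) * Real.exp (-(lam*t))) :=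
        funext hfσ_eq
      rw [heq]
      fun_prop
    set φ : ℝ → ℝ := fun s => ∫ v in Set.Ioc 0 s, v ^ (β-1) * Real.exp (-v) with hφdef
    have hφmeas : Measurable φ := (aux_phi_mono hβ).measurable
    have hSσ_eq : ∀ t : ℝ, 0 < t →
        Sσ lam t = (Real.Gamma β - φ (lam*t))/Real.Gamma β := by
      intro t ht0
      rw [hSσ lam t, aux_split hβ (by positivity : (0:ℝ) ≤ lam*t)]
    have hψmeas : Measurable (fun t =>
        m * t^(m-1) * ((Real.Gamma β - φ (lam*t))/Real.Gamma β) * F t) := by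
      refine Measurable.mul ?_ hFmeas
      refine Measurable.mul ?_ ?_
      · fun_prop
      · exact ((measurable_const.sub
          (hφmeas.comp (measurable_const.mul measurable_id))).div_const _)
    have hSψ_ae : ∀ (s : Set ℝ), MeasurableSet s → s ⊆ Set.Ioi 0 →
        (fun t => m * t^(m-1) * ((Real.Gamma β - φ (lam*t))/Real.Gamma β) * F t)
          =ᵐ[volume.restrict s] (fun t => m * t ^ (m - 1) * Sσ lam t * F t) := by
      intro s hs hsub
      refine (ae_restrict_iff' hs).mpr (Filter.Eventually.of_forall ?_)
      intro t ht
      show m * t^(m-1) * ((Real.Gamma β - φ (lam*t))/Real.Gamma β) * F t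
        = m * t ^ (m - 1) * Sσ lam t * F t
      rw [hSσ_eq t (hsub ht)]
    have hSσ_nonneg : ∀ t : ℝ, 0 < t → 0 ≤ Sσ lam t := by
      intro t ht0
      rw [hSσ lam t]
      apply div_nonneg _ hΓ.le
      apply setIntegral_nonneg measurableSet_Ioi
      intro v hv
      have hv0 : 0 < v := lt_trans (by positivity) hv
      positivity
    have hSσ_le_one : ∀ t : ℝ, 0 < t → Sσ lam t ≤ 1 := by
      intro t ht0
      rw [hSσ lam t, div_le_one hΓ, aux_gamma_eq hβ]
      apply setIntegral_mono_set (aux_gamma_int hβ)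
      · refine (ae_restrict_iff' measurableSet_Ioi).mpr (Filter.Eventually.of_forall ?_)
        intro v hv
        have hv0 : 0 < v := hv
        positivity
      · exact HasSubset.Subset.eventuallyLE (Set.Ioi_subset_Ioi (by positivity))
    have hSσ_tail : ∀ t : ℝ, 0 < t → T * lam⁻¹ ≤ t →
        Sσ lam t ≤ 2/lam * fσ lam t := by
      intro t ht0 hta
      have hlt : 2*β+2 ≤ lam*t := by
        rw [hT] at hta
        calc 2*β+2 = (2*β+2) * lam⁻¹ * lam := by field_simp
          _ ≤ t * lam := mul_le_mul_of_nonneg_right hta hl0.le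
          _ = lam * t := mul_comm _ _
      rw [hSσ lam t]
      have h1 := aux_tail hβ hlt
      calc (∫ v in Set.Ioi (lam*t), v ^ (β-1) * Real.exp (-v)) / Real.Gamma β
          ≤ 2 * ((lam*t) ^ (β-1) * Real.exp (-(lam*t))) / Real.Gamma β := by
            exact (div_le_div_iff_of_pos_right hΓ).mpr h1
        _ = 2/lam * fσ lam t := by
            rw [hfσ_eq t, Real.mul_rpow hl0.le ht0.le, Real.rpow_sub hl0, Real.rpow_one]
            ring
    -- integrability
    have hIfF : IntegrableOn (fun t => fσ lam t * F t) (Set.Ioi 0) := by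
      apply Integrable.mono'
        ((aux_intOn (show (-1:ℝ) < β-1 by linarith) hl0).const_mul (lam^β/Real.Gamma β))
      · exact (hfσ_meas.mul hFmeas).aestronglyMeasurable
      · refine (ae_restrict_iff' measurableSet_Ioi).mpr (Filter.Eventually.of_forall ?_)
        intro t ht
        have ht0 : 0 < t := ht
        rw [Real.norm_eq_abs,
          abs_of_nonneg (mul_nonneg (hfσ_nonneg t ht0) (hF0 t)), hfσ_eq]
        have h1 : 0 ≤ lam^β/Real.Gamma β * (t^(β-1) * Real.exp (-(lam*t))) := by
          have := Real.rpow_nonneg ht0.le (β-1)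
          have := Real.rpow_nonneg hl0.le β
          positivity
        calc lam^β/Real.Gamma β * (t^(β-1) * Real.exp (-(lam*t))) * F t
            ≤ lam^β/Real.Gamma β * (t^(β-1) * Real.exp (-(lam*t))) * 1 :=
              mul_le_mul_of_nonneg_left (hF1 t) h1
          _ = lam^β/Real.Gamma β * (t^(β-1) * Real.exp (-(lam*t))) := mul_one _
    have hItfF : IntegrableOn (fun t => t^(m-1) * (fσ lam t * F t)) (Set.Ioi 0) := by
      apply Integrable.mono'
        ((aux_intOn (show (-1:ℝ) < β+m-1-1 by linarith) hl0).const_mul (lam^β/Real.Gamma β))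
      · exact ((by fun_prop : Measurable (fun t : ℝ => t ^ (m-1))).mul
          (hfσ_meas.mul hFmeas)).aestronglyMeasurable
      · refine (ae_restrict_iff' measurableSet_Ioi).mpr (Filter.Eventually.of_forall ?_)
        intro t ht
        have ht0 : 0 < t := ht
        have htm : 0 ≤ t ^ (m-1) := Real.rpow_nonneg ht0.le _
        rw [Real.norm_eq_abs, abs_of_nonneg
          (mul_nonneg htm (mul_nonneg (hfσ_nonneg t ht0) (hF0 t)))]
        have h1 : 0 ≤ lam^β/Real.Gamma β * (t^(β-1) * Real.exp (-(lam*t))) := by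
          have := Real.rpow_nonneg ht0.le (β-1)
          have := Real.rpow_nonneg hl0.le β
          positivity
        calc t^(m-1) * (fσ lam t * F t)
            ≤ t^(m-1) * (fσ lam t * 1) := by
              apply mul_le_mul_of_nonneg_left _ htm
              exact mul_le_mul_of_nonneg_left (hF1 t) (hfσ_nonneg t ht0)
          _ = lam^β/Real.Gamma β * (t^(β+m-1-1) * Real.exp (-(lam*t))) := by
              rw [mul_one, hfσ_eq,
                show β+m-1-1 = (m-1)+(β-1) by ring, Real.rpow_add ht0]
              ring
    set b : ℝ := T * lam⁻¹ with hb
    have hb0 : 0 < b := by rw [hb]; positivity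
    have hISF1 : IntegrableOn (fun t => m * t ^ (m - 1) * Sσ lam t * F t)
        (Set.Ioc 0 b) := by
      apply Integrable.mono' (integrableOn_const (C := m * b ^ (m-1)) (measure_Ioc_lt_top).ne)
      · exact (hψmeas.aestronglyMeasurable.congr
          (hSψ_ae _ measurableSet_Ioc (fun x hx => hx.1)))
      · refine (ae_restrict_iff' measurableSet_Ioc).mpr (Filter.Eventually.of_forall ?_)
        intro t ht
        have ht0 : 0 < t := ht.1
        have htm : 0 ≤ t ^ (m-1) := Real.rpow_nonneg ht0.le _
        rw [Real.norm_eq_abs, abs_of_nonneg (mul_nonneg (mul_nonneg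
            (mul_nonneg hm0.le htm) (hSσ_nonneg t ht0)) (hF0 t))]
        calc m * t ^ (m-1) * Sσ lam t * F t
            ≤ m * t ^ (m-1) * 1 * 1 := by
              apply mul_le_mul (mul_le_mul_of_nonneg_left (hSσ_le_one t ht0)
                (by positivity)) (hF1 t) (hF0 t)
              positivity
          _ = m * t ^ (m-1) := by ring
          _ ≤ m * b ^ (m-1) := by
              apply mul_le_mul_of_nonneg_left _ hm0.le
              exact Real.rpow_le_rpow ht0.le ht.2 (by linarith)
    have hISF2 : IntegrableOn (fun t => m * t ^ (m - 1) * Sσ lam t * F t)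
        (Set.Ioi b) := by
      apply Integrable.mono'
        (((hItfF.mono_set (Set.Ioi_subset_Ioi hb0.le)).const_mul (2*m/lam)))
      · exact (hψmeas.aestronglyMeasurable.congr
          (hSψ_ae _ measurableSet_Ioi (fun x hx => lt_trans hb0 hx)))
      · refine (ae_restrict_iff' measurableSet_Ioi).mpr (Filter.Eventually.of_forall ?_)
        intro t ht
        have ht0 : 0 < t := lt_trans hb0 ht
        have htm : 0 ≤ t ^ (m-1) := Real.rpow_nonneg ht0.le _
        rw [Real.norm_eq_abs, abs_of_nonneg (mul_nonneg (mul_nonneg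
            (mul_nonneg hm0.le htm) (hSσ_nonneg t ht0)) (hF0 t))]
        have hs2 := hSσ_tail t ht0 (le_of_lt ht)
        calc m * t ^ (m-1) * Sσ lam t * F t
            ≤ m * t ^ (m-1) * (2/lam * fσ lam t) * F t := by
              apply mul_le_mul_of_nonneg_right _ (hF0 t)
              exact mul_le_mul_of_nonneg_left hs2 (by positivity)
          _ = 2*m/lam * (t^(m-1) * (fσ lam t * F t)) := by ring
    have hISF : IntegrableOn (fun t => m * t ^ (m - 1) * Sσ lam t * F t)
        (Set.Ioi 0) := by
      rw [show Set.Ioi (0:ℝ) = Set.Ioc 0 b ∪ Set.Ioi b from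
        (Set.Ioc_union_Ioi_eq_Ioi hb0.le).symm]
      exact hISF1.union hISF2
    -- lower bound on the denominator
    set D : ℝ := ∫ t in Set.Ioi (0:ℝ), fσ lam t * F t with hD
    have hIlow : Set.Ioc u⁻¹ (2*u⁻¹) ⊆ Set.Ioi (0:ℝ) :=
      fun x hx => lt_trans (by positivity) hx.1
    have hfF_nonneg_ae : 0 ≤ᵐ[volume.restrict (Set.Ioi (0:ℝ))]
        (fun t => fσ lam t * F t) := by
      refine (ae_restrict_iff' measurableSet_Ioi).mpr (Filter.Eventually.of_forall ?_)
      intro t ht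
      exact mul_nonneg (hfσ_nonneg t ht) (hF0 t)
    have hkey : ∀ x ∈ Set.Ioc u⁻¹ (2*u⁻¹),
        c₃ * u * Real.exp (-(K*u)) ≤ fσ lam x * F x := by
      intro x hx
      have hx0 : 0 < x := lt_trans (by positivity) hx.1
      have hxt₀ : x ≤ t₀ := le_trans hx.2 hut
      have h1ux : 1 ≤ u * x := by
        rw [← mul_inv_cancel₀ hu0.ne']
        exact mul_le_mul_of_nonneg_left hx.1.le hu0.le
      have hFx : Real.exp (-(3*C/2*u)) ≤ F x := by
        refine le_trans (Real.exp_le_exp.mpr ?_) (ht₀ x hx0 hxt₀).1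
        have h2 : (3*C/2)/x ≤ 3*C/2*u := by
          rw [div_le_iff₀ hx0]
          nlinarith
        calc -(3*C/2*u) ≤ -((3*C/2)/x) := neg_le_neg h2
          _ = -(3*C/2)/x := (neg_div _ _).symm
      have hEx : Real.exp (-(2*u)) ≤ Real.exp (-(lam*x)) := by
        apply Real.exp_le_exp.mpr
        have h2 : lam * x ≤ lam * (2*u⁻¹) := mul_le_mul_of_nonneg_left hx.2 hl0.le
        have h3 : lam * (2*u⁻¹) = 2*u := by
          calc lam * (2*u⁻¹) = (u*u) * (2*u⁻¹) := by rw [huu]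
            _ = 2*u * (u*u⁻¹) := by ring
            _ = 2*u := by rw [mul_inv_cancel₀ hu0.ne', mul_one]
        linarith
      have hui : (u⁻¹ : ℝ) ^ (β-1) = u ^ (1-β) := by
        rw [← Real.rpow_neg_one u, ← Real.rpow_mul hu0.le]
        congr 1
        ring
      have hxp : c₂ * u^(1-β) ≤ x ^ (β-1) := by
        rcases le_or_gt 1 β with hb1 | hb1
        · have h1 : (u⁻¹:ℝ)^(β-1) ≤ x^(β-1) :=
            Real.rpow_le_rpow (by positivity) hx.1.le (by linarith)
          rw [hui] at h1
          have h2 : c₂ ≤ 1 := min_le_left _ _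
          nlinarith [Real.rpow_nonneg hu0.le (1-β)]
        · have h1 : (2*u⁻¹:ℝ)^(β-1) ≤ x^(β-1) :=
            Real.rpow_le_rpow_of_nonpos hx0 hx.2 (by linarith)
          have h2 : (2*u⁻¹:ℝ)^(β-1) = 2^(β-1) * u^(1-β) := by
            rw [Real.mul_rpow (by norm_num) (by positivity), hui]
          have h3 : c₂ ≤ 2^(β-1) := min_le_right _ _
          nlinarith [Real.rpow_nonneg hu0.le (1-β)]
      have hfx : lam^β/Real.Gamma β * ((c₂*u^(1-β)) * Real.exp (-(2*u)))
          ≤ fσ lam x := by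
        rw [hfσ_eq x]
        have hβnn : 0 ≤ lam^β := Real.rpow_nonneg hl0.le _
        apply mul_le_mul_of_nonneg_left _ (by positivity)
        exact mul_le_mul hxp hEx (Real.exp_pos _).le (Real.rpow_nonneg hx0.le _)
      have hexpK : Real.exp (-(K*u)) = Real.exp (-(2*u)) * Real.exp (-(3*C/2*u)) := by
        rw [← Real.exp_add]
        congr 1
        rw [hK]
        ring
      have hpow : lam^β * u^(1-β) = u^(β+1) := by
        rw [← huu, Real.mul_rpow hu0.le hu0.le, ← Real.rpow_add hu0,
          ← Real.rpow_add hu0]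
        congr 1
        ring
      have hpow2 : u ≤ u^(β+1) := by
        calc u = u^(1:ℝ) := (Real.rpow_one u).symm
          _ ≤ u^(β+1) := Real.rpow_le_rpow_of_exponent_le hu1 (by linarith)
      have hstep : c₃ * u * Real.exp (-(K*u))
          ≤ lam^β/Real.Gamma β * ((c₂*u^(1-β)) * Real.exp (-(2*u)))
            * Real.exp (-(3*C/2*u)) := by
        have hrhs : lam^β/Real.Gamma β * ((c₂*u^(1-β)) * Real.exp (-(2*u)))
            * Real.exp (-(3*C/2*u)) = c₃ * u^(β+1) * Real.exp (-(K*u)) := by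
          rw [hexpK, hc₃]
          linear_combination
            (c₂ * Real.exp (-(2*u)) * Real.exp (-(3*C/2*u)) / Real.Gamma β) * hpow
        rw [hrhs]
        apply mul_le_mul_of_nonneg_right _ (Real.exp_pos _).le
        exact mul_le_mul_of_nonneg_left hpow2 hc₃0.le
      refine le_trans hstep ?_
      calc lam^β/Real.Gamma β * ((c₂*u^(1-β)) * Real.exp (-(2*u)))
            * Real.exp (-(3*C/2*u))
          ≤ fσ lam x * Real.exp (-(3*C/2*u)) :=
            mul_le_mul_of_nonneg_right hfx (Real.exp_pos _).le
        _ ≤ fσ lam x * F x := mul_le_mul_of_nonneg_left hFx (hfσ_nonneg x hx0)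
    have hDlow : c₃ * Real.exp (-(K*u)) ≤ D := by
      have h1 := setIntegral_ge_of_const_le measurableSet_Ioc
        (measure_Ioc_lt_top).ne hkey (hIfF.mono_set hIlow)
      have hvol : volume.real (Set.Ioc u⁻¹ (2*u⁻¹)) = u⁻¹ := by
        show (volume (Set.Ioc u⁻¹ (2*u⁻¹))).toReal = u⁻¹
        rw [Real.volume_Ioc, ENNReal.toReal_ofReal
          (by rw [show (2:ℝ)*u⁻¹ - u⁻¹ = u⁻¹ by ring]; positivity)]
        ring
      rw [hvol, smul_eq_mul] at h1
      have h2 : (∫ x in Set.Ioc u⁻¹ (2*u⁻¹), fσ lam x * F x) ≤ D := by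
        rw [hD]
        exact setIntegral_mono_set hIfF hfF_nonneg_ae
          (HasSubset.Subset.eventuallyLE hIlow)
      have h3 : c₃ * u * Real.exp (-(K*u)) * u⁻¹ = c₃ * Real.exp (-(K*u)) := by
        field_simp
      linarith
    have hD0 : 0 < D := lt_of_lt_of_le (by positivity) hDlow
    -- moment integral M₁ and its bound
    set M₁ : ℝ := ∫ t in Set.Ioi (0:ℝ), t^(m-1) * (fσ lam t * F t) with hM₁def
    set a : ℝ := R * u⁻¹ with ha
    have ha0 : 0 < a := by rw [ha]; positivity
    have hsub_a : Set.Ioc (0:ℝ) a ⊆ Set.Ioi 0 := fun x hx => hx.1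
    have hsub_a' : Set.Ioi a ⊆ Set.Ioi (0:ℝ) := Set.Ioi_subset_Ioi ha0.le
    have htfF_nonneg : ∀ t : ℝ, 0 < t → 0 ≤ t^(m-1) * (fσ lam t * F t) := by
      intro t ht0
      exact mul_nonneg (Real.rpow_nonneg ht0.le _)
        (mul_nonneg (hfσ_nonneg t ht0) (hF0 t))
    have hM1split : M₁ = (∫ t in Set.Ioc (0:ℝ) a, t^(m-1) * (fσ lam t * F t))
        + ∫ t in Set.Ioi a, t^(m-1) * (fσ lam t * F t) := by
      rw [hM₁def, show Set.Ioi (0:ℝ) = Set.Ioc 0 a ∪ Set.Ioi a from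
        (Set.Ioc_union_Ioi_eq_Ioi ha0.le).symm,
        setIntegral_union (Set.Ioc_disjoint_Ioi le_rfl) measurableSet_Ioi
          (hItfF.mono_set hsub_a) (hItfF.mono_set hsub_a')]
    have hM1a : (∫ t in Set.Ioc (0:ℝ) a, t^(m-1) * (fσ lam t * F t))
        ≤ a^(m-1) * D := by
      have h1 : (∫ t in Set.Ioc (0:ℝ) a, t^(m-1) * (fσ lam t * F t))
          ≤ ∫ t in Set.Ioc (0:ℝ) a, a^(m-1) * (fσ lam t * F t) := by
        apply setIntegral_mono_on (hItfF.mono_set hsub_a)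
          ((hIfF.mono_set hsub_a).const_mul _) measurableSet_Ioc
        intro t ht
        exact mul_le_mul_of_nonneg_right
          (Real.rpow_le_rpow ht.1.le ht.2 (by linarith))
          (mul_nonneg (hfσ_nonneg t ht.1) (hF0 t))
      rw [integral_const_mul] at h1
      have h2 : (∫ t in Set.Ioc (0:ℝ) a, fσ lam t * F t) ≤ D := by
        rw [hD]
        exact setIntegral_mono_set hIfF hfF_nonneg_ae
          (HasSubset.Subset.eventuallyLE hsub_a)
      calc (∫ t in Set.Ioc (0:ℝ) a, t^(m-1) * (fσ lam t * F t))
          ≤ a^(m-1) * ∫ t in Set.Ioc (0:ℝ) a, fσ lam t * F t := h1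
        _ ≤ a^(m-1) * D :=
            mul_le_mul_of_nonneg_left h2 (Real.rpow_nonneg ha0.le _)
    have hlamu : lam * u⁻¹ = u := by
      calc lam * u⁻¹ = u*u*u⁻¹ := by rw [huu]
        _ = u * (u*u⁻¹) := by ring
        _ = u := by rw [mul_inv_cancel₀ hu0.ne', mul_one]
    have hM1b : (∫ t in Set.Ioi a, t^(m-1) * (fσ lam t * F t))
        ≤ c₁ * Real.exp (-(R/2*u)) := by
      have hptw : ∀ t ∈ Set.Ioi a, t^(m-1) * (fσ lam t * F t)
          ≤ Real.exp (-(R/2*u)) * (lam^β/Real.Gamma β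
            * (t^(β+m-1-1) * Real.exp (-(lam/2*t)))) := by
        intro t ht
        have ht0 : 0 < t := lt_trans ha0 ht
        have hsplit : Real.exp (-(lam*t))
            = Real.exp (-(lam/2*t)) * Real.exp (-(lam/2*t)) := by
          rw [← Real.exp_add]
          congr 1
          ring
        have hexp1 : Real.exp (-(lam/2*t)) ≤ Real.exp (-(R/2*u)) := by
          apply Real.exp_le_exp.mpr
          apply neg_le_neg
          calc R/2*u = lam/2 * a := by
                rw [ha, show lam/2*(R*u⁻¹) = R/2*(lam*u⁻¹) by ring, hlamu]
            _ ≤ lam/2*t := mul_le_mul_of_nonneg_left ht.le (by positivity)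
        have h1 : t^(m-1) * (fσ lam t * F t)
            ≤ lam^β/Real.Gamma β * (t^(β+m-1-1) * Real.exp (-(lam*t))) := by
          have htm : 0 ≤ t ^ (m-1) := Real.rpow_nonneg ht0.le _
          calc t^(m-1) * (fσ lam t * F t)
              ≤ t^(m-1) * (fσ lam t * 1) := by
                apply mul_le_mul_of_nonneg_left _ htm
                exact mul_le_mul_of_nonneg_left (hF1 t) (hfσ_nonneg t ht0)
            _ = lam^β/Real.Gamma β * (t^(β+m-1-1) * Real.exp (-(lam*t))) := by
                rw [mul_one, hfσ_eq,
                  show β+m-1-1 = (m-1)+(β-1) by ring, Real.rpow_add ht0]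
                ring
        calc t^(m-1) * (fσ lam t * F t)
            ≤ lam^β/Real.Gamma β * (t^(β+m-1-1) * Real.exp (-(lam*t))) := h1
          _ = (lam^β/Real.Gamma β * (t^(β+m-1-1) * Real.exp (-(lam/2*t))))
                * Real.exp (-(lam/2*t)) := by rw [hsplit]; ring
          _ ≤ (lam^β/Real.Gamma β * (t^(β+m-1-1) * Real.exp (-(lam/2*t))))
                * Real.exp (-(R/2*u)) := by
              apply mul_le_mul_of_nonneg_left hexp1
              have h2 : 0 ≤ lam^β := Real.rpow_nonneg hl0.le _
              have h3 : 0 ≤ t^(β+m-1-1) := Real.rpow_nonneg ht0.le _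
              positivity
          _ = Real.exp (-(R/2*u)) * (lam^β/Real.Gamma β
                * (t^(β+m-1-1) * Real.exp (-(lam/2*t)))) := by ring
      have hIg : IntegrableOn (fun t => lam^β/Real.Gamma β
          * (t^(β+m-1-1) * Real.exp (-(lam/2*t)))) (Set.Ioi 0) := by
        have := (aux_intOn (show (-1:ℝ) < β+m-1-1 by linarith)
          (by positivity : (0:ℝ) < lam/2)).const_mul (lam^β/Real.Gamma β)
        exact this
      have h2 : (∫ t in Set.Ioi a, t^(m-1) * (fσ lam t * F t))
          ≤ ∫ t in Set.Ioi a, Real.exp (-(R/2*u)) * (lam^β/Real.Gamma β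
            * (t^(β+m-1-1) * Real.exp (-(lam/2*t)))) := by
        apply setIntegral_mono_on (hItfF.mono_set hsub_a')
          ((hIg.mono_set hsub_a').const_mul _) measurableSet_Ioi hptw
      have h3 : (∫ t in Set.Ioi a, lam^β/Real.Gamma β
            * (t^(β+m-1-1) * Real.exp (-(lam/2*t))))
          ≤ ∫ t in Set.Ioi (0:ℝ), lam^β/Real.Gamma β
            * (t^(β+m-1-1) * Real.exp (-(lam/2*t))) := by
        apply setIntegral_mono_set hIg
        · refine (ae_restrict_iff' measurableSet_Ioi).mpr
            (Filter.Eventually.of_forall ?_)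
          intro t ht
          have ht0 : 0 < t := ht
          have h4 : 0 ≤ lam^β := Real.rpow_nonneg hl0.le _
          have h5 : 0 ≤ t^(β+m-1-1) := Real.rpow_nonneg ht0.le _
          positivity
        · exact HasSubset.Subset.eventuallyLE hsub_a'
      have h6 : (∫ t in Set.Ioi (0:ℝ), lam^β/Real.Gamma β
            * (t^(β+m-1-1) * Real.exp (-(lam/2*t))))
          = lam^β/Real.Gamma β * ((1/(lam/2))^(β+m-1) * Real.Gamma (β+m-1)) := by
        rw [integral_const_mul, Real.integral_rpow_mul_exp_neg_mul_Ioi hβm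
          (by positivity : (0:ℝ) < lam/2)]
      have h7 : lam^β/Real.Gamma β * ((1/(lam/2))^(β+m-1) * Real.Gamma (β+m-1))
          ≤ c₁ := by
        have h8 : (1/(lam/2) : ℝ) = 2 * lam⁻¹ := by
          field_simp
        have h9 : ((2:ℝ) * lam⁻¹)^(β+m-1)
            = 2^(β+m-1) * (lam^(β+m-1))⁻¹ := by
          rw [Real.mul_rpow (by norm_num) (by positivity),
            Real.inv_rpow hl0.le]
        have h10 : lam^β * (lam^(β+m-1))⁻¹ = lam^(1-m) := by
          rw [← Real.rpow_neg hl0.le, ← Real.rpow_add hl0]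
          congr 1
          ring
        have h11 : lam^((1:ℝ)-m) ≤ 1 :=
          Real.rpow_le_one_of_one_le_of_nonpos hl1 (by linarith)
        rw [h8, h9, hc₁]
        have h12 : (0:ℝ) < 2^(β+m-1) := Real.rpow_pos_of_pos two_pos _
        calc lam^β/Real.Gamma β * (2^(β+m-1) * (lam^(β+m-1))⁻¹
              * Real.Gamma (β+m-1))
            = (lam^β * (lam^(β+m-1))⁻¹) * (2^(β+m-1)
              * Real.Gamma (β+m-1) / Real.Gamma β) := by ring
          _ = lam^(1-m) * (2^(β+m-1) * Real.Gamma (β+m-1) / Real.Gamma β) := by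
              rw [h10]
          _ ≤ 1 * (2^(β+m-1) * Real.Gamma (β+m-1) / Real.Gamma β) := by
              apply mul_le_mul_of_nonneg_right h11 (by positivity)
          _ = 2^(β+m-1) * Real.Gamma (β+m-1) / Real.Gamma β := one_mul _
      calc (∫ t in Set.Ioi a, t^(m-1) * (fσ lam t * F t))
          ≤ ∫ t in Set.Ioi a, Real.exp (-(R/2*u)) * (lam^β/Real.Gamma β
            * (t^(β+m-1-1) * Real.exp (-(lam/2*t)))) := h2
        _ = Real.exp (-(R/2*u)) * ∫ t in Set.Ioi a, lam^β/Real.Gamma β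
            * (t^(β+m-1-1) * Real.exp (-(lam/2*t))) := integral_const_mul _ _
        _ ≤ Real.exp (-(R/2*u)) * (lam^β/Real.Gamma β
            * ((1/(lam/2))^(β+m-1) * Real.Gamma (β+m-1))) := by
            apply mul_le_mul_of_nonneg_left _ (Real.exp_pos _).le
            rw [← h6]
            exact h3
        _ ≤ Real.exp (-(R/2*u)) * c₁ :=
            mul_le_mul_of_nonneg_left h7 (Real.exp_pos _).le
        _ = c₁ * Real.exp (-(R/2*u)) := mul_comm _ _
    have hui' : (u⁻¹ : ℝ) ^ (m-1) = u ^ (1-m) := by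
      rw [← Real.rpow_neg_one u, ← Real.rpow_mul hu0.le]
      congr 1
      ring
    have hM1le : M₁ ≤ R^(m-1) * u^(1-m) * D + c₁ * Real.exp (-(R/2*u)) := by
      rw [hM1split]
      apply add_le_add _ hM1b
      calc (∫ t in Set.Ioc (0:ℝ) a, t^(m-1) * (fσ lam t * F t))
          ≤ a^(m-1) * D := hM1a
        _ = R^(m-1) * u^(1-m) * D := by
            rw [ha, Real.mul_rpow hR0.le (by positivity), hui']
    -- numerator bound
    set N : ℝ := ∫ t in Set.Ioi (0:ℝ), m * t ^ (m - 1) * Sσ lam t * F t with hNdef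
    have hNsplit : N = (∫ t in Set.Ioc (0:ℝ) b, m * t ^ (m - 1) * Sσ lam t * F t)
        + ∫ t in Set.Ioi b, m * t ^ (m - 1) * Sσ lam t * F t := by
      rw [hNdef, show Set.Ioi (0:ℝ) = Set.Ioc 0 b ∪ Set.Ioi b from
        (Set.Ioc_union_Ioi_eq_Ioi hb0.le).symm,
        setIntegral_union (Set.Ioc_disjoint_Ioi le_rfl) measurableSet_Ioi
          hISF1 hISF2]
    have hN1 : (∫ t in Set.Ioc (0:ℝ) b, m * t ^ (m - 1) * Sσ lam t * F t)
        ≤ Real.exp (-(C/(2*T))*lam) * T^m := by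
      have hptw : ∀ t ∈ Set.Ioc (0:ℝ) b, m * t ^ (m - 1) * Sσ lam t * F t
          ≤ m * Real.exp (-(C/(2*T))*lam) * t^(m-1) := by
        intro t ht
        have ht0 : 0 < t := ht.1
        have htb : t ≤ t₀ := le_trans ht.2 hbt
        have hFt : F t ≤ Real.exp (-(C/(2*T))*lam) := by
          refine le_trans (ht₀ t ht0 htb).2 (Real.exp_le_exp.mpr ?_)
          have hq : C/(2*T)*lam ≤ C/2/t := by
            have hlt : lam * t ≤ T := by
              calc lam * t ≤ lam * (T * lam⁻¹) :=
                  mul_le_mul_of_nonneg_left ht.2 hl0.le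
                _ = T * (lam * lam⁻¹) := by ring
                _ = T := by rw [mul_inv_cancel₀ hl0.ne', mul_one]
            rw [div_mul_eq_mul_div, div_le_div_iff₀ (by positivity) ht0]
            calc C*lam*t = C*(lam*t) := by ring
              _ ≤ C*T := mul_le_mul_of_nonneg_left hlt hC.le
              _ = C/2*T*2 := by ring
              _ ≤ C/2*(2*T) := by linarith [mul_comm (C/2*T) (2:ℝ)]
          have hnd : -(C/2)/t = -(C/2/t) := by ring
          linarith [hnd]
        have htm : 0 ≤ t ^ (m-1) := Real.rpow_nonneg ht0.le _
        calc m * t ^ (m - 1) * Sσ lam t * F t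
            ≤ m * t ^ (m - 1) * 1 * Real.exp (-(C/(2*T))*lam) := by
              apply mul_le_mul (mul_le_mul_of_nonneg_left (hSσ_le_one t ht0)
                (by positivity)) hFt (hF0 t)
              positivity
          _ = m * Real.exp (-(C/(2*T))*lam) * t^(m-1) := by ring
      have hIrp : IntegrableOn (fun t : ℝ => m * Real.exp (-(C/(2*T))*lam)
          * t^(m-1)) (Set.Ioc (0:ℝ) b) := by
        have hint : IntervalIntegrable (fun x : ℝ => x ^ (m-1)) volume 0 b :=
          intervalIntegral.intervalIntegrable_rpow' (by linarith)
        have h' : IntegrableOn (fun x : ℝ => x^(m-1)) (Set.Ioc 0 b) volume :=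
          (intervalIntegrable_iff_integrableOn_Ioc_of_le hb0.le).mp hint
        exact h'.const_mul _
      have h1 := setIntegral_mono_on hISF1 hIrp measurableSet_Ioc hptw
      have h2 : (∫ t in Set.Ioc (0:ℝ) b, m * Real.exp (-(C/(2*T))*lam)
          * t^(m-1)) = m * Real.exp (-(C/(2*T))*lam) * (b^m/m) := by
        rw [integral_const_mul]
        congr 1
        rw [← intervalIntegral.integral_of_le hb0.le,
          integral_rpow (Or.inl (by linarith : (-1:ℝ) < m-1))]
        rw [show m-1+1 = m by ring, Real.zero_rpow hm0.ne']
        ring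
      have hbm : b^m ≤ T^m := by
        apply Real.rpow_le_rpow hb0.le _ hm0.le
        calc b = T * lam⁻¹ := hb
          _ ≤ T * 1 := mul_le_mul_of_nonneg_left (inv_le_one_of_one_le₀ hl1) hT0.le
          _ = T := mul_one _
      calc (∫ t in Set.Ioc (0:ℝ) b, m * t ^ (m - 1) * Sσ lam t * F t)
          ≤ m * Real.exp (-(C/(2*T))*lam) * (b^m/m) := h2 ▸ h1
        _ = Real.exp (-(C/(2*T))*lam) * b^m := by
            field_simp
        _ ≤ Real.exp (-(C/(2*T))*lam) * T^m :=
            mul_le_mul_of_nonneg_left hbm (Real.exp_pos _).le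
    have hsub_b' : Set.Ioi b ⊆ Set.Ioi (0:ℝ) := Set.Ioi_subset_Ioi hb0.le
    have hN2 : (∫ t in Set.Ioi b, m * t ^ (m - 1) * Sσ lam t * F t)
        ≤ 2*m/lam * M₁ := by
      have hptw : ∀ t ∈ Set.Ioi b, m * t ^ (m - 1) * Sσ lam t * F t
          ≤ 2*m/lam * (t^(m-1) * (fσ lam t * F t)) := by
        intro t ht
        have ht0 : 0 < t := lt_trans hb0 ht
        have htm : 0 ≤ t ^ (m-1) := Real.rpow_nonneg ht0.le _
        have hs2 := hSσ_tail t ht0 (le_of_lt ht)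
        calc m * t ^ (m-1) * Sσ lam t * F t
            ≤ m * t ^ (m-1) * (2/lam * fσ lam t) * F t := by
              apply mul_le_mul_of_nonneg_right _ (hF0 t)
              exact mul_le_mul_of_nonneg_left hs2 (by positivity)
          _ = 2*m/lam * (t^(m-1) * (fσ lam t * F t)) := by ring
      have h1 := setIntegral_mono_on hISF2
        ((hItfF.mono_set hsub_b').const_mul (2*m/lam)) measurableSet_Ioi hptw
      rw [integral_const_mul] at h1
      have h2 : (∫ t in Set.Ioi b, t^(m-1) * (fσ lam t * F t)) ≤ M₁ := by
        rw [hM₁def]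
        apply setIntegral_mono_set hItfF
        · refine (ae_restrict_iff' measurableSet_Ioi).mpr
            (Filter.Eventually.of_forall ?_)
          intro t ht
          exact htfF_nonneg t ht
        · exact HasSubset.Subset.eventuallyLE hsub_b'
      calc (∫ t in Set.Ioi b, m * t ^ (m - 1) * Sσ lam t * F t)
          ≤ 2*m/lam * ∫ t in Set.Ioi b, t^(m-1) * (fσ lam t * F t) := h1
        _ ≤ 2*m/lam * M₁ :=
            mul_le_mul_of_nonneg_left h2 (by positivity)
    -- assembling everything
    have hum : lam ^ (m/2) = u^m := by
      rw [hu, show m/2 = 1/2*m by ring, Real.rpow_mul hl0.le]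
    have hDdiv : Real.exp (-(K*u)) ≤ D/c₃ := by
      rw [le_div_iff₀ hc₃0]
      linarith [hDlow]
    have hTm : (0:ℝ) < T^m := Real.rpow_pos_of_pos hT0 _
    have hA : u^m * (Real.exp (-(C/(2*T))*lam) * T^m)
        ≤ T^m/c₃ * (lam^(m/2) * Real.exp (-(C/(4*T))*lam)) * D := by
      have hE : Real.exp (-(C/(2*T))*lam)
          ≤ Real.exp (-(C/(4*T))*lam) * Real.exp (-(K*u)) := by
        rw [← Real.exp_add, Real.exp_le_exp]
        have h6 : C/(4*T)*lam + C/(4*T)*lam = C/(2*T)*lam := by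
          field_simp
          ring
        linarith [hKu, h6]
      have humn : 0 ≤ u^m := Real.rpow_nonneg hu0.le _
      calc u^m * (Real.exp (-(C/(2*T))*lam) * T^m)
          ≤ u^m * ((Real.exp (-(C/(4*T))*lam) * Real.exp (-(K*u))) * T^m) := by
            apply mul_le_mul_of_nonneg_left _ humn
            exact mul_le_mul_of_nonneg_right hE hTm.le
        _ = T^m * (u^m * Real.exp (-(C/(4*T))*lam)) * Real.exp (-(K*u)) := by
            ring
        _ ≤ T^m * (u^m * Real.exp (-(C/(4*T))*lam)) * (D/c₃) := by
            apply mul_le_mul_of_nonneg_left hDdiv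
            positivity
        _ = T^m/c₃ * (lam^(m/2) * Real.exp (-(C/(4*T))*lam)) * D := by
            rw [hum]
            ring
    have hB : u^m * (2*m/lam * (R^(m-1) * u^(1-m) * D))
        = 2*m*R^(m-1) * lam ^ (-(1/2) : ℝ) * D := by
      have hpowB : u^m * u^(1-m) = u := by
        rw [← Real.rpow_add hu0, show m+(1-m) = 1 by ring, Real.rpow_one]
      have hneg : lam ^ (-(1/2) : ℝ) = u⁻¹ := by
        rw [Real.rpow_neg hl0.le, hu]
      have hux : u * lam⁻¹ = u⁻¹ := by
        rw [← huu, mul_inv]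
        calc u * (u⁻¹*u⁻¹) = (u*u⁻¹)*u⁻¹ := by ring
          _ = u⁻¹ := by rw [mul_inv_cancel₀ hu0.ne', one_mul]
      calc u^m * (2*m/lam * (R^(m-1) * u^(1-m) * D))
          = 2*m*R^(m-1) * ((u^m * u^(1-m)) * lam⁻¹) * D := by
            rw [div_eq_mul_inv]
            ring
        _ = 2*m*R^(m-1) * (u * lam⁻¹) * D := by rw [hpowB]
        _ = 2*m*R^(m-1) * lam ^ (-(1/2) : ℝ) * D := by rw [hux, hneg]
    have hCterm : u^m * (2*m/lam * (c₁ * Real.exp (-(R/2*u))))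
        ≤ 2*m*c₁/c₃ * (u^m * Real.exp (-u)) * D := by
      have hexpR : Real.exp (-(R/2*u)) = Real.exp (-u) * Real.exp (-(K*u)) := by
        rw [← Real.exp_add]
        congr 1
        rw [hR]
        ring
      have hlinv : lam⁻¹ ≤ 1 := inv_le_one_of_one_le₀ hl1
      have humn : 0 ≤ u^m := Real.rpow_nonneg hu0.le _
      calc u^m * (2*m/lam * (c₁ * Real.exp (-(R/2*u))))
          = (2*m*c₁*(u^m * Real.exp (-u)) * Real.exp (-(K*u))) * lam⁻¹ := by
            rw [hexpR, div_eq_mul_inv]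
            ring
        _ ≤ (2*m*c₁*(u^m * Real.exp (-u)) * Real.exp (-(K*u))) * 1 := by
            apply mul_le_mul_of_nonneg_left hlinv
            positivity
        _ = 2*m*c₁*(u^m * Real.exp (-u)) * Real.exp (-(K*u)) := mul_one _
        _ ≤ 2*m*c₁*(u^m * Real.exp (-u)) * (D/c₃) := by
            apply mul_le_mul_of_nonneg_left hDdiv
            positivity
        _ = 2*m*c₁/c₃ * (u^m * Real.exp (-u)) * D := by ring
    have humn : 0 ≤ u^m := Real.rpow_nonneg hu0.le _
    have hfinal : u^m * N ≤ g lam * D := by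
      have hstep1 : u^m * N ≤ u^m * (Real.exp (-(C/(2*T))*lam) * T^m)
          + u^m * (2*m/lam * (R^(m-1) * u^(1-m) * D))
          + u^m * (2*m/lam * (c₁ * Real.exp (-(R/2*u)))) := by
        have h1 : N ≤ Real.exp (-(C/(2*T))*lam) * T^m + 2*m/lam * M₁ := by
          rw [hNsplit]
          exact add_le_add hN1 hN2
        have h2 : 2*m/lam * M₁ ≤ 2*m/lam * (R^(m-1) * u^(1-m) * D)
            + 2*m/lam * (c₁ * Real.exp (-(R/2*u))) := by
          rw [← mul_add]
          exact mul_le_mul_of_nonneg_left hM1le (by positivity)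
        have h3 : u^m * N ≤ u^m * ((Real.exp (-(C/(2*T))*lam) * T^m)
            + (2*m/lam * (R^(m-1) * u^(1-m) * D)
            + 2*m/lam * (c₁ * Real.exp (-(R/2*u))))) := by
          apply mul_le_mul_of_nonneg_left _ humn
          linarith
        linarith [h3, mul_add (u^m) (Real.exp (-(C/(2*T))*lam) * T^m)
          (2*m/lam * (R^(m-1) * u^(1-m) * D) + 2*m/lam * (c₁ * Real.exp (-(R/2*u)))),
          mul_add (u^m) (2*m/lam * (R^(m-1) * u^(1-m) * D))
          (2*m/lam * (c₁ * Real.exp (-(R/2*u))))]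
      have hgD : g lam * D = T^m/c₃ * (lam^(m/2) * Real.exp (-(C/(4*T))*lam)) * D
          + 2*m*R^(m-1) * lam ^ (-(1/2) : ℝ) * D
          + 2*m*c₁/c₃ * (u^m * Real.exp (-u)) * D := by
        rw [hg]
        ring
      rw [hgD]
      linarith [hA, hB, hCterm, hstep1]
    rw [hum, mul_div_assoc']
    rw [div_le_iff₀ hD0]
    exact hfinal
end

section
/- For any p > −1 and C > 0, ∫₀^∞ s^p e^{−√(λC)(s + 1/s)} ds is asymptotic to √(π/√(λC)) · e^{−2√(λC)} as λ → ∞. -/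
open MeasureTheory Filter Real Set Topology

noncomputable section LaplaceAuxiliary


def hfun (p b u : ℝ) : ℝ := (1 + u / b) ^ p * Real.exp (-(u ^ 2 / (1 + u / b)))

def Jfun (p b : ℝ) : ℝ := ∫ u in Set.Ioi (-b), hfun p b u

lemma spos {b u : ℝ} (hb : 0 < b) (hu : -b < u) : 0 < 1 + u / b := by
  have h1 : 0 < (b + u) / b := div_pos (by linarith) hb
  have h2 : 1 + u / b = (b + u) / b := by field_simp
  rwa [h2]

lemma cov (p b : ℝ) (hb : 0 < b) :
    ∫ s in Set.Ioi (0:ℝ), s ^ p * Real.exp (-(b^2) * (s + 1/s))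
      = b⁻¹ * Real.exp (-2 * b^2) * Jfun p b := by
  have himg : (fun u : ℝ => 1 + u / b) '' Set.Ioi (-b) = Set.Ioi (0:ℝ) := by
    ext x
    constructor
    · rintro ⟨u, hu, rfl⟩
      exact spos hb hu
    · intro hx
      refine ⟨b * (x - 1), ?_, ?_⟩
      · simp only [Set.mem_Ioi] at hx ⊢
        nlinarith
      · field_simp; ring
  rw [← himg, integral_image_eq_integral_abs_deriv_smul measurableSet_Ioi
      (f' := fun _ => b⁻¹) ?_ ?_]
  · rw [Jfun, ← MeasureTheory.integral_const_mul]
    apply setIntegral_congr_fun measurableSet_Ioi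
    intro u hu
    have hs : 0 < 1 + u / b := spos hb hu
    have hbu : (0:ℝ) < b + u := by
      have := mul_pos hb hs
      have e : b * (1 + u / b) = b + u := by field_simp
      linarith [e ▸ this]
    have key : b^2 * ((1 + u / b) + 1 / (1 + u / b)) = 2 * b^2 + u^2 / (1 + u / b) := by
      field_simp [hbu.ne']
      ring
    dsimp only
    rw [smul_eq_mul, abs_of_pos (by positivity : (0:ℝ) < b⁻¹)]
    rw [hfun, neg_mul, key, neg_add, Real.exp_add, show -(2*b^2) = -2*b^2 by ring]
    ring
  · intro u _
    simpa using ((hasDerivWithinAt_id u _).div_const b).const_add 1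
  · intro u _ v _ h
    have : u / b = v / b := by
      have := congrArg (· - 1) h
      simpa using this
    field_simp at this
    exact this

lemma sup_bound (p : ℝ) (hp : p < 0) :
    ∃ M : ℝ, 0 ≤ M ∧ ∀ s : ℝ, 0 < s → s ^ p * Real.exp (-(1 / (8 * s))) ≤ M := by
  set K : ℝ := -16 * p with hK
  have hKpos : 0 < K := by simp [hK]; linarith
  refine ⟨Real.exp ((-p) * (Real.log K - 1)), (Real.exp_pos _).le, fun s hs => ?_⟩
  set t : ℝ := s⁻¹ with ht
  have htpos : 0 < t := by positivity
  have hlog : Real.log t ≤ t / K + (Real.log K - 1) := by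
    have h1 : Real.log (t / K) ≤ t / K - 1 := Real.log_le_sub_one_of_pos (by positivity)
    rw [Real.log_div htpos.ne' hKpos.ne'] at h1
    linarith
  have hps : s ^ p = Real.exp ((-p) * Real.log t) := by
    rw [Real.rpow_def_of_pos hs, ht, Real.log_inv]
    ring_nf
  have h8 : 1 / (8 * s) = t / 8 := by
    rw [ht]; field_simp
  rw [hps, h8, ← Real.exp_add]
  apply Real.exp_le_exp.mpr
  have h2 : (-p) * Real.log t ≤ (-p) * (t / K + (Real.log K - 1)) :=
    mul_le_mul_of_nonneg_left hlog (by linarith)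
  have h3 : (-p) * (t / K) = t / 16 := by
    rw [hK]; field_simp [hp.ne]
  nlinarith [htpos.le]

lemma neg_side (p : ℝ) :
    ∃ N : ℝ, 0 ≤ N ∧ ∀ b : ℝ, 1 ≤ b → ∀ u : ℝ, -b < u → u < 0 →
      hfun p b u ≤ N * Real.exp (-u ^ 2) := by
  have base : ∀ b : ℝ, 1 ≤ b → ∀ u : ℝ, -b < u → u < 0 →
      (0 < 1 + u / b ∧ 1 + u / b < 1 ∧
        Real.exp (-(u ^ 2 / (1 + u / b))) ≤ Real.exp (-u ^ 2)) := by
    intro b hb u hu hu0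
    have hb0 : (0:ℝ) < b := by linarith
    have hs : 0 < 1 + u / b := spos hb0 hu
    have hs1 : 1 + u / b < 1 := by
      have : u / b < 0 := div_neg_of_neg_of_pos hu0 hb0
      linarith
    refine ⟨hs, hs1, Real.exp_le_exp.mpr ?_⟩
    have : u ^ 2 ≤ u ^ 2 / (1 + u / b) := by
      rw [le_div_iff₀ hs]
      nlinarith [sq_nonneg u]
    linarith
  rcases le_or_gt 0 p with hp | hp
  · refine ⟨1, zero_le_one, fun b hb u hu hu0 => ?_⟩
    obtain ⟨hs, hs1, hexp⟩ := base b hb u hu hu0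
    have h1 : (1 + u / b) ^ p ≤ 1 := Real.rpow_le_one hs.le hs1.le hp
    calc hfun p b u ≤ 1 * Real.exp (-(u ^ 2 / (1 + u / b))) :=
          mul_le_mul_of_nonneg_right h1 (Real.exp_pos _).le
      _ ≤ 1 * Real.exp (-u ^ 2) := by simpa using hexp
  · obtain ⟨M, hM0, hM⟩ := sup_bound p hp
    refine ⟨(2:ℝ) ^ (-p) + M, by positivity, fun b hb u hu hu0 => ?_⟩
    obtain ⟨hs, hs1, hexp⟩ := base b hb u hu hu0
    have hb0 : (0:ℝ) < b := by linarith
    set s : ℝ := 1 + u / b with hsdef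
    have hu2 : u ^ 2 = b ^ 2 * (1 - s) ^ 2 := by
      rw [hsdef]; field_simp; ring
    rcases le_or_gt (1/2 : ℝ) s with hhalf | hhalf
    · -- s ≥ 1/2 : s^p ≤ 2^(-p)
      have h1 : s ^ p ≤ (2:ℝ) ^ (-p) := by
        have e1 : s ^ p = (s⁻¹) ^ (-p) := by
          rw [Real.inv_rpow hs.le, ← Real.rpow_neg hs.le, neg_neg]
        have e2 : s⁻¹ ≤ 2 := by
          rw [inv_le_comm₀ (by positivity) (by norm_num)]
          linarith
        rw [e1]
        exact Real.rpow_le_rpow (by positivity) e2 (by linarith)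
      have : hfun p b u ≤ (2:ℝ) ^ (-p) * Real.exp (-u ^ 2) := by
        rw [hfun]
        calc s ^ p * Real.exp (-(u ^ 2 / s)) ≤ (2:ℝ) ^ (-p) * Real.exp (-(u ^ 2 / s)) :=
              mul_le_mul_of_nonneg_right h1 (Real.exp_pos _).le
          _ ≤ (2:ℝ) ^ (-p) * Real.exp (-u ^ 2) :=
              mul_le_mul_of_nonneg_left hexp (by positivity)
      nlinarith [Real.exp_pos (-u^2)]
    · -- s < 1/2
      have hsplit : u ^ 2 / s = u ^ 2 + u ^ 2 * (1 - s) / s := by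
        field_simp
        ring
      have hb2 : (1:ℝ) ≤ b ^ 2 := by nlinarith
      have hcube : (1:ℝ) / 8 ≤ (1 - s) ^ 3 := by
        have h1s : (1:ℝ) / 2 ≤ 1 - s := by linarith
        calc (1:ℝ) / 8 = (1 / 2) ^ 3 := by norm_num
          _ ≤ (1 - s) ^ 3 := pow_le_pow_left₀ (by norm_num) h1s 3
      have hnum : (1:ℝ) / 8 ≤ u ^ 2 * (1 - s) := by
        have e3 : u ^ 2 * (1 - s) = b ^ 2 * (1 - s) ^ 3 := by rw [hu2]; ring
        rw [e3]
        calc (1:ℝ) / 8 ≤ (1 - s) ^ 3 := hcube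
          _ ≤ b ^ 2 * (1 - s) ^ 3 := le_mul_of_one_le_left (by nlinarith) hb2
      have hkey : 1 / (8 * s) ≤ u ^ 2 * (1 - s) / s := by
        rw [show (1:ℝ) / (8 * s) = (1 / 8) / s by field_simp]
        gcongr
      have hspm : 0 ≤ s ^ p := Real.rpow_nonneg hs.le p
      calc hfun p b u
          = (s ^ p * Real.exp (-(u ^ 2 * (1 - s) / s))) * Real.exp (-u ^ 2) := by
            rw [hfun, hsplit, neg_add, Real.exp_add]; ring
        _ ≤ (s ^ p * Real.exp (-(1 / (8 * s)))) * Real.exp (-u ^ 2) := by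
            gcongr
        _ ≤ M * Real.exp (-u ^ 2) := by
            gcongr
            exact hM s hs
        _ ≤ ((2:ℝ) ^ (-p) + M) * Real.exp (-u ^ 2) := by
            have : (0:ℝ) ≤ (2:ℝ) ^ (-p) := Real.rpow_nonneg (by norm_num) _
            nlinarith [Real.exp_pos (-u^2)]

lemma pos_side (p : ℝ) :
    ∀ b : ℝ, max p 0 + 1 ≤ b → ∀ u : ℝ, 0 ≤ u →
      hfun p b u ≤ Real.exp ((max p 0 + 1) ^ 2) * Real.exp (-u) := by
  intro b hb u hu
  set q : ℝ := max p 0 with hq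
  set B : ℝ := q + 1 with hB
  have hq0 : 0 ≤ q := le_max_right _ _
  have hB1 : (1:ℝ) ≤ B := by simp [hB]; linarith
  have hB0 : (0:ℝ) < B := by linarith
  have hb1 : (1:ℝ) ≤ b := le_trans hB1 hb
  have hb0 : (0:ℝ) < b := by linarith
  have hub : 0 ≤ u / b := by positivity
  have hs1 : (1:ℝ) ≤ 1 + u / b := by linarith
  have hs0 : (0:ℝ) < 1 + u / b := by linarith
  -- s^p ≤ exp (q*u)
  have h1 : (1 + u / b) ^ p ≤ Real.exp (q * u) := by
    have e1 : (1 + u / b) ^ p ≤ (1 + u / b) ^ q :=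
      Real.rpow_le_rpow_of_exponent_le hs1 (le_max_left _ _)
    have e2 : 1 + u / b ≤ Real.exp u := by
      have := Real.add_one_le_exp u
      have := div_le_self hu hb1
      linarith
    have e3 : (1 + u / b) ^ q ≤ (Real.exp u) ^ q :=
      Real.rpow_le_rpow hs0.le e2 hq0
    calc (1 + u / b) ^ p ≤ (1 + u / b) ^ q := e1
      _ ≤ (Real.exp u) ^ q := e3
      _ = Real.exp (u * q) := (Real.exp_mul u q).symm
      _ = Real.exp (q * u) := by rw [mul_comm]
  -- exp part
  have h2 : Real.exp (-(u ^ 2 / (1 + u / b))) ≤ Real.exp (B ^ 2 - B * u) := by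
    apply Real.exp_le_exp.mpr
    have hd0 : (0:ℝ) < 1 + u / B := by positivity
    have hsB : 1 + u / b ≤ 1 + u / B := by
      have := div_le_div_of_nonneg_left hu hB0 hb
      linarith
    have e1 : u ^ 2 / (1 + u / B) ≤ u ^ 2 / (1 + u / b) :=
      div_le_div_of_nonneg_left (sq_nonneg u) hs0 hsB
    have e2 : B * u - B ^ 2 ≤ u ^ 2 / (1 + u / B) := by
      rw [le_div_iff₀ hd0]
      have : (B * u - B ^ 2) * (1 + u / B) = u ^ 2 - B ^ 2 := by
        field_simp
        ring
      nlinarith [sq_nonneg B]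
    linarith
  calc hfun p b u ≤ Real.exp (q * u) * Real.exp (B ^ 2 - B * u) := by
        rw [hfun]
        exact mul_le_mul h1 h2 (Real.exp_pos _).le (Real.exp_pos _).le
    _ = Real.exp (B ^ 2) * Real.exp (-u) := by
        rw [← Real.exp_add, ← Real.exp_add]
        congr 1
        rw [hB]
        ring

lemma J_tendsto (p : ℝ) :
    Tendsto (fun b => ∫ u in Set.Ioi (-b), hfun p b u) atTop (𝓝 (Real.sqrt π)) := by
  obtain ⟨N, hN0, hneg⟩ := neg_side p
  set B : ℝ := max p 0 + 1 with hB
  set P : ℝ := Real.exp (B ^ 2) with hP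
  set g : ℝ → ℝ := fun u =>
    N * Real.exp (-u ^ 2) + Set.indicator (Set.Ici 0) (fun u => P * Real.exp (-u)) u with hg
  have hg0 : ∀ u, 0 ≤ g u := by
    intro u
    have h1 : 0 ≤ N * Real.exp (-u ^ 2) := by positivity
    have h2 : 0 ≤ Set.indicator (Set.Ici 0) (fun u => P * Real.exp (-u)) u :=
      Set.indicator_nonneg (fun x _ => by positivity) u
    simpa [hg] using add_nonneg h1 h2
  set F : ℝ → ℝ → ℝ := fun b => Set.indicator (Set.Ioi (-b)) (hfun p b) with hF
  have key : Tendsto (fun b => ∫ u, F b u) atTop (𝓝 (∫ u : ℝ, Real.exp (-u ^ 2))) := by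
    apply tendsto_integral_filter_of_dominated_convergence g
    · -- measurability
      apply Eventually.of_forall
      intro b
      apply Measurable.aestronglyMeasurable
      apply Measurable.indicator ?_ measurableSet_Ioi
      exact (((measurable_id.div_const b).const_add 1).pow_const p).mul
        (((measurable_id.pow_const 2).div ((measurable_id.div_const b).const_add 1)).neg.exp)
    · -- bound
      filter_upwards [eventually_ge_atTop (max B 1)] with b hb
      apply Eventually.of_forall
      intro u
      have hb1 : (1:ℝ) ≤ b := le_trans (le_max_right _ _) hb
      have hbB : B ≤ b := le_trans (le_max_left _ _) hb
      have hb0 : (0:ℝ) < b := by linarith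
      rcases le_or_gt u (-b) with hub | hub
      · have : F b u = 0 := Set.indicator_of_notMem (by simpa using hub) _
        rw [this]
        simpa using hg0 u
      · have hFu : F b u = hfun p b u := Set.indicator_of_mem hub _
        have hfnn : 0 ≤ hfun p b u := by
          have := spos hb0 hub
          rw [hfun]
          positivity
        rw [hFu, Real.norm_eq_abs, abs_of_nonneg hfnn]
        rcases lt_or_ge u 0 with hu0 | hu0
        · have h1 := hneg b hb1 u hub hu0
          have h2 : 0 ≤ Set.indicator (Set.Ici 0) (fun u => P * Real.exp (-u)) u :=
            Set.indicator_nonneg (fun x _ => by positivity) u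
          simp only [hg]
          linarith
        · have h1 := pos_side p b hbB u hu0
          have h2 : Set.indicator (Set.Ici 0) (fun u => P * Real.exp (-u)) u
              = P * Real.exp (-u) := Set.indicator_of_mem hu0 _
          have h3 : 0 ≤ N * Real.exp (-u ^ 2) := by positivity
          simp only [hg, h2]
          rw [hP] at *
          linarith
    · -- integrability of bound
      apply Integrable.add
      · exact (by simpa using integrable_exp_neg_mul_sq one_pos : Integrable
          (fun u : ℝ => Real.exp (-u ^ 2))).const_mul N
      · have hI : IntegrableOn (fun u : ℝ => Real.exp (-u)) (Set.Ici 0) volume := by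
          rw [integrableOn_Ici_iff_integrableOn_Ioi]
          simpa using exp_neg_integrableOn_Ioi 0 one_pos
        exact IntegrableOn.integrable_indicator (hI.const_mul P) measurableSet_Ici
    · -- pointwise limit
      apply Eventually.of_forall
      intro u
      have h0 : Tendsto (fun b : ℝ => u / b) atTop (𝓝 0) :=
        Tendsto.div_atTop tendsto_const_nhds tendsto_id
      have hbase : Tendsto (fun b : ℝ => 1 + u / b) atTop (𝓝 1) := by
        simpa using tendsto_const_nhds.add h0
      have hr : Tendsto (fun b : ℝ => (1 + u / b) ^ p) atTop (𝓝 1) := by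
        have := (Real.continuousAt_rpow_const 1 p (Or.inl one_ne_zero)).tendsto.comp hbase
        simpa [Function.comp_def] using this
      have hd : Tendsto (fun b : ℝ => u ^ 2 / (1 + u / b)) atTop (𝓝 (u ^ 2)) := by
        have := Tendsto.div (tendsto_const_nhds : Tendsto (fun _ : ℝ => u ^ 2) atTop _)
          hbase one_ne_zero
        simpa [Pi.div_def] using this
      have he : Tendsto (fun b : ℝ => Real.exp (-(u ^ 2 / (1 + u / b)))) atTop
          (𝓝 (Real.exp (-u ^ 2))) := (Real.continuous_exp.tendsto _).comp hd.neg
      have h1 : Tendsto (fun b => hfun p b u) atTop (𝓝 (Real.exp (-u ^ 2))) := by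
        have := hr.mul he
        simpa [hfun] using this
      apply h1.congr'
      filter_upwards [eventually_gt_atTop |u|] with b hb
      have : -b < u := by
        have := neg_abs_le u
        linarith
      exact (Set.indicator_of_mem this _).symm
  have e1 : ∀ b : ℝ, ∫ u, F b u = ∫ u in Set.Ioi (-b), hfun p b u := fun b =>
    integral_indicator measurableSet_Ioi
  have e2 : ∫ u : ℝ, Real.exp (-u ^ 2) = Real.sqrt π := by simpa using integral_gaussian 1
  rw [← e2]
  exact key.congr (fun b => e1 b)

/-- Laplace-method asymptotics:
`∫₀^∞ s^p e^{−√(λC)(s+1/s)} ds ∼ √(π/√(λC)) e^{−2√(λC)}` as `λ → ∞`. -/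
theorem laplace_asymptotics
    (p C : ℝ) (hp : -1 < p) (hC : 0 < C) :
    Tendsto (fun lam : ℝ =>
        (∫ s in Set.Ioi (0:ℝ), s ^ p * Real.exp (-Real.sqrt (lam * C) * (s + 1 / s)))
          / (Real.sqrt (Real.pi / Real.sqrt (lam * C))
              * Real.exp (-2 * Real.sqrt (lam * C))))
      atTop (nhds 1) := by
  set bf : ℝ → ℝ := fun lam => Real.sqrt (Real.sqrt (lam * C)) with hbf
  have hsqrt : Tendsto Real.sqrt atTop atTop := by
    rw [show Real.sqrt = fun x : ℝ => x ^ (1/2 : ℝ) from funext Real.sqrt_eq_rpow]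
    exact tendsto_rpow_atTop (by norm_num)
  have htend : Tendsto bf atTop atTop :=
    hsqrt.comp (hsqrt.comp (Tendsto.atTop_mul_const hC tendsto_id))
  have hpi : Real.sqrt π ≠ 0 := (Real.sqrt_pos.mpr Real.pi_pos).ne'
  have main : Tendsto (fun b => (∫ u in Set.Ioi (-b), hfun p b u) / Real.sqrt π)
      atTop (𝓝 1) := by
    have := (J_tendsto p).div (tendsto_const_nhds : Tendsto (fun _ : ℝ => Real.sqrt π) atTop _) hpi
    simpa [div_self hpi, Pi.div_def] using this
  apply Tendsto.congr' ?_ (main.comp htend)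
  filter_upwards [eventually_gt_atTop 0] with lam hlam
  have haC : 0 < lam * C := mul_pos hlam hC
  have ha : 0 < Real.sqrt (lam * C) := Real.sqrt_pos.mpr haC
  have hb0 : 0 < bf lam := Real.sqrt_pos.mpr ha
  have hb2 : (bf lam) ^ 2 = Real.sqrt (lam * C) := Real.sq_sqrt (Real.sqrt_nonneg _)
  have hnum : (∫ s in Set.Ioi (0:ℝ), s ^ p * Real.exp (-Real.sqrt (lam * C) * (s + 1 / s)))
      = (bf lam)⁻¹ * Real.exp (-2 * (bf lam) ^ 2) * Jfun p (bf lam) := by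
    rw [← cov p (bf lam) hb0]
    apply setIntegral_congr_fun measurableSet_Ioi
    intro s _
    rw [hb2]
  have hden : Real.sqrt (Real.pi / Real.sqrt (lam * C))
      = Real.sqrt π / bf lam := Real.sqrt_div Real.pi_pos.le _
  simp only [Function.comp_apply]
  rw [hnum, hden, ← hb2]
  have hE : Real.exp (-2 * (bf lam) ^ 2) ≠ 0 := Real.exp_ne_zero _
  have hbne : bf lam ≠ 0 := hb0.ne'
  rw [show Jfun p (bf lam) = ∫ u in Set.Ioi (-(bf lam)), hfun p (bf lam) u from rfl]
  field_simp

end LaplaceAuxiliary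
end

section
/- Let τ be a positive random variable with P(τ ≤ t) ∼ A t^p as t → 0+ for some A > 0 and p > 0, and let σ be an independent exponential random variable with rate λ > 0. Then for any m > 0, E[τ^m | τ < σ] ∼ (Γ(m+p)/Γ(p)) · λ^{−m} as λ → ∞. -/
open MeasureTheory ProbabilityTheory Filter

section CMADsection
open MeasureTheory ProbabilityTheory Filter Set
open scoped ENNReal
namespace CMAD

lemma integrableOn_rpow_exp {s l : ℝ} (hs : -1 < s) (hl : 0 < l) :
    IntegrableOn (fun t : ℝ => t ^ s * Real.exp (-(l * t))) (Set.Ioi 0) := by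
  have h0 : IntegrableOn (fun x : ℝ => Real.exp (-x) * x ^ (s + 1 - 1)) (Set.Ioi 0) :=
    Real.GammaIntegral_convergent (by linarith)
  have h1 : IntegrableOn (fun x : ℝ => Real.exp (-(l * x)) * (l * x) ^ s) (Set.Ioi 0) := by
    have := (integrableOn_Ioi_comp_mul_left_iff
      (fun x : ℝ => Real.exp (-x) * x ^ s) 0 hl).2 (by simpa using h0)
    simpa using this
  have h2 : IntegrableOn (fun x : ℝ => l ^ s * (x ^ s * Real.exp (-(l * x)))) (Set.Ioi 0) := by
    refine h1.congr_fun ?_ measurableSet_Ioi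
    intro x hx
    simp only [Real.mul_rpow hl.le (le_of_lt hx)]
    ring
  have h3 := h2.const_mul (l ^ s)⁻¹
  refine h3.congr ?_
  refine Filter.Eventually.of_forall fun x => ?_
  field_simp

lemma hasDerivAt_aux {l s : ℝ} {t : ℝ} (ht : 0 < t) :
    HasDerivAt (fun t : ℝ => -(t ^ s * Real.exp (-(l * t))))
      ((l * t ^ s - s * t ^ (s - 1)) * Real.exp (-(l * t))) t := by
  have h1 : HasDerivAt (fun t : ℝ => t ^ s) (s * t ^ (s - 1)) t :=
    Real.hasDerivAt_rpow_const (Or.inl ht.ne')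
  have h2 : HasDerivAt (fun t : ℝ => Real.exp (-(l * t))) (-l * Real.exp (-(l * t))) t := by
    have := (((hasDerivAt_id t).const_mul l).neg).exp
    simpa [mul_comm] using this
  have : HasDerivAt (fun t : ℝ => -(t ^ s * Real.exp (-(l * t))))
      (-(s * t ^ (s - 1) * Real.exp (-(l * t)) + t ^ s * (-l * Real.exp (-(l * t))))) t :=
    (h1.mul h2).neg
  convert this using 1
  ring

lemma integral_deriv {l x s : ℝ} (hl : 0 < l) (hx : 0 < x) (hs : 0 ≤ s) :
    ∫ t in Set.Ioi x, (l * t ^ s - s * t ^ (s - 1)) * Real.exp (-(l * t))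
      = x ^ s * Real.exp (-(l * x)) := by
  have i1 : IntegrableOn (fun t : ℝ => t ^ s * Real.exp (-(l * t))) (Set.Ioi x) :=
    (integrableOn_rpow_exp (by linarith) hl).mono_set (Ioi_subset_Ioi hx.le)
  have hint : IntegrableOn (fun t : ℝ => (l * t ^ s - s * t ^ (s - 1)) * Real.exp (-(l * t)))
      (Set.Ioi x) := by
    rcases hs.eq_or_lt with h | h
    · refine (i1.const_mul l).congr (Filter.Eventually.of_forall fun t => ?_)
      rw [← h]; ring
    · have i2 : IntegrableOn (fun t : ℝ => t ^ (s - 1) * Real.exp (-(l * t))) (Set.Ioi x) :=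
        (integrableOn_rpow_exp (by linarith) hl).mono_set (Ioi_subset_Ioi hx.le)
      refine ((i1.const_mul l).sub (i2.const_mul s)).congr
        (Filter.Eventually.of_forall fun t => ?_)
      simp only [Pi.sub_apply]; ring
  have hcont : ContinuousWithinAt (fun t : ℝ => -(t ^ s * Real.exp (-(l * t)))) (Set.Ici x) x := by
    have c1 : ContinuousAt (fun t : ℝ => t ^ s) x :=
      Real.continuousAt_rpow_const x s (Or.inl hx.ne')
    have c2 : Continuous fun t : ℝ => Real.exp (-(l * t)) := by continuity
    exact ((c1.mul c2.continuousAt).neg).continuousWithinAt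
  have htend : Tendsto (fun t : ℝ => -(t ^ s * Real.exp (-(l * t)))) atTop (nhds 0) := by
    rw [← neg_zero]
    apply Tendsto.neg
    have := tendsto_rpow_mul_exp_neg_mul_atTop_nhds_zero s l hl
    simpa [neg_mul] using this
  have := integral_Ioi_of_hasDerivAt_of_tendsto hcont
    (fun t ht => hasDerivAt_aux (lt_trans hx ht)) hint htend
  rw [this]; ring

noncomputable def Fc (μ : Measure ℝ) (t : ℝ) : ℝ := (μ (Set.Iic t)).toReal

lemma Fc_measurable (μ : Measure ℝ) [IsFiniteMeasure μ] : Measurable (Fc μ) :=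
  Monotone.measurable (fun a b hab =>
    ENNReal.toReal_mono (measure_ne_top μ _) (measure_mono (Iic_subset_Iic.2 hab)))

lemma Fc_nonneg (μ : Measure ℝ) (t : ℝ) : 0 ≤ Fc μ t := ENNReal.toReal_nonneg

lemma Fc_le_one (μ : Measure ℝ) [IsProbabilityMeasure μ] (t : ℝ) : Fc μ t ≤ 1 := by
  have := prob_le_one (μ := μ) (s := Set.Iic t)
  simpa [Fc] using ENNReal.toReal_mono ENNReal.one_ne_top this

lemma tendsto_J (μ : Measure ℝ) [IsProbabilityMeasure μ] (A p : ℝ) (hA : 0 < A) (hp : 0 < p)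
    (halg : Tendsto (fun t : ℝ => Fc μ t / (A * t ^ p)) (nhdsWithin 0 (Set.Ioi 0)) (nhds 1))
    (s : ℝ) (hs : -1 < s) :
    Tendsto (fun l : ℝ =>
        l ^ (s + 1 + p) * ∫ t in Set.Ioi (0:ℝ), t ^ s * Real.exp (-(l * t)) * Fc μ t)
      atTop (nhds (A * Real.Gamma (s + 1 + p))) := by
  -- step 1: find δ
  obtain ⟨δ, hδ, hFδ⟩ : ∃ δ > (0:ℝ), ∀ t, 0 < t → t < δ → Fc μ t ≤ 2 * (A * t ^ p) := by
    have h2 : ∀ᶠ t in nhdsWithin 0 (Set.Ioi 0), Fc μ t / (A * t ^ p) < 2 :=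
      halg.eventually_lt_const one_lt_two
    rw [eventually_nhdsWithin_iff, Metric.eventually_nhds_iff] at h2
    obtain ⟨ε, hε, hball⟩ := h2
    refine ⟨ε, hε, fun t ht htε => ?_⟩
    have h3 : Fc μ t / (A * t ^ p) < 2 := by
      apply hball ?_ ht
      simpa [Real.dist_eq, abs_of_pos ht] using htε
    have hpos : 0 < A * t ^ p := mul_pos hA (Real.rpow_pos_of_pos ht p)
    calc Fc μ t = Fc μ t / (A * t ^ p) * (A * t ^ p) := by field_simp
    _ ≤ 2 * (A * t ^ p) := by nlinarith [Fc_nonneg μ t]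
  set C : ℝ := 2 * A + (δ⁻¹) ^ p with hC
  set Φ : ℝ → ℝ → ℝ := fun l u => u ^ s * Real.exp (-u) * (l ^ p * Fc μ (l⁻¹ * u)) with hΦ
  -- step 2: DCT
  have hdct : Tendsto (fun l : ℝ => ∫ u in Set.Ioi (0:ℝ), Φ l u)
      atTop (nhds (A * Real.Gamma (s + 1 + p))) := by
    have hlim_int : (∫ u in Set.Ioi (0:ℝ), u ^ s * Real.exp (-u) * (A * u ^ p))
        = A * Real.Gamma (s + 1 + p) := by
      rw [Real.Gamma_eq_integral (by linarith), ← integral_const_mul]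
      refine setIntegral_congr_fun measurableSet_Ioi fun u hu => ?_
      have hu : (0:ℝ) < u := hu
      have : s + 1 + p - 1 = s + p := by ring
      rw [this, Real.rpow_add hu]
      ring
    rw [← hlim_int]
    refine tendsto_integral_filter_of_dominated_convergence
      (fun u => u ^ s * Real.exp (-u) * (C * u ^ p)) ?_ ?_ ?_ ?_
    · refine Eventually.of_forall fun l => ?_
      apply Measurable.aestronglyMeasurable
      exact ((measurable_id'.pow_const s).mul (Real.measurable_exp.comp measurable_neg)).mul
        (measurable_const.mul ((Fc_measurable μ).comp (measurable_const_mul _)))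
    · filter_upwards [eventually_gt_atTop (0:ℝ)] with l hl
      filter_upwards [ae_restrict_mem measurableSet_Ioi] with u hu
      have hu : (0:ℝ) < u := hu
      have ht : 0 < l⁻¹ * u := mul_pos (inv_pos.2 hl) hu
      have hkey : l ^ p * Fc μ (l⁻¹ * u) ≤ C * u ^ p := by
        rcases lt_or_ge (l⁻¹ * u) δ with hcase | hcase
        · have h1 : Fc μ (l⁻¹ * u) ≤ 2 * (A * (l⁻¹ * u) ^ p) := hFδ _ ht hcase
          have h2 : l ^ p * (l⁻¹ * u) ^ p = u ^ p := by
            rw [← Real.mul_rpow hl.le (le_of_lt ht)]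
            congr 1
            field_simp
          have h3 : l ^ p * Fc μ (l⁻¹ * u) ≤ 2 * A * u ^ p := by
            have := mul_le_mul_of_nonneg_left h1 (Real.rpow_nonneg hl.le p)
            calc l ^ p * Fc μ (l⁻¹ * u) ≤ l ^ p * (2 * (A * (l⁻¹ * u) ^ p)) := this
            _ = 2 * A * (l ^ p * (l⁻¹ * u) ^ p) := by ring
            _ = 2 * A * u ^ p := by rw [h2]
          calc l ^ p * Fc μ (l⁻¹ * u) ≤ 2 * A * u ^ p := h3
          _ ≤ C * u ^ p := by
            have h0 : (0:ℝ) ≤ (δ⁻¹) ^ p := Real.rpow_nonneg (by positivity) p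
            have hup : (0:ℝ) ≤ u ^ p := Real.rpow_nonneg hu.le p
            have := mul_nonneg h0 hup
            rw [hC]
            nlinarith
        · have hlu : l ≤ δ⁻¹ * u := by
            have h4 : l * δ ≤ u := by
              have h5 := mul_le_mul_of_nonneg_left hcase hl.le
              have h4' : l * (l⁻¹ * u) = u := by field_simp
              linarith
            rw [inv_mul_eq_div]
            exact (le_div_iff₀ hδ).2 h4
          have h5 : l ^ p ≤ (δ⁻¹ * u) ^ p := Real.rpow_le_rpow hl.le hlu hp.le
          have h6 : (δ⁻¹ * u) ^ p = δ⁻¹ ^ p * u ^ p := Real.mul_rpow (by positivity) hu.le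
          have h7 : Fc μ (l⁻¹ * u) ≤ 1 := Fc_le_one μ _
          have h8 : 0 ≤ Fc μ (l⁻¹ * u) := Fc_nonneg μ _
          have hup : (0:ℝ) ≤ u ^ p := Real.rpow_nonneg hu.le p
          have h9 : l ^ p * Fc μ (l⁻¹ * u) ≤ δ⁻¹ ^ p * u ^ p := by
            calc l ^ p * Fc μ (l⁻¹ * u) ≤ l ^ p * 1 :=
              mul_le_mul_of_nonneg_left h7 (Real.rpow_nonneg hl.le p)
            _ = l ^ p := mul_one _
            _ ≤ δ⁻¹ ^ p * u ^ p := by rw [← h6]; exact h5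
          have : (0:ℝ) ≤ 2 * A * u ^ p := by positivity
          nlinarith
      have hΦnn : 0 ≤ Φ l u := by
        apply mul_nonneg (mul_nonneg (Real.rpow_nonneg hu.le s) (Real.exp_pos _).le)
        exact mul_nonneg (Real.rpow_nonneg hl.le p) (Fc_nonneg μ _)
      rw [Real.norm_eq_abs, abs_of_nonneg hΦnn]
      have hnn2 : (0:ℝ) ≤ u ^ s * Real.exp (-u) :=
        mul_nonneg (Real.rpow_nonneg hu.le s) (Real.exp_pos _).le
      exact mul_le_mul_of_nonneg_left hkey hnn2
    · -- bound integrable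
      have : IntegrableOn (fun u : ℝ => C * (u ^ (s + p) * Real.exp (-(1 * u))))
          (Set.Ioi 0) := (integrableOn_rpow_exp (by linarith) one_pos).const_mul C
      refine this.congr_fun (fun u hu => ?_) measurableSet_Ioi
      have hu : (0:ℝ) < u := hu
      beta_reduce
      rw [Real.rpow_add hu]
      simp [mul_comm, mul_assoc, mul_left_comm]
    · -- pointwise limit
      filter_upwards [ae_restrict_mem measurableSet_Ioi] with u hu
      have hu : (0:ℝ) < u := hu
      have htend : Tendsto (fun l : ℝ => l⁻¹ * u) atTop (nhdsWithin 0 (Set.Ioi 0)) := by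
        rw [tendsto_nhdsWithin_iff]
        constructor
        · simpa using tendsto_inv_atTop_zero.mul_const u
        · filter_upwards [eventually_gt_atTop (0:ℝ)] with l hl
          exact mul_pos (inv_pos.2 hl) hu
      have h10 : Tendsto (fun l : ℝ => Fc μ (l⁻¹ * u) / (A * (l⁻¹ * u) ^ p)
            * (u ^ s * Real.exp (-u) * (A * u ^ p)))
          atTop (nhds (u ^ s * Real.exp (-u) * (A * u ^ p))) := by
        have := (halg.comp htend).mul_const (u ^ s * Real.exp (-u) * (A * u ^ p))
        simpa using this
      refine Tendsto.congr' ?_ h10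
      filter_upwards [eventually_gt_atTop (0:ℝ)] with l hl
      have ht : 0 < l⁻¹ * u := mul_pos (inv_pos.2 hl) hu
      have hAt : 0 < A * (l⁻¹ * u) ^ p := mul_pos hA (Real.rpow_pos_of_pos ht p)
      have h2 : l ^ p * (l⁻¹ * u) ^ p = u ^ p := by
        rw [← Real.mul_rpow hl.le (le_of_lt ht)]
        congr 1
        field_simp
      simp only [hΦ]
      rw [div_mul_eq_mul_div, div_eq_iff hAt.ne', ← h2]
      ring
  -- step 3: eventual equality
  refine Tendsto.congr' ?_ hdct
  filter_upwards [eventually_gt_atTop (0:ℝ)] with l hl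
  have hsub := integral_comp_mul_left_Ioi
    (fun t : ℝ => t ^ s * Real.exp (-(l * t)) * Fc μ t) 0 (inv_pos.2 hl)
  simp only [mul_zero, smul_eq_mul, inv_inv] at hsub
  set I : ℝ := ∫ u in Set.Ioi (0:ℝ), u ^ s * Real.exp (-u) * Fc μ (l⁻¹ * u) with hI
  have hGcongr : (∫ u in Set.Ioi (0:ℝ),
        (l⁻¹ * u) ^ s * Real.exp (-(l * (l⁻¹ * u))) * Fc μ (l⁻¹ * u))
      = (l ^ s)⁻¹ * I := by
    rw [hI, ← integral_const_mul]
    refine setIntegral_congr_fun measurableSet_Ioi fun u hu => ?_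
    have hu : (0:ℝ) < u := hu
    have h1 : l * (l⁻¹ * u) = u := by field_simp
    rw [h1, Real.mul_rpow (inv_nonneg.2 hl.le) hu.le, Real.inv_rpow hl.le]
    ring
  have hPint : (∫ u in Set.Ioi (0:ℝ), Φ l u) = l ^ p * I := by
    rw [hI, ← integral_const_mul]
    refine setIntegral_congr_fun measurableSet_Ioi fun u hu => ?_
    simp only [hΦ]
    ring
  have hJ : (∫ t in Set.Ioi (0:ℝ), t ^ s * Real.exp (-(l * t)) * Fc μ t)
      = l⁻¹ * ((l ^ s)⁻¹ * I) := by
    rw [← hGcongr, hsub]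
    field_simp
  rw [hJ, hPint]
  have hls : (l:ℝ) ^ s ≠ 0 := (Real.rpow_pos_of_pos hl s).ne'
  have hexp : l ^ (s + 1 + p) = l ^ s * l * l ^ p := by
    rw [Real.rpow_add hl, Real.rpow_add hl, Real.rpow_one]
  rw [hexp]
  field_simp


lemma lintegral_swap_rep (μ : Measure ℝ) [IsFiniteMeasure μ] (hμ0 : μ (Set.Iic 0) = 0)
    (g : ℝ → ℝ) (hg : Measurable g) :
    ∫⁻ x, (∫⁻ t in Set.Ici x, ENNReal.ofReal (g t)) ∂μ
      = ∫⁻ t in Set.Ioi 0, ENNReal.ofReal (g t) * μ (Set.Iic t) := by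
  have hae : ∀ᵐ x ∂μ, 0 < x := by
    rw [ae_iff]
    convert hμ0 using 2
    ext x; simp [not_lt]
  set f : ℝ → ℝ → ℝ≥0∞ := fun x t =>
    Set.indicator {p : ℝ × ℝ | p.1 ≤ p.2} (fun p => ENNReal.ofReal (g p.2)) (x, t) with hf
  have hfmeas : Measurable (Function.uncurry f) := by
    apply Measurable.indicator
    · exact (hg.comp measurable_snd).ennreal_ofReal
    · exact measurableSet_le measurable_fst measurable_snd
  have step1 : ∫⁻ x, (∫⁻ t in Set.Ici x, ENNReal.ofReal (g t)) ∂μ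
      = ∫⁻ x, (∫⁻ t in Set.Ioi 0, f x t) ∂μ := by
    refine lintegral_congr_ae (hae.mono fun x hx => ?_)
    show (∫⁻ t in Set.Ici x, ENNReal.ofReal (g t)) = ∫⁻ t in Set.Ioi 0, f x t
    have h1 : ∀ t, f x t = (Set.Ici x).indicator (fun t => ENNReal.ofReal (g t)) t := by
      intro t
      by_cases h : x ≤ t <;>
        simp [hf, Set.indicator, h, Set.mem_Ici, Set.mem_setOf_eq]
    have h2 : ∫⁻ t in Set.Ioi 0, (Set.Ici x).indicator (fun t => ENNReal.ofReal (g t)) t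
        = ∫⁻ t in Set.Ici x, ENNReal.ofReal (g t) := by
      have hss : Set.Ici x ∩ Set.Ioi 0 = Set.Ici x :=
        Set.inter_eq_left.2 (fun t ht => lt_of_lt_of_le hx ht)
      rw [lintegral_indicator measurableSet_Ici, Measure.restrict_restrict measurableSet_Ici,
        hss]
    rw [← h2]
    exact lintegral_congr fun t => (h1 t).symm
  have step2 : ∫⁻ x, (∫⁻ t in Set.Ioi 0, f x t) ∂μ
      = ∫⁻ t in Set.Ioi 0, (∫⁻ x, f x t ∂μ) := lintegral_lintegral_swap hfmeas.aemeasurable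
  have step3 : ∀ t : ℝ, (∫⁻ x, f x t ∂μ) = ENNReal.ofReal (g t) * μ (Set.Iic t) := by
    intro t
    have h1 : ∀ x, f x t = (Set.Iic t).indicator (fun _ => ENNReal.ofReal (g t)) x := by
      intro x
      by_cases h : x ≤ t <;>
        simp [hf, Set.indicator, h, Set.mem_Iic, Set.mem_setOf_eq]
    simp_rw [h1]
    exact lintegral_indicator_const measurableSet_Iic _
  rw [step1, step2]
  exact setLIntegral_congr_fun measurableSet_Ioi (fun t _ => step3 t)



lemma meas_aux {c s l : ℝ} : Measurable (fun t : ℝ => c * t ^ s * Real.exp (-(l * t))) :=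
  ((measurable_const.mul (measurable_id'.pow_const s)).mul
    (Real.measurable_exp.comp (measurable_const_mul l).neg))

lemma rep_eq (μ : Measure ℝ) [IsProbabilityMeasure μ] (hμ0 : μ (Set.Iic 0) = 0)
    {l s : ℝ} (hl : 0 < l) (hs : 0 ≤ s) :
    (∫⁻ x, ENNReal.ofReal (x ^ s * Real.exp (-(l * x))) ∂μ)
      + ∫⁻ t in Set.Ioi 0, ENNReal.ofReal (s * t ^ (s - 1) * Real.exp (-(l * t))) * μ (Set.Iic t)
      = ∫⁻ t in Set.Ioi 0, ENNReal.ofReal (l * t ^ s * Real.exp (-(l * t))) * μ (Set.Iic t) := by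
  set g₁ : ℝ → ℝ := fun t => l * t ^ s * Real.exp (-(l * t)) with hg₁
  set g₂ : ℝ → ℝ := fun t => s * t ^ (s - 1) * Real.exp (-(l * t)) with hg₂
  have hae : ∀ᵐ x ∂μ, 0 < x := by
    rw [ae_iff]
    convert hμ0 using 2
    ext x; simp [not_lt]
  -- pointwise identity
  have hψeq : ∀ x : ℝ, 0 < x →
      (∫⁻ t in Set.Ici x, ENNReal.ofReal (g₁ t))
        = ENNReal.ofReal (x ^ s * Real.exp (-(l * x)))
          + ∫⁻ t in Set.Ici x, ENNReal.ofReal (g₂ t) := by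
    intro x hx
    have hIoi : ∀ h : ℝ → ℝ≥0∞, (∫⁻ t in Set.Ici x, h t) = ∫⁻ t in Set.Ioi x, h t := by
      intro h
      rw [Measure.restrict_congr_set (Ioi_ae_eq_Ici (a := x)).symm]
    rw [hIoi (fun t => ENNReal.ofReal (g₁ t)), hIoi (fun t => ENNReal.ofReal (g₂ t))]
    have i1 : IntegrableOn (fun t : ℝ => t ^ s * Real.exp (-(l * t))) (Set.Ioi x) :=
      (integrableOn_rpow_exp (by linarith) hl).mono_set (Ioi_subset_Ioi hx.le)
    have ig₁ : IntegrableOn g₁ (Set.Ioi x) := by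
      refine (i1.const_mul l).congr (Filter.Eventually.of_forall fun t => ?_)
      simp [hg₁]; ring
    have ig₂ : IntegrableOn g₂ (Set.Ioi x) := by
      rcases hs.eq_or_lt with h | h
      · refine (integrable_zero _ _ _).congr (Filter.Eventually.of_forall fun t => ?_)
        simp [hg₂, ← h]
      · have i2 : IntegrableOn (fun t : ℝ => t ^ (s - 1) * Real.exp (-(l * t))) (Set.Ioi x) :=
          (integrableOn_rpow_exp (by linarith) hl).mono_set (Ioi_subset_Ioi hx.le)
        refine (i2.const_mul s).congr (Filter.Eventually.of_forall fun t => ?_)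
        simp [hg₂]; ring
    have nn₁ : 0 ≤ᵐ[volume.restrict (Set.Ioi x)] g₁ := by
      filter_upwards [ae_restrict_mem measurableSet_Ioi] with t ht
      have ht0 : (0:ℝ) < t := lt_trans hx ht
      have : (0:ℝ) ≤ t ^ s := Real.rpow_nonneg ht0.le s
      positivity
    have nn₂ : 0 ≤ᵐ[volume.restrict (Set.Ioi x)] g₂ := by
      filter_upwards [ae_restrict_mem measurableSet_Ioi] with t ht
      have ht0 : (0:ℝ) < t := lt_trans hx ht
      have : (0:ℝ) ≤ t ^ (s - 1) := Real.rpow_nonneg ht0.le _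
      positivity
    rw [← ofReal_integral_eq_lintegral_ofReal ig₁ nn₁,
      ← ofReal_integral_eq_lintegral_ofReal ig₂ nn₂]
    have key : ∫ t in Set.Ioi x, g₁ t = x ^ s * Real.exp (-(l * x)) + ∫ t in Set.Ioi x, g₂ t := by
      have hd := integral_deriv hl hx hs
      have hsub : ∫ t in Set.Ioi x, (g₁ t - g₂ t) = x ^ s * Real.exp (-(l * x)) := by
        rw [← hd]
        refine setIntegral_congr_fun measurableSet_Ioi fun t _ => ?_
        simp [hg₁, hg₂]; ring
      rw [integral_sub ig₁ ig₂] at hsub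
      linarith
    rw [key, ENNReal.ofReal_add ?_ ?_]
    · have : (0:ℝ) ≤ x ^ s := Real.rpow_nonneg hx.le s
      positivity
    · refine setIntegral_nonneg measurableSet_Ioi fun t ht => ?_
      have ht0 : (0:ℝ) < t := lt_trans hx ht
      have h2 : (0:ℝ) ≤ t ^ (s - 1) := Real.rpow_nonneg ht0.le _
      simp only [hg₂]
      positivity
  -- integrate over μ
  have lhs1 : (∫⁻ x, (∫⁻ t in Set.Ici x, ENNReal.ofReal (g₁ t)) ∂μ)
      = ∫⁻ t in Set.Ioi 0, ENNReal.ofReal (g₁ t) * μ (Set.Iic t) :=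
    lintegral_swap_rep μ hμ0 g₁ meas_aux
  have lhs2 : (∫⁻ x, (∫⁻ t in Set.Ici x, ENNReal.ofReal (g₂ t)) ∂μ)
      = ∫⁻ t in Set.Ioi 0, ENNReal.ofReal (g₂ t) * μ (Set.Iic t) :=
    lintegral_swap_rep μ hμ0 g₂ meas_aux
  have congr1 : (∫⁻ x, (∫⁻ t in Set.Ici x, ENNReal.ofReal (g₁ t)) ∂μ)
      = ∫⁻ x, (ENNReal.ofReal (x ^ s * Real.exp (-(l * x)))
          + ∫⁻ t in Set.Ici x, ENNReal.ofReal (g₂ t)) ∂μ :=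
    lintegral_congr_ae (hae.mono fun x hx => hψeq x hx)
  have hmeas1 : Measurable fun x : ℝ => ENNReal.ofReal (x ^ s * Real.exp (-(l * x))) := by
    have := meas_aux (c := (1:ℝ)) (s := s) (l := l)
    simp only [one_mul] at this
    exact this.ennreal_ofReal
  rw [← lhs1, congr1, lintegral_add_left hmeas1, lhs2]


lemma K_ne_top (μ : Measure ℝ) [IsProbabilityMeasure μ] {c s l : ℝ} (hc : 0 ≤ c) (hl : 0 < l)
    (hs : -1 < s) :
    (∫⁻ t in Set.Ioi 0, ENNReal.ofReal (c * t ^ s * Real.exp (-(l * t))) * μ (Set.Iic t)) ≠ ⊤ := by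
  have hb : (∫⁻ t in Set.Ioi 0, ENNReal.ofReal (c * t ^ s * Real.exp (-(l * t))) * μ (Set.Iic t))
      ≤ ∫⁻ t in Set.Ioi 0, ENNReal.ofReal (c * t ^ s * Real.exp (-(l * t))) := by
    refine lintegral_mono fun t => ?_
    calc ENNReal.ofReal (c * t ^ s * Real.exp (-(l * t))) * μ (Set.Iic t)
        ≤ ENNReal.ofReal (c * t ^ s * Real.exp (-(l * t))) * 1 :=
          mul_le_mul_right prob_le_one _
    _ = _ := mul_one _
  have hint : IntegrableOn (fun t : ℝ => c * t ^ s * Real.exp (-(l * t))) (Set.Ioi 0) := by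
    refine ((integrableOn_rpow_exp hs hl).const_mul c).congr
      (Filter.Eventually.of_forall fun t => ?_)
    ring
  have hnn : 0 ≤ᵐ[volume.restrict (Set.Ioi 0)]
      fun t : ℝ => c * t ^ s * Real.exp (-(l * t)) := by
    filter_upwards [ae_restrict_mem measurableSet_Ioi] with t ht
    have ht : (0:ℝ) < t := ht
    have h2 : (0:ℝ) ≤ t ^ s := Real.rpow_nonneg ht.le s
    positivity
  have hfin := (hasFiniteIntegral_iff_ofReal hnn).1 hint.hasFiniteIntegral
  exact (lt_of_le_of_lt hb hfin).ne

lemma K_toReal (μ : Measure ℝ) [IsProbabilityMeasure μ] {c s l : ℝ} (hc : 0 ≤ c) (hl : 0 < l)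
    (hs : -1 < s) :
    (∫⁻ t in Set.Ioi 0,
        ENNReal.ofReal (c * t ^ s * Real.exp (-(l * t))) * μ (Set.Iic t)).toReal
      = c * ∫ t in Set.Ioi (0:ℝ), t ^ s * Real.exp (-(l * t)) * Fc μ t := by
  have hcongr : (∫⁻ t in Set.Ioi 0,
        ENNReal.ofReal (c * t ^ s * Real.exp (-(l * t))) * μ (Set.Iic t))
      = ∫⁻ t in Set.Ioi 0, ENNReal.ofReal (c * t ^ s * Real.exp (-(l * t)) * Fc μ t) := by
    refine setLIntegral_congr_fun measurableSet_Ioi (fun t ht => ?_)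
    have ht : (0:ℝ) < t := ht
    have h2 : (0:ℝ) ≤ t ^ s := Real.rpow_nonneg ht.le s
    have h1 : μ (Set.Iic t) = ENNReal.ofReal (Fc μ t) :=
      (ENNReal.ofReal_toReal (measure_ne_top μ _)).symm
    rw [h1, ← ENNReal.ofReal_mul (by positivity)]
  have hnn : 0 ≤ᵐ[volume.restrict (Set.Ioi 0)]
      fun t : ℝ => c * t ^ s * Real.exp (-(l * t)) * Fc μ t := by
    filter_upwards [ae_restrict_mem measurableSet_Ioi] with t ht
    have ht : (0:ℝ) < t := ht
    have h2 : (0:ℝ) ≤ t ^ s := Real.rpow_nonneg ht.le s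
    have h3 : 0 ≤ Fc μ t := Fc_nonneg μ t
    positivity
  have heq : ∫ t in Set.Ioi (0:ℝ), c * t ^ s * Real.exp (-(l * t)) * Fc μ t
      = (∫⁻ t in Set.Ioi 0,
          ENNReal.ofReal (c * t ^ s * Real.exp (-(l * t)) * Fc μ t)).toReal :=
    integral_eq_lintegral_of_nonneg_ae hnn
      ((meas_aux.mul (Fc_measurable μ)).aestronglyMeasurable)
  rw [hcongr, ← heq, ← integral_const_mul]
  exact setIntegral_congr_fun measurableSet_Ioi fun t ht => by ring

lemma expMeasure_Ioi {l x : ℝ} (hl : 0 < l) (hx : 0 ≤ x) :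
    expMeasure l (Set.Ioi x) = ENNReal.ofReal (Real.exp (-(l * x))) := by
  have : IsProbabilityMeasure (expMeasure l) := isProbabilityMeasure_expMeasure hl
  have hIic : expMeasure l (Set.Iic x) = ENNReal.ofReal (1 - Real.exp (-(l * x))) := by
    rw [← ofReal_cdf]
    congr 1
    have := cdf_expMeasure_eq hl x
    rw [this, if_pos hx]
  have hcompl : Set.Ioi x = (Set.Iic x)ᶜ := by simp
  rw [hcompl, measure_compl measurableSet_Iic (measure_ne_top _ _), hIic]
  rw [measure_univ]
  have hle : Real.exp (-(l * x)) ≤ 1 := by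
    rw [Real.exp_le_one_iff]
    exact neg_nonpos.2 (by positivity)
  rw [← ENNReal.ofReal_one, ← ENNReal.ofReal_sub _ (sub_nonneg.2 hle)]
  congr 1
  ring_nf



variable {Ω : Type*} [MeasureSpace Ω] [IsProbabilityMeasure (ℙ : Measure Ω)]

lemma prob_event_eq {τ σ' : Ω → ℝ} (hτ : Measurable τ) (hσ' : Measurable σ') {l : ℝ}
    (hl : 0 < l) (hmap : Measure.map σ' ℙ = expMeasure l) (hind : IndepFun τ σ' ℙ)
    (hμ0 : (Measure.map τ ℙ) (Set.Iic 0) = 0) :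
    ℙ {ω | τ ω < σ' ω}
      = ∫⁻ x, ENNReal.ofReal (Real.exp (-(l * x))) ∂(Measure.map τ ℙ) := by
  have : IsProbabilityMeasure (expMeasure l) := isProbabilityMeasure_expMeasure hl
  have hS : MeasurableSet {p : ℝ × ℝ | p.1 < p.2} :=
    measurableSet_lt measurable_fst measurable_snd
  have hpair : Measure.map (fun ω => (τ ω, σ' ω)) ℙ
      = (Measure.map τ ℙ).prod (expMeasure l) := by
    rw [← hmap]
    exact (indepFun_iff_map_prod_eq_prod_map_map hτ.aemeasurable hσ'.aemeasurable).1 hind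
  have hEvent : {ω | τ ω < σ' ω} = (fun ω => (τ ω, σ' ω)) ⁻¹' {p : ℝ × ℝ | p.1 < p.2} := rfl
  have haeμ : ∀ᵐ x ∂(Measure.map τ ℙ), 0 < x := by
    rw [ae_iff]
    convert hμ0 using 2
    ext x; simp [not_lt]
  rw [hEvent, ← Measure.map_apply (hτ.prodMk hσ') hS, hpair, Measure.prod_apply hS]
  refine lintegral_congr_ae (haeμ.mono fun x hx => ?_)
  show expMeasure l (Prod.mk x ⁻¹' {p : ℝ × ℝ | p.1 < p.2})
    = ENNReal.ofReal (Real.exp (-(l * x)))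
  have h1 : Prod.mk x ⁻¹' {p : ℝ × ℝ | p.1 < p.2} = Set.Ioi x := by
    ext y; simp [Set.mem_setOf_eq]
  rw [h1, expMeasure_Ioi hl hx.le]

lemma lint_event_eq {τ σ' : Ω → ℝ} (hτ : Measurable τ) (hσ' : Measurable σ') {l m : ℝ}
    (hl : 0 < l) (hmap : Measure.map σ' ℙ = expMeasure l) (hind : IndepFun τ σ' ℙ)
    (hμ0 : (Measure.map τ ℙ) (Set.Iic 0) = 0) :
    ∫⁻ ω in {ω | τ ω < σ' ω}, ENNReal.ofReal (τ ω ^ m) ∂ℙ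
      = ∫⁻ x, ENNReal.ofReal (x ^ m * Real.exp (-(l * x))) ∂(Measure.map τ ℙ) := by
  have : IsProbabilityMeasure (expMeasure l) := isProbabilityMeasure_expMeasure hl
  have hS : MeasurableSet {p : ℝ × ℝ | p.1 < p.2} :=
    measurableSet_lt measurable_fst measurable_snd
  have hpair : Measure.map (fun ω => (τ ω, σ' ω)) ℙ
      = (Measure.map τ ℙ).prod (expMeasure l) := by
    rw [← hmap]
    exact (indepFun_iff_map_prod_eq_prod_map_map hτ.aemeasurable hσ'.aemeasurable).1 hind
  have haeμ : ∀ᵐ x ∂(Measure.map τ ℙ), 0 < x := by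
    rw [ae_iff]
    convert hμ0 using 2
    ext x; simp [not_lt]
  have hfm : Measurable fun p : ℝ × ℝ => ENNReal.ofReal (p.1 ^ m) :=
    (measurable_fst.pow_const m).ennreal_ofReal
  have step1 : ∫⁻ ω in {ω | τ ω < σ' ω}, ENNReal.ofReal (τ ω ^ m) ∂ℙ
      = ∫⁻ p in {p : ℝ × ℝ | p.1 < p.2}, ENNReal.ofReal (p.1 ^ m)
          ∂((Measure.map τ ℙ).prod (expMeasure l)) := by
    rw [← hpair, setLIntegral_map hS hfm (hτ.prodMk hσ')]
    rfl
  rw [step1, ← lintegral_indicator hS,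
    lintegral_prod _ ((hfm.indicator hS).aemeasurable)]
  refine lintegral_congr_ae (haeμ.mono fun x hx => ?_)
  show (∫⁻ y, Set.indicator {p : ℝ × ℝ | p.1 < p.2}
      (fun p : ℝ × ℝ => ENNReal.ofReal (p.1 ^ m)) (x, y) ∂(expMeasure l))
    = ENNReal.ofReal (x ^ m * Real.exp (-(l * x)))
  have h1 : ∀ y : ℝ, Set.indicator {p : ℝ × ℝ | p.1 < p.2}
      (fun p : ℝ × ℝ => ENNReal.ofReal (p.1 ^ m)) (x, y)
      = Set.indicator (Set.Ioi x) (fun _ : ℝ => ENNReal.ofReal (x ^ m)) y := by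
    intro y
    by_cases h : x < y <;> simp [Set.indicator, h, Set.mem_setOf_eq]
  calc ∫⁻ y, Set.indicator {p : ℝ × ℝ | p.1 < p.2}
        (fun p : ℝ × ℝ => ENNReal.ofReal (p.1 ^ m)) (x, y) ∂(expMeasure l)
      = ∫⁻ y, Set.indicator (Set.Ioi x) (fun _ : ℝ => ENNReal.ofReal (x ^ m)) y
          ∂(expMeasure l) := lintegral_congr fun y => h1 y
    _ = ENNReal.ofReal (x ^ m) * expMeasure l (Set.Ioi x) :=
        lintegral_indicator_const measurableSet_Ioi _
    _ = ENNReal.ofReal (x ^ m * Real.exp (-(l * x))) := by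
        rw [expMeasure_Ioi hl hx.le,
          ← ENNReal.ofReal_mul (Real.rpow_nonneg hx.le m)]


end CMAD
end CMADsection

/-- If `P(τ ≤ t) ∼ A t^p` as `t → 0+` and `σ` is an independent exponential
inactivation time with rate `λ`, then `E[τ^m | τ < σ] ∼ (Γ(m+p)/Γ(p)) λ^{−m}`
as `λ → ∞`. -/
theorem conditional_moment_algebraic_decay
    (Ω : Type*) [MeasureSpace Ω] [IsProbabilityMeasure (ℙ : Measure Ω)]
    (τ : Ω → ℝ) (hτ : Measurable τ) (hτpos : ∀ᵐ ω ∂ℙ, 0 < τ ω)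
    (A p : ℝ) (hA : 0 < A) (hp : 0 < p)
    (halg : Tendsto (fun t : ℝ => (ℙ {ω | τ ω ≤ t}).toReal / (A * t ^ p))
      (nhdsWithin 0 (Set.Ioi 0)) (nhds 1))
    (σ : ℝ → Ω → ℝ) (hσm : ∀ l, Measurable (σ l))
    (hσ : ∀ l, 0 < l → Measure.map (σ l) ℙ = expMeasure l)
    (hind : ∀ l, 0 < l → IndepFun τ (σ l) ℙ)
    (m : ℝ) (hm : 0 < m) :
    Tendsto (fun l : ℝ =>
        ((∫ ω in {ω | τ ω < σ l ω}, τ ω ^ m) / (ℙ {ω | τ ω < σ l ω}).toReal)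
          / (Real.Gamma (m + p) / Real.Gamma p * l ^ (-m)))
      atTop (nhds 1) := by
  classical
  set μ : Measure ℝ := Measure.map τ ℙ with hμdef
  haveI : IsProbabilityMeasure μ := Measure.isProbabilityMeasure_map hτ.aemeasurable
  have hμ0 : μ (Set.Iic 0) = 0 := by
    rw [hμdef, Measure.map_apply hτ measurableSet_Iic]
    have h1 := hτpos
    rw [ae_iff] at h1
    rw [show τ ⁻¹' Set.Iic 0 = {ω | ¬ 0 < τ ω} from by ext ω; simp [not_lt]]
    exact h1
  have halg' : Tendsto (fun t : ℝ => CMAD.Fc μ t / (A * t ^ p))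
      (nhdsWithin 0 (Set.Ioi 0)) (nhds 1) := by
    have hfun : (fun t : ℝ => CMAD.Fc μ t / (A * t ^ p))
        = fun t : ℝ => (ℙ {ω | τ ω ≤ t}).toReal / (A * t ^ p) := by
      funext t
      rw [CMAD.Fc, hμdef, Measure.map_apply hτ measurableSet_Iic]
      rfl
    rw [hfun]; exact halg
  have deq : ∀ l : ℝ, 0 < l → (ℙ {ω | τ ω < σ l ω}).toReal
      = l * ∫ t in Set.Ioi (0:ℝ), t ^ (0:ℝ) * Real.exp (-(l * t)) * CMAD.Fc μ t := by
    intro l hl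
    have h1 := CMAD.prob_event_eq hτ (hσm l) hl (hσ l hl) (hind l hl) hμ0
    have h2 := CMAD.rep_eq μ hμ0 hl (le_refl (0:ℝ))
    have hzero : (∫⁻ t in Set.Ioi 0,
        ENNReal.ofReal ((0:ℝ) * t ^ ((0:ℝ) - 1) * Real.exp (-(l * t))) * μ (Set.Iic t)) = 0 := by
      simp [zero_mul]
    rw [hzero, add_zero] at h2
    have hone : (∫⁻ x, ENNReal.ofReal (x ^ (0:ℝ) * Real.exp (-(l * x))) ∂μ)
        = ∫⁻ x, ENNReal.ofReal (Real.exp (-(l * x))) ∂μ := by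
      refine lintegral_congr fun x => ?_
      rw [Real.rpow_zero, one_mul]
    rw [hone] at h2
    rw [h1, ← hμdef, h2]
    exact CMAD.K_toReal μ hl.le hl (by norm_num)
  have neq : ∀ l : ℝ, 0 < l → (∫ ω in {ω | τ ω < σ l ω}, τ ω ^ m)
      = l * (∫ t in Set.Ioi (0:ℝ), t ^ m * Real.exp (-(l * t)) * CMAD.Fc μ t)
        - m * ∫ t in Set.Ioi (0:ℝ), t ^ (m - 1) * Real.exp (-(l * t)) * CMAD.Fc μ t := by
    intro l hl
    have h1 := CMAD.lint_event_eq (m := m) hτ (hσm l) hl (hσ l hl) (hind l hl) hμ0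
    have h2 := CMAD.rep_eq μ hμ0 hl hm.le
    have hK1 := CMAD.K_ne_top μ (c := l) (s := m) hl.le hl (by linarith)
    have hK2 := CMAD.K_ne_top μ (c := m) (s := m - 1) hm.le hl (by linarith)
    have hNfin : (∫⁻ x, ENNReal.ofReal (x ^ m * Real.exp (-(l * x))) ∂μ) ≠ ⊤ := by
      refine ne_top_of_le_ne_top hK1 ?_
      calc (∫⁻ x, ENNReal.ofReal (x ^ m * Real.exp (-(l * x))) ∂μ)
          ≤ (∫⁻ x, ENNReal.ofReal (x ^ m * Real.exp (-(l * x))) ∂μ)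
            + ∫⁻ t in Set.Ioi 0,
              ENNReal.ofReal (m * t ^ (m - 1) * Real.exp (-(l * t))) * μ (Set.Iic t) :=
            le_add_right (le_refl _)
      _ = _ := h2
    have hb : (∫ ω in {ω | τ ω < σ l ω}, τ ω ^ m)
        = (∫⁻ ω in {ω | τ ω < σ l ω}, ENNReal.ofReal (τ ω ^ m) ∂ℙ).toReal := by
      rw [integral_eq_lintegral_of_nonneg_ae
        (ae_restrict_of_ae (hτpos.mono fun ω h => Real.rpow_nonneg h.le m))
        ((hτ.pow_const m).aestronglyMeasurable.restrict)]
    have htr : (∫⁻ x, ENNReal.ofReal (x ^ m * Real.exp (-(l * x))) ∂μ).toReal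
        = (∫⁻ t in Set.Ioi 0,
            ENNReal.ofReal (l * t ^ m * Real.exp (-(l * t))) * μ (Set.Iic t)).toReal
          - (∫⁻ t in Set.Ioi 0,
            ENNReal.ofReal (m * t ^ (m - 1) * Real.exp (-(l * t))) * μ (Set.Iic t)).toReal := by
      have := congrArg ENNReal.toReal h2
      rw [ENNReal.toReal_add hNfin hK2] at this
      linarith
    rw [hb, h1, ← hμdef, htr, CMAD.K_toReal μ hl.le hl (by linarith),
      CMAD.K_toReal μ hm.le hl (by linarith)]
  -- limits
  have hΓmp : (0:ℝ) < Real.Gamma (m + p) := Real.Gamma_pos_of_pos (by linarith)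
  have hΓp : (0:ℝ) < Real.Gamma p := Real.Gamma_pos_of_pos hp
  have hDlim : Tendsto (fun l : ℝ => l ^ p * (ℙ {ω | τ ω < σ l ω}).toReal)
      atTop (nhds (A * p * Real.Gamma p)) := by
    have h1 := CMAD.tendsto_J μ A p hA hp halg' 0 (by norm_num)
    have hval : A * Real.Gamma (0 + 1 + p) = A * p * Real.Gamma p := by
      rw [show (0:ℝ) + 1 + p = p + 1 by ring, Real.Gamma_add_one hp.ne']
      ring
    rw [hval] at h1
    refine Tendsto.congr' ?_ h1
    filter_upwards [eventually_gt_atTop (0:ℝ)] with l hl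
    rw [deq l hl, show (0:ℝ) + 1 + p = 1 + p by ring, Real.rpow_add hl, Real.rpow_one]
    ring
  have hNlim : Tendsto (fun l : ℝ => l ^ (m + p) * ∫ ω in {ω | τ ω < σ l ω}, τ ω ^ m)
      atTop (nhds (A * p * Real.Gamma (m + p))) := by
    have h1 := CMAD.tendsto_J μ A p hA hp halg' m (by linarith)
    have h2 := CMAD.tendsto_J μ A p hA hp halg' (m - 1) (by linarith)
    rw [show m - 1 + 1 + p = m + p by ring] at h2
    have h3 := h1.sub (h2.const_mul m)
    have hval : A * Real.Gamma (m + 1 + p) - m * (A * Real.Gamma (m + p))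
        = A * p * Real.Gamma (m + p) := by
      rw [show m + 1 + p = (m + p) + 1 by ring, Real.Gamma_add_one (by positivity)]
      ring
    rw [hval] at h3
    refine Tendsto.congr' ?_ h3
    filter_upwards [eventually_gt_atTop (0:ℝ)] with l hl
    rw [neq l hl, show m + 1 + p = (m + p) + 1 by ring, Real.rpow_add hl, Real.rpow_one]
    ring
  have hc1 : A * p * Real.Gamma (m + p) ≠ 0 := by positivity
  have hc2 : A * p * Real.Gamma p ≠ 0 := by positivity
  have hn1 : Tendsto (fun l : ℝ =>
      l ^ (m + p) * (∫ ω in {ω | τ ω < σ l ω}, τ ω ^ m) / (A * p * Real.Gamma (m + p)))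
      atTop (nhds 1) := by
    have := hNlim.div_const (A * p * Real.Gamma (m + p))
    rwa [div_self hc1] at this
  have hd1 : Tendsto (fun l : ℝ =>
      l ^ p * (ℙ {ω | τ ω < σ l ω}).toReal / (A * p * Real.Gamma p))
      atTop (nhds 1) := by
    have := hDlim.div_const (A * p * Real.Gamma p)
    rwa [div_self hc2] at this
  have hX := hn1.div hd1 one_ne_zero
  rw [div_one] at hX
  refine Tendsto.congr' ?_ hX
  filter_upwards [eventually_gt_atTop (0:ℝ)] with l hl
  have key : ∀ n d : ℝ,
      (l ^ (m + p) * n / (A * p * Real.Gamma (m + p)))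
        / (l ^ p * d / (A * p * Real.Gamma p))
      = (n / d) / (Real.Gamma (m + p) / Real.Gamma p * l ^ (-m)) := by
    intro n d
    rcases eq_or_ne d 0 with h0 | h0
    · simp [h0]
    · have hlm : l ^ m ≠ 0 := (Real.rpow_pos_of_pos hl m).ne'
      have hlp : l ^ p ≠ 0 := (Real.rpow_pos_of_pos hl p).ne'
      rw [Real.rpow_add hl, Real.rpow_neg hl.le]
      field_simp
  exact key _ _
end

section
/- For one-dimensional Brownian motion with diffusivity D started at L > 0 on the half-line with a perfectly absorbing target at 0, the FPT τ has distribution F(t) = erfc(L/√(4Dt)), and if σ is an independent exponential inactivation time with rate λ, then E[τ | τ < σ] = L/(2√(Dλ)) exactly, for every λ > 0. -/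
open MeasureTheory ProbabilityTheory Filter
open Real Set
open scoped ENNReal NNReal

/-- The complementary error function `erfc(z) = (2/√π) ∫_z^∞ e^{−u²} du`. -/
noncomputable def erfc (z : ℝ) : ℝ :=
  (2 / Real.sqrt Real.pi) * ∫ u in Set.Ioi z, Real.exp (-u ^ 2)

-- substitution u ↦ c/u on Ioi 0
lemma image_cdiv {c : ℝ} (hc : 0 < c) : (fun u : ℝ => c / u) '' Ioi 0 = Ioi 0 := by
  ext y
  constructor
  · rintro ⟨u, hu, rfl⟩
    exact div_pos hc hu
  · intro hy
    exact ⟨c / y, div_pos hc hy, by field_simp⟩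

lemma deriv_cdiv {c : ℝ} {u : ℝ} (hu : 0 < u) :
    HasDerivWithinAt (fun u : ℝ => c / u) (-(c / u ^ 2)) (Ioi 0) u := by
  have := (hasDerivAt_inv (ne_of_gt hu)).const_mul c
  simpa [div_eq_mul_inv, neg_div, mul_div_assoc] using this.hasDerivWithinAt

lemma injOn_cdiv {c : ℝ} (hc : 0 < c) : InjOn (fun u : ℝ => c / u) (Ioi 0) := by
  intro u hu v hv h
  simp only [mem_Ioi] at hu hv
  field_simp at h
  exact h.symm

lemma subst_cdiv {c : ℝ} (hc : 0 < c) (g : ℝ → ℝ) :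
    ∫ u in Ioi (0:ℝ), g u = ∫ u in Ioi (0:ℝ), (c / u ^ 2) * g (c / u) := by
  have h := integral_image_eq_integral_abs_deriv_smul measurableSet_Ioi
    (fun u hu => deriv_cdiv (c := c) hu) (injOn_cdiv hc) g
  rw [image_cdiv hc] at h
  rw [h]
  refine setIntegral_congr_fun measurableSet_Ioi (fun u hu => ?_)
  have hu' : (0:ℝ) < u := hu
  rw [abs_neg, abs_of_nonneg (by positivity : (0:ℝ) ≤ c / u ^ 2)]
  simp [smul_eq_mul]

lemma integrableOn_cdiv {c : ℝ} (hc : 0 < c) (g : ℝ → ℝ) :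
    IntegrableOn g (Ioi (0:ℝ)) ↔
      IntegrableOn (fun u => (c / u ^ 2) * g (c / u)) (Ioi (0:ℝ)) := by
  have h := integrableOn_image_iff_integrableOn_abs_deriv_smul measurableSet_Ioi
    (fun u hu => deriv_cdiv (c := c) hu) (injOn_cdiv hc) g
  rw [image_cdiv hc] at h
  rw [h]
  constructor <;> intro h' <;> refine h'.congr_fun (fun u hu => ?_) measurableSet_Ioi
  · have hu' : (0:ℝ) < u := hu
    beta_reduce
    rw [abs_neg, abs_of_nonneg (by positivity : (0:ℝ) ≤ c / u ^ 2)]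
    simp [smul_eq_mul]
  · have hu' : (0:ℝ) < u := hu
    rw [abs_neg, abs_of_nonneg (by positivity : (0:ℝ) ≤ c / u ^ 2)]
    simp [smul_eq_mul]

section Glasser
variable {b : ℝ} (hb : 0 < b)

lemma glasser_image (hb : 0 < b) : (fun u : ℝ => u - b / u) '' Ioi 0 = univ := by
  apply eq_univ_of_forall
  intro w
  set s := Real.sqrt (w ^ 2 + 4 * b) with hs
  have hs2 : s ^ 2 = w ^ 2 + 4 * b := Real.sq_sqrt (by positivity)
  have hsw : |w| < s := by
    have : |w| = Real.sqrt (w ^ 2) := (Real.sqrt_sq_eq_abs w).symm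
    rw [this, hs]
    exact Real.sqrt_lt_sqrt (by positivity) (by linarith)
  have hu : 0 < (w + s) / 2 := by
    have := neg_abs_le w
    linarith
  refine ⟨(w + s) / 2, hu, ?_⟩
  have hne2 : w + s ≠ 0 := by
    intro h; rw [h] at hu; simp at hu
  show (w + s) / 2 - b / ((w + s) / 2) = w
  field_simp
  nlinarith [hs2]

lemma glasser_deriv {u : ℝ} (hu : 0 < u) :
    HasDerivWithinAt (fun u : ℝ => u - b / u) (1 + b / u ^ 2) (Ioi 0) u := by
  have h1 : HasDerivAt (fun u : ℝ => u - b / u) (1 - -(b / u ^ 2)) u := by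
    have := (hasDerivAt_inv (ne_of_gt hu)).const_mul b
    have h2 : HasDerivAt (fun u : ℝ => b / u) (-(b / u ^ 2)) u := by
      simpa [div_eq_mul_inv, neg_div, mul_div_assoc] using this
    exact (hasDerivAt_id u).sub h2
  simpa [sub_neg_eq_add] using h1.hasDerivWithinAt

lemma glasser_inj (hb : 0 < b) : InjOn (fun u : ℝ => u - b / u) (Ioi 0) := by
  intro u hu v hv h
  simp only [mem_Ioi] at hu hv
  have h2 : (u - v) * (u * v + b) = 0 := by
    field_simp at h
    nlinarith [h]
  rcases mul_eq_zero.1 h2 with h3 | h3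
  · linarith
  · nlinarith [mul_pos hu hv]

/-- `exp (-(u-b/u)^2)` is integrable on `Ioi 0`. -/
lemma glasser_integrable1 (hb : 0 < b) : IntegrableOn (fun u : ℝ => Real.exp (-(u - b / u) ^ 2)) (Ioi 0) := by
  refine Integrable.mono' (g := fun u => Real.exp (2 * b) * Real.exp (-1 * u ^ 2)) ?_ ?_ ?_
  · exact (integrable_exp_neg_mul_sq one_pos).const_mul _ |>.restrict
  · refine (ContinuousOn.aestronglyMeasurable ?_ measurableSet_Ioi)
    have hc : ContinuousOn (fun u : ℝ => -(u - b / u) ^ 2) (Ioi 0) := by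
      refine ContinuousOn.neg (ContinuousOn.pow ?_ 2)
      exact (continuousOn_id).sub (continuousOn_const.div continuousOn_id
        (fun u hu => ne_of_gt hu))
    exact Real.continuous_exp.comp_continuousOn hc
  · refine ae_restrict_of_ae (ae_of_all _ fun u => ?_)
    simp only [Real.norm_eq_abs, abs_of_nonneg (Real.exp_pos _).le, ← Real.exp_add]
    apply Real.exp_le_exp.2
    by_cases hu : u = 0
    · subst hu
      norm_num
      nlinarith
    · have h1 : (u - b / u) ^ 2 = u ^ 2 - 2 * b + (b / u) ^ 2 := by
        field_simp
        ring
      nlinarith [sq_nonneg (b / u)]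

end Glasser

lemma glasser_integrable2 {b : ℝ} (hb : 0 < b) :
    IntegrableOn (fun u : ℝ => b / u ^ 2 * Real.exp (-(u - b / u) ^ 2)) (Ioi 0) := by
  have h := (integrableOn_cdiv hb (fun u => Real.exp (-(u - b / u) ^ 2))).1
    (glasser_integrable1 hb)
  refine h.congr_fun (fun u hu => ?_) measurableSet_Ioi
  have hu' : (0:ℝ) < u := hu
  have hbu : b / (b / u) = u := by field_simp
  have h1 : (b / u - b / (b / u)) ^ 2 = (u - b / u) ^ 2 := by rw [hbu]; ring
  simp only [h1]

lemma glasser_value {b : ℝ} (hb : 0 < b) :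
    ∫ u in Ioi (0:ℝ), Real.exp (-(u - b / u) ^ 2) = Real.sqrt π / 2 := by
  -- total integral over ℝ via image
  have himg := integral_image_eq_integral_abs_deriv_smul measurableSet_Ioi
    (fun u hu => glasser_deriv (b := b) hu) (glasser_inj hb)
    (fun w => Real.exp (-w ^ 2))
  rw [glasser_image hb] at himg
  have hgauss : ∫ w : ℝ, Real.exp (-w ^ 2) = Real.sqrt π := by
    have := integral_gaussian (1 : ℝ)
    simpa using this
  rw [Measure.restrict_univ] at himg
  have heq : ∀ u ∈ Ioi (0:ℝ),
      |1 + b / u ^ 2| • Real.exp (-(fun u : ℝ => u - b / u) u ^ 2)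
        = Real.exp (-(u - b / u) ^ 2) + b / u ^ 2 * Real.exp (-(u - b / u) ^ 2) := by
    intro u hu
    have hu' : (0:ℝ) < u := hu
    rw [abs_of_nonneg (by positivity), smul_eq_mul]
    ring
  rw [setIntegral_congr_fun measurableSet_Ioi heq] at himg
  rw [integral_add (glasser_integrable1 hb) (glasser_integrable2 hb)] at himg
  -- second piece equals first piece
  have hsub := subst_cdiv hb (fun u => Real.exp (-(u - b / u) ^ 2))
  have h2 : ∫ u in Ioi (0:ℝ), b / u ^ 2 * Real.exp (-(u - b / u) ^ 2)
      = ∫ u in Ioi (0:ℝ), Real.exp (-(u - b / u) ^ 2) := by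
    rw [hsub]
    refine setIntegral_congr_fun measurableSet_Ioi (fun u hu => ?_)
    have hu' : (0:ℝ) < u := hu
    have hbu : b / (b / u) = u := by field_simp
    have h1 : (b / u - b / (b / u)) ^ 2 = (u - b / u) ^ 2 := by rw [hbu]; ring
    simp only [h1]
  rw [h2, hgauss] at himg
  linarith

lemma J_value {b : ℝ} (hb : 0 < b) :
    ∫ u in Ioi (0:ℝ), Real.exp (-(u ^ 2 + b ^ 2 / u ^ 2))
      = Real.sqrt π / 2 * Real.exp (-(2 * b)) := by
  have heq : ∀ u ∈ Ioi (0:ℝ),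
      Real.exp (-(u ^ 2 + b ^ 2 / u ^ 2))
        = Real.exp (-(2 * b)) * Real.exp (-(u - b / u) ^ 2) := by
    intro u hu
    have hu' : (0:ℝ) < u := hu
    rw [← Real.exp_add]
    congr 1
    have : (u - b / u) ^ 2 = u ^ 2 - 2 * b + b ^ 2 / u ^ 2 := by
      field_simp
      ring
    rw [this]
    ring
  rw [setIntegral_congr_fun measurableSet_Ioi heq, integral_const_mul, glasser_value hb]
  ring

lemma K_value {b : ℝ} (hb : 0 < b) :
    ∫ u in Ioi (0:ℝ), (1 / u ^ 2) * Real.exp (-(u ^ 2 + b ^ 2 / u ^ 2))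
      = Real.sqrt π / 2 * Real.exp (-(2 * b)) / b := by
  have hsub := subst_cdiv hb (fun u => Real.exp (-(u ^ 2 + b ^ 2 / u ^ 2)))
  have h2 : ∀ u ∈ Ioi (0:ℝ),
      b / u ^ 2 * Real.exp (-((b / u) ^ 2 + b ^ 2 / (b / u) ^ 2))
        = b * ((1 / u ^ 2) * Real.exp (-(u ^ 2 + b ^ 2 / u ^ 2))) := by
    intro u hu
    have hu' : (0:ℝ) < u := hu
    have hb' : b ≠ 0 := ne_of_gt hb
    have h3 : b ^ 2 / (b / u) ^ 2 = u ^ 2 := by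
      rw [div_pow]
      field_simp
    have h4 : (b / u) ^ 2 = b ^ 2 / u ^ 2 := by rw [div_pow]
    rw [h3, h4]
    ring_nf
  rw [setIntegral_congr_fun measurableSet_Ioi h2, integral_const_mul] at hsub
  rw [J_value hb] at hsub
  field_simp at hsub ⊢
  linarith

section Subst2

lemma deriv_cdivsq {c u : ℝ} (hu : 0 < u) (s : Set ℝ) :
    HasDerivWithinAt (fun u : ℝ => c / u ^ 2) (-(2 * c / u ^ 3)) s u := by
  have h : HasDerivAt (fun u : ℝ => c / u ^ 2) (-(2 * c / u ^ 3)) u := by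
    have h1 : HasDerivAt (fun u : ℝ => u ^ 2) (2 * u) u := by
      simpa [mul_comm] using hasDerivAt_pow 2 u
    have h2 := (h1.inv (by positivity)).const_mul c
    rw [show -(2 * c / u ^ 3) = c * (-(2 * u) / (u ^ 2) ^ 2) by field_simp]
    exact h2
  exact h.hasDerivWithinAt

lemma injOn_cdivsq {c : ℝ} (hc : 0 < c) : InjOn (fun u : ℝ => c / u ^ 2) (Ioi 0) := by
  intro u hu v hv h
  simp only [mem_Ioi] at hu hv
  simp only at h
  field_simp at h
  exact ((sq_eq_sq₀ hv.le hu.le).1 h).symm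

lemma image_cdivsq {c : ℝ} (hc : 0 < c) : (fun u : ℝ => c / u ^ 2) '' Ioi 0 = Ioi 0 := by
  ext y
  constructor
  · rintro ⟨u, hu, rfl⟩
    have hu' : (0:ℝ) < u := hu
    exact div_pos hc (by positivity)
  · intro hy
    have hy' : (0:ℝ) < y := hy
    refine ⟨Real.sqrt (c / y), Real.sqrt_pos.2 (by positivity), ?_⟩
    simp only
    rw [Real.sq_sqrt (by positivity : (0:ℝ) ≤ c / y)]
    field_simp

lemma image_cdivsq_Ici {c r : ℝ} (hc : 0 < c) (hr : 0 < r) :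
    (fun u : ℝ => c / u ^ 2) '' Ici r = Ioc 0 (c / r ^ 2) := by
  ext y
  constructor
  · rintro ⟨u, hu, rfl⟩
    have hu' : (0:ℝ) < u := lt_of_lt_of_le hr hu
    constructor
    · exact div_pos hc (by positivity)
    · apply div_le_div_of_nonneg_left hc.le (by positivity)
      exact pow_le_pow_left₀ hr.le hu 2
  · rintro ⟨hy1, hy2⟩
    refine ⟨Real.sqrt (c / y), ?_, ?_⟩
    · rw [mem_Ici, show r = Real.sqrt (r ^ 2) from (Real.sqrt_sq hr.le).symm]
      apply Real.sqrt_le_sqrt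
      rw [le_div_iff₀ hy1]
      calc r ^ 2 * y ≤ r ^ 2 * (c / r ^ 2) := by
            exact mul_le_mul_of_nonneg_left hy2 (by positivity)
        _ = c := by field_simp
    · simp only
      rw [Real.sq_sqrt (by positivity : (0:ℝ) ≤ c / y)]
      field_simp

lemma subst_cdivsq {c : ℝ} (hc : 0 < c) (g : ℝ → ℝ) :
    ∫ t in Ioi (0:ℝ), g t = ∫ u in Ioi (0:ℝ), (2 * c / u ^ 3) * g (c / u ^ 2) := by
  have h := integral_image_eq_integral_abs_deriv_smul measurableSet_Ioi
    (fun u hu => deriv_cdivsq (c := c) hu _) (injOn_cdivsq hc) g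
  rw [image_cdivsq hc] at h
  rw [h]
  refine setIntegral_congr_fun measurableSet_Ioi (fun u hu => ?_)
  have hu' : (0:ℝ) < u := hu
  rw [abs_neg, abs_of_nonneg (by positivity : (0:ℝ) ≤ 2 * c / u ^ 3)]
  simp [smul_eq_mul]

lemma integrableOn_cdivsq {c : ℝ} (hc : 0 < c) (g : ℝ → ℝ) :
    IntegrableOn g (Ioi (0:ℝ)) ↔
      IntegrableOn (fun u => (2 * c / u ^ 3) * g (c / u ^ 2)) (Ioi (0:ℝ)) := by
  have h := integrableOn_image_iff_integrableOn_abs_deriv_smul measurableSet_Ioi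
    (fun u hu => deriv_cdivsq (c := c) hu _) (injOn_cdivsq hc) g
  rw [image_cdivsq hc] at h
  rw [h]
  constructor <;> intro h' <;> refine h'.congr_fun (fun u hu => ?_) measurableSet_Ioi <;>
    have hu' : (0:ℝ) < u := hu <;>
    beta_reduce <;>
    rw [abs_neg, abs_of_nonneg (by positivity : (0:ℝ) ≤ 2 * c / u ^ 3)] <;>
    simp [smul_eq_mul]

lemma subst_cdivsq_Ici {c r : ℝ} (hc : 0 < c) (hr : 0 < r) (g : ℝ → ℝ) :
    ∫ t in Ioc (0:ℝ) (c / r ^ 2), g t = ∫ u in Ici r, (2 * c / u ^ 3) * g (c / u ^ 2) := by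
  have h := integral_image_eq_integral_abs_deriv_smul measurableSet_Ici
    (fun u hu => deriv_cdivsq (c := c) (lt_of_lt_of_le hr hu) _)
    ((injOn_cdivsq hc).mono (fun u hu => lt_of_lt_of_le hr hu)) g
  rw [image_cdivsq_Ici hc hr] at h
  rw [h]
  refine setIntegral_congr_fun measurableSet_Ici (fun u hu => ?_)
  have hu' : (0:ℝ) < u := lt_of_lt_of_le hr hu
  rw [abs_neg, abs_of_nonneg (by positivity : (0:ℝ) ≤ 2 * c / u ^ 3)]
  simp [smul_eq_mul]

lemma integrableOn_cdivsq_Ici {c r : ℝ} (hc : 0 < c) (hr : 0 < r) (g : ℝ → ℝ) :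
    IntegrableOn g (Ioc (0:ℝ) (c / r ^ 2)) ↔
      IntegrableOn (fun u => (2 * c / u ^ 3) * g (c / u ^ 2)) (Ici r) := by
  have h := integrableOn_image_iff_integrableOn_abs_deriv_smul measurableSet_Ici
    (fun u hu => deriv_cdivsq (c := c) (lt_of_lt_of_le hr hu) _)
    ((injOn_cdivsq hc).mono (fun u hu => lt_of_lt_of_le hr hu)) g
  rw [image_cdivsq_Ici hc hr] at h
  rw [h]
  constructor <;> intro h' <;> refine h'.congr_fun (fun u hu => ?_) measurableSet_Ici <;>
    have hu' : (0:ℝ) < u := lt_of_lt_of_le hr hu <;>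
    beta_reduce <;>
    rw [abs_neg, abs_of_nonneg (by positivity : (0:ℝ) ≤ 2 * c / u ^ 3)] <;>
    simp [smul_eq_mul]

end Subst2


noncomputable def rho (a t : ℝ) : ℝ :=
  a / (Real.sqrt π * (t * Real.sqrt t)) * Real.exp (-(a ^ 2 / t))

lemma gaussInt : Integrable (fun u : ℝ => Real.exp (-u ^ 2)) := by
  simpa using integrable_exp_neg_mul_sq one_pos

lemma integrableOn_of_gauss_bound {s : Set ℝ} (hs : MeasurableSet s) (f : ℝ → ℝ) (C : ℝ)
    (hf : ContinuousOn f s) (hbd : ∀ u ∈ s, ‖f u‖ ≤ C * Real.exp (-u ^ 2)) :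
    IntegrableOn f s := by
  refine Integrable.mono' (g := fun u => C * Real.exp (-u ^ 2)) ?_
    (hf.aestronglyMeasurable hs) ?_
  · exact (gaussInt.const_mul C).restrict
  · exact (ae_restrict_iff' hs).2 (ae_of_all _ hbd)

lemma sqrt_pi_pos : (0:ℝ) < Real.sqrt π := Real.sqrt_pos.2 Real.pi_pos

lemma rho_subst_pointwise {a u : ℝ} (ha : 0 < a) (hu : 0 < u) :
    (2 * a ^ 2 / u ^ 3) * rho a (a ^ 2 / u ^ 2) = 2 / Real.sqrt π * Real.exp (-u ^ 2) := by
  have h1 : Real.sqrt (a ^ 2 / u ^ 2) = a / u := by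
    rw [show a ^ 2 / u ^ 2 = (a / u) ^ 2 by rw [div_pow],
      Real.sqrt_sq (by positivity : (0:ℝ) ≤ a / u)]
  have h2 : a ^ 2 / (a ^ 2 / u ^ 2) = u ^ 2 := by field_simp
  rw [rho, h2, h1]
  have : Real.exp (-u ^ 2) = Real.exp (-u ^ 2) := rfl
  field_simp

lemma rho_cdf {a t : ℝ} (ha : 0 < a) (ht : 0 < t) :
    ∫ s in Ioc (0:ℝ) t, rho a s = erfc (a / Real.sqrt t) := by
  set r := a / Real.sqrt t with hrdef
  have hr : 0 < r := div_pos ha (Real.sqrt_pos.2 ht)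
  have hct : a ^ 2 / r ^ 2 = t := by
    rw [hrdef, div_pow, Real.sq_sqrt ht.le]
    field_simp
  have hsub := subst_cdivsq_Ici (c := a ^ 2) (r := r) (by positivity) hr (rho a)
  rw [hct] at hsub
  rw [hsub]
  have heq : ∀ u ∈ Ici r, (2 * a ^ 2 / u ^ 3) * rho a (a ^ 2 / u ^ 2)
      = 2 / Real.sqrt π * Real.exp (-u ^ 2) :=
    fun u hu => rho_subst_pointwise ha (lt_of_lt_of_le hr hu)
  rw [setIntegral_congr_fun measurableSet_Ici heq, integral_const_mul,
    integral_Ici_eq_integral_Ioi, erfc]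

lemma rho_integrableOn_Ioc {a t : ℝ} (ha : 0 < a) (ht : 0 < t) :
    IntegrableOn (rho a) (Ioc (0:ℝ) t) := by
  set r := a / Real.sqrt t with hrdef
  have hr : 0 < r := div_pos ha (Real.sqrt_pos.2 ht)
  have hct : a ^ 2 / r ^ 2 = t := by
    rw [hrdef, div_pow, Real.sq_sqrt ht.le]
    field_simp
  rw [← hct]
  rw [integrableOn_cdivsq_Ici (by positivity) hr]
  refine integrableOn_of_gauss_bound measurableSet_Ici _ (2 / Real.sqrt π) ?_ ?_
  · refine ContinuousOn.congr (f := fun u => 2 / Real.sqrt π * Real.exp (-u ^ 2)) ?_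
      (fun u hu => (rho_subst_pointwise ha (lt_of_lt_of_le hr hu)))
    exact (continuousOn_const.mul ((Real.continuous_exp.comp (continuous_pow 2).neg).continuousOn))
  · intro u hu
    rw [rho_subst_pointwise ha (lt_of_lt_of_le hr hu), Real.norm_eq_abs,
      abs_of_nonneg (by positivity)]

lemma den_pointwise {a l u : ℝ} (ha : 0 < a) (hl : 0 < l) (hu : 0 < u) :
    (2 * a ^ 2 / u ^ 3) * (rho a (a ^ 2 / u ^ 2) * Real.exp (-(l * (a ^ 2 / u ^ 2))))
      = 2 / Real.sqrt π * Real.exp (-(u ^ 2 + (a * Real.sqrt l) ^ 2 / u ^ 2)) := by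
  have hb2 : (a * Real.sqrt l) ^ 2 = a ^ 2 * l := by
    rw [mul_pow, Real.sq_sqrt hl.le]
  rw [hb2, show -(u ^ 2 + a ^ 2 * l / u ^ 2) = -u ^ 2 + -(l * (a ^ 2 / u ^ 2)) by
    field_simp; ring, Real.exp_add]
  rw [show (2 * a ^ 2 / u ^ 3) * (rho a (a ^ 2 / u ^ 2) * Real.exp (-(l * (a ^ 2 / u ^ 2))))
      = ((2 * a ^ 2 / u ^ 3) * rho a (a ^ 2 / u ^ 2)) * Real.exp (-(l * (a ^ 2 / u ^ 2)))
      by ring, rho_subst_pointwise ha hu]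
  ring

lemma num_pointwise {a l u : ℝ} (ha : 0 < a) (hl : 0 < l) (hu : 0 < u) :
    (2 * a ^ 2 / u ^ 3) *
        ((a ^ 2 / u ^ 2) * (rho a (a ^ 2 / u ^ 2) * Real.exp (-(l * (a ^ 2 / u ^ 2)))))
      = (2 * a ^ 2 / Real.sqrt π) *
          ((1 / u ^ 2) * Real.exp (-(u ^ 2 + (a * Real.sqrt l) ^ 2 / u ^ 2))) := by
  have h := den_pointwise ha hl hu
  calc (2 * a ^ 2 / u ^ 3) *
        ((a ^ 2 / u ^ 2) * (rho a (a ^ 2 / u ^ 2) * Real.exp (-(l * (a ^ 2 / u ^ 2)))))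
      = (a ^ 2 / u ^ 2) * ((2 * a ^ 2 / u ^ 3) *
          (rho a (a ^ 2 / u ^ 2) * Real.exp (-(l * (a ^ 2 / u ^ 2))))) := by ring
    _ = (a ^ 2 / u ^ 2) *
          (2 / Real.sqrt π * Real.exp (-(u ^ 2 + (a * Real.sqrt l) ^ 2 / u ^ 2))) := by rw [h]
    _ = _ := by ring

lemma exp_G_bound {b u : ℝ} (hu : 0 < u) :
    Real.exp (-(u ^ 2 + b ^ 2 / u ^ 2)) ≤ Real.exp (-u ^ 2) := by
  apply Real.exp_le_exp.2
  have : 0 ≤ b ^ 2 / u ^ 2 := by positivity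
  linarith

lemma exp_G_bound2 {b u : ℝ} (hb : 0 < b) (hu : 0 < u) :
    (1 / u ^ 2) * Real.exp (-(u ^ 2 + b ^ 2 / u ^ 2)) ≤ (1 / b ^ 2) * Real.exp (-u ^ 2) := by
  set x := b ^ 2 / u ^ 2 with hx
  have hx0 : 0 < x := by positivity
  have h1 : x ≤ Real.exp x := by linarith [Real.add_one_le_exp x]
  have hxe : x * Real.exp (-x) ≤ 1 := by
    calc x * Real.exp (-x) ≤ Real.exp x * Real.exp (-x) :=
          mul_le_mul_of_nonneg_right h1 (Real.exp_pos _).le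
      _ = 1 := by rw [← Real.exp_add]; simp
  have h2 : (1:ℝ) / u ^ 2 = x / b ^ 2 := by
    rw [hx]; field_simp
  rw [h2, show -(u ^ 2 + x) = -u ^ 2 + -x by ring, Real.exp_add]
  calc x / b ^ 2 * (Real.exp (-u ^ 2) * Real.exp (-x))
      = (1 / b ^ 2) * Real.exp (-u ^ 2) * (x * Real.exp (-x)) := by ring
    _ ≤ (1 / b ^ 2) * Real.exp (-u ^ 2) * 1 := by
        apply mul_le_mul_of_nonneg_left hxe (by positivity)
    _ = (1 / b ^ 2) * Real.exp (-u ^ 2) := by ring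

lemma contOn_G {b : ℝ} : ContinuousOn (fun u : ℝ => Real.exp (-(u ^ 2 + b ^ 2 / u ^ 2))) (Ioi 0) := by
  apply Real.continuous_exp.comp_continuousOn
  apply ContinuousOn.neg
  exact (continuous_pow 2).continuousOn.add
    (continuousOn_const.div ((continuous_pow 2).continuousOn)
      (fun u hu => by have : (0:ℝ) < u := hu; positivity))

lemma den_integrand_int {b : ℝ} (hb : 0 < b) :
    IntegrableOn (fun u : ℝ => 2 / Real.sqrt π * Real.exp (-(u ^ 2 + b ^ 2 / u ^ 2))) (Ioi 0) := by
  refine integrableOn_of_gauss_bound measurableSet_Ioi _ (2 / Real.sqrt π)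
    (continuousOn_const.mul contOn_G) (fun u hu => ?_)
  rw [Real.norm_eq_abs, abs_of_nonneg (by positivity)]
  exact mul_le_mul_of_nonneg_left (exp_G_bound hu) (by positivity)

lemma num_integrand_int {a b : ℝ} (ha : 0 < a) (hb : 0 < b) :
    IntegrableOn (fun u : ℝ => (2 * a ^ 2 / Real.sqrt π) *
      ((1 / u ^ 2) * Real.exp (-(u ^ 2 + b ^ 2 / u ^ 2)))) (Ioi 0) := by
  refine integrableOn_of_gauss_bound measurableSet_Ioi _
    ((2 * a ^ 2 / Real.sqrt π) * (1 / b ^ 2)) ?_ (fun u hu => ?_)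
  · refine continuousOn_const.mul (ContinuousOn.mul ?_ contOn_G)
    exact continuousOn_const.div ((continuous_pow 2).continuousOn)
      (fun u hu => by have : (0:ℝ) < u := hu; positivity)
  · have hu : (0:ℝ) < u := hu
    rw [Real.norm_eq_abs, abs_of_nonneg (by positivity), mul_assoc]
    exact mul_le_mul_of_nonneg_left (exp_G_bound2 hb hu) (by positivity)

lemma den_eq {a l : ℝ} (ha : 0 < a) (hl : 0 < l) :
    ∫ t in Ioi (0:ℝ), rho a t * Real.exp (-(l * t))
      = Real.exp (-(2 * (a * Real.sqrt l))) := by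
  rw [subst_cdivsq (c := a ^ 2) (by positivity) (fun t => rho a t * Real.exp (-(l * t)))]
  rw [setIntegral_congr_fun measurableSet_Ioi (fun u hu => den_pointwise ha hl hu),
    integral_const_mul, J_value (b := a * Real.sqrt l) (by positivity)]
  have h : Real.sqrt π ≠ 0 := ne_of_gt sqrt_pi_pos
  field_simp

lemma den_int {a l : ℝ} (ha : 0 < a) (hl : 0 < l) :
    IntegrableOn (fun t => rho a t * Real.exp (-(l * t))) (Ioi (0:ℝ)) := by
  rw [integrableOn_cdivsq (c := a ^ 2) (by positivity)]
  refine ((den_integrand_int (b := a * Real.sqrt l) (by positivity)).congr_fun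
    (fun u hu => ?_) measurableSet_Ioi)
  exact (den_pointwise ha hl hu).symm

lemma num_eq {a l : ℝ} (ha : 0 < a) (hl : 0 < l) :
    ∫ t in Ioi (0:ℝ), t * (rho a t * Real.exp (-(l * t)))
      = a / Real.sqrt l * Real.exp (-(2 * (a * Real.sqrt l))) := by
  rw [subst_cdivsq (c := a ^ 2) (by positivity)
    (fun t => t * (rho a t * Real.exp (-(l * t))))]
  rw [setIntegral_congr_fun measurableSet_Ioi (fun u hu => num_pointwise ha hl hu),
    integral_const_mul, K_value (b := a * Real.sqrt l) (by positivity)]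
  have hsl : Real.sqrt l > 0 := Real.sqrt_pos.2 hl
  field_simp [ne_of_gt sqrt_pi_pos]

lemma num_int {a l : ℝ} (ha : 0 < a) (hl : 0 < l) :
    IntegrableOn (fun t => t * (rho a t * Real.exp (-(l * t)))) (Ioi (0:ℝ)) := by
  rw [integrableOn_cdivsq (c := a ^ 2) (by positivity)]
  refine ((num_integrand_int (a := a) (b := a * Real.sqrt l) ha (by positivity)).congr_fun
    (fun u hu => ?_) measurableSet_Ioi)
  exact (num_pointwise ha hl hu).symm

lemma erfc_nonneg (z : ℝ) : 0 ≤ erfc z := by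
  apply mul_nonneg (by positivity)
  exact setIntegral_nonneg measurableSet_Ioi (fun u _ => (Real.exp_pos _).le)

lemma erfc_le_exp {z : ℝ} (hz : 1 ≤ z) : erfc z ≤ 2 / Real.sqrt π * Real.exp (-z) := by
  rw [erfc]
  refine mul_le_mul_of_nonneg_left ?_ (by positivity)
  calc ∫ u in Ioi z, Real.exp (-u ^ 2)
      ≤ ∫ u in Ioi z, Real.exp (-u) := by
        refine setIntegral_mono_on gaussInt.restrict ?_ measurableSet_Ioi (fun u hu => ?_)
        · simpa using exp_neg_integrableOn_Ioi z one_pos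
        · have hu' : z < u := hu
          apply Real.exp_le_exp.2
          nlinarith
    _ = Real.exp (-z) := integral_exp_neg_Ioi z

lemma rho_measurable (a : ℝ) : Measurable (rho a) := by
  apply Measurable.mul
  · exact measurable_const.div
      (measurable_const.mul (measurable_id.mul Real.continuous_sqrt.measurable))
  · exact Real.continuous_exp.measurable.comp (measurable_const.div measurable_id).neg

lemma rho_nonneg {a t : ℝ} (ha : 0 < a) (ht : 0 < t) : 0 ≤ rho a t := by
  have h1 : 0 < Real.sqrt t := Real.sqrt_pos.2 ht
  have h2 : 0 < Real.sqrt π := sqrt_pi_pos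
  rw [rho]
  positivity

lemma dens_indicator (a : ℝ) :
    (fun t => ENNReal.ofReal (Set.indicator (Ioi 0) (rho a) t))
      = Set.indicator (Ioi 0) (fun t => ENNReal.ofReal (rho a t)) := by
  funext t
  rw [Set.indicator_apply, Set.indicator_apply]
  split_ifs <;> simp

lemma dens_measurable (a : ℝ) :
    Measurable (fun t => ENNReal.ofReal (Set.indicator (Ioi 0) (rho a) t)) := by
  rw [dens_indicator]
  exact ((rho_measurable a).ennreal_ofReal).indicator measurableSet_Ioi

lemma law_eq {Ω : Type*} [MeasureSpace Ω] [IsProbabilityMeasure (ℙ : Measure Ω)]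
    {a : ℝ} (ha : 0 < a) {τ : Ω → ℝ} (hτ : Measurable τ)
    (hcdf' : ∀ t : ℝ, 0 < t →
      (Measure.map τ ℙ) (Iic t) = ENNReal.ofReal (erfc (a / Real.sqrt t))) :
    Measure.map τ ℙ
      = volume.withDensity (fun t => ENNReal.ofReal (Set.indicator (Ioi 0) (rho a) t)) := by
  set ν := Measure.map τ ℙ with hν
  haveI : IsProbabilityMeasure ν := Measure.isProbabilityMeasure_map hτ.aemeasurable
  -- ν (Iic 0) = 0
  have hν0 : ν (Iic 0) = 0 := by
    have key : ∀ z : ℝ, 1 ≤ z → ν (Iic 0) ≤ ENNReal.ofReal (2 / Real.sqrt π * Real.exp (-z)) := by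
      intro z hz
      have hz0 : (0:ℝ) < z := lt_of_lt_of_le one_pos hz
      set s := a ^ 2 / z ^ 2 with hs
      have hs0 : 0 < s := by positivity
      have hsz : a / Real.sqrt s = z := by
        rw [hs, show a ^ 2 / z ^ 2 = (a / z) ^ 2 by rw [div_pow],
          Real.sqrt_sq (by positivity : (0:ℝ) ≤ a / z)]
        field_simp
      calc ν (Iic 0) ≤ ν (Iic s) := measure_mono (Iic_subset_Iic.2 hs0.le)
        _ = ENNReal.ofReal (erfc (a / Real.sqrt s)) := hcdf' s hs0
        _ ≤ ENNReal.ofReal (2 / Real.sqrt π * Real.exp (-z)) := by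
            rw [hsz]
            exact ENNReal.ofReal_le_ofReal (erfc_le_exp hz)
    have htend : Tendsto (fun n : ℕ => ENNReal.ofReal (2 / Real.sqrt π * Real.exp (-(n:ℝ))))
        atTop (nhds 0) := by
      rw [show (0:ℝ≥0∞) = ENNReal.ofReal (2 / Real.sqrt π * 0) by simp]
      apply ENNReal.tendsto_ofReal
      apply Tendsto.const_mul
      exact Real.tendsto_exp_atBot.comp (tendsto_neg_atBot_iff.2 tendsto_natCast_atTop_atTop)
    refine le_antisymm ?_ zero_le
    refine ge_of_tendsto htend ?_
    exact eventually_atTop.2 ⟨1, fun n hn => key n (by exact_mod_cast hn)⟩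
  have hτ0 := hν0
  -- extensionality on Iic
  refine Measure.ext_of_Iic ν _ (fun t => ?_)
  rw [withDensity_apply _ measurableSet_Iic, dens_indicator,
    lintegral_indicator measurableSet_Ioi, Measure.restrict_restrict measurableSet_Ioi,
    Ioi_inter_Iic]
  by_cases ht : 0 < t
  · rw [hcdf' t ht, ← rho_cdf ha ht,
      ← ofReal_integral_eq_lintegral_ofReal (rho_integrableOn_Ioc ha ht)
        ((ae_restrict_iff' measurableSet_Ioc).2
          (ae_of_all _ (fun s hs => rho_nonneg ha hs.1)))]
  · rw [Ioc_eq_empty ht, Measure.restrict_empty, lintegral_zero_measure]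
    exact le_antisymm (le_trans (measure_mono (Iic_subset_Iic.2 (not_lt.1 ht))) hν0.le)
      zero_le

lemma expMeasure_Ioi {l t : ℝ} (hl : 0 < l) (ht : 0 ≤ t) :
    expMeasure l (Ioi t) = ENNReal.ofReal (Real.exp (-(l * t))) := by
  haveI := isProbabilityMeasure_expMeasure hl
  have hIic : expMeasure l (Iic t) = ENNReal.ofReal (1 - Real.exp (-(l * t))) := by
    rw [expMeasure, gammaMeasure, withDensity_apply _ measurableSet_Iic]
    rw [show gammaPDF 1 l = exponentialPDF l from rfl,
      lintegral_exponentialPDF_eq_antiDeriv hl, if_pos ht]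
  have hcompl := measure_compl (μ := expMeasure l) (s := Iic t) measurableSet_Iic
    (measure_ne_top _ _)
  rw [compl_Iic] at hcompl
  rw [hcompl, hIic, measure_univ]
  have he1 : Real.exp (-(l * t)) ≤ 1 := Real.exp_le_one_iff.2 (by nlinarith)
  rw [ENNReal.ofReal_sub 1 (Real.exp_pos _).le, ENNReal.ofReal_one,
    ENNReal.sub_sub_cancel ENNReal.one_ne_top (by
      rw [← ENNReal.ofReal_one]
      exact ENNReal.ofReal_le_ofReal he1)]

lemma lintegral_dens {a : ℝ} (g : ℝ → ℝ≥0∞) (hg : Measurable g) :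
    ∫⁻ t, g t ∂(volume.withDensity (fun t => ENNReal.ofReal (Set.indicator (Ioi 0) (rho a) t)))
      = ∫⁻ t in Ioi 0, ENNReal.ofReal (rho a t) * g t := by
  rw [lintegral_withDensity_eq_lintegral_mul _ (dens_measurable a) hg,
    ← lintegral_indicator measurableSet_Ioi]
  congr 1
  funext t
  rw [dens_indicator]
  by_cases h : t ∈ Ioi (0:ℝ) <;> simp [Set.indicator_apply, h]

/-- For 1D Brownian motion with diffusivity `D` started at `L > 0` with a perfectly
absorbing target at `0`, the FPT `τ` has CDF `F(t) = erfc(L/√(4Dt))`, and for an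
independent exponential inactivation time `σ` with rate `λ`,
`E[τ | τ < σ] = L/(2√(Dλ))` exactly, for every `λ > 0`. -/
theorem exact_conditional_mean_one_dimensional
    (Ω : Type*) [MeasureSpace Ω] [IsProbabilityMeasure (ℙ : Measure Ω)]
    (D L : ℝ) (hD : 0 < D) (hL : 0 < L)
    (τ : Ω → ℝ) (hτ : Measurable τ)
    (hcdf : ∀ t : ℝ, 0 < t →
      (ℙ {ω | τ ω ≤ t}).toReal = erfc (L / Real.sqrt (4 * D * t)))
    (σ : ℝ → Ω → ℝ) (hσm : ∀ l, Measurable (σ l))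
    (hσ : ∀ l, 0 < l → Measure.map (σ l) ℙ = expMeasure l)
    (hind : ∀ l, 0 < l → IndepFun τ (σ l) ℙ) :
    ∀ l : ℝ, 0 < l →
      (∫ ω in {ω | τ ω < σ l ω}, τ ω) / (ℙ {ω | τ ω < σ l ω}).toReal
        = L / (2 * Real.sqrt (D * l)) := by
  intro l hl
  have hsD : 0 < Real.sqrt D := Real.sqrt_pos.2 hD
  have hsl : 0 < Real.sqrt l := Real.sqrt_pos.2 hl
  set a := L / (2 * Real.sqrt D) with hadef
  have ha : 0 < a := by positivity
  have harg : ∀ t : ℝ, 0 < t → L / Real.sqrt (4 * D * t) = a / Real.sqrt t := by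
    intro t ht
    rw [show (4:ℝ) * D * t = (4 * D) * t by ring, Real.sqrt_mul (by positivity) t,
      show (4:ℝ) * D = (2 * Real.sqrt D) ^ 2 by
        rw [mul_pow, Real.sq_sqrt hD.le]; norm_num,
      Real.sqrt_sq (by positivity), hadef, div_div]
  set ν := Measure.map τ ℙ with hν
  haveI : IsProbabilityMeasure ν := Measure.isProbabilityMeasure_map hτ.aemeasurable
  have hcdf' : ∀ t : ℝ, 0 < t → ν (Iic t) = ENNReal.ofReal (erfc (a / Real.sqrt t)) := by
    intro t ht
    have h1 : ν (Iic t) = ℙ {ω | τ ω ≤ t} := by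
      rw [hν, Measure.map_apply hτ measurableSet_Iic]; rfl
    rw [h1, ← ENNReal.ofReal_toReal (measure_ne_top ℙ _), hcdf t ht, harg t ht]
  have hdens := law_eq ha hτ hcdf'
  rw [← hν] at hdens
  haveI hεp : IsProbabilityMeasure (expMeasure l) := isProbabilityMeasure_expMeasure hl
  have hφ : Measurable (fun ω => (τ ω, σ l ω)) := hτ.prodMk (hσm l)
  have hjoint : Measure.map (fun ω => (τ ω, σ l ω)) ℙ = ν.prod (expMeasure l) := by
    rw [(indepFun_iff_map_prod_eq_prod_map_map hτ.aemeasurable (hσm l).aemeasurable).1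
      (hind l hl), hσ l hl, hν]
  have hS : MeasurableSet {p : ℝ × ℝ | p.1 < p.2} :=
    measurableSet_lt measurable_fst measurable_snd
  have hA : {ω | τ ω < σ l ω} = (fun ω => (τ ω, σ l ω)) ⁻¹' {p : ℝ × ℝ | p.1 < p.2} := rfl
  set b := a * Real.sqrt l with hbdef
  have hb : 0 < b := by positivity
  have hεg : Measurable (fun t : ℝ => expMeasure l (Ioi t)) :=
    Antitone.measurable (fun s t hst => measure_mono (fun x hx => lt_of_le_of_lt hst hx))
  -- denominator
  have hden : ℙ {ω | τ ω < σ l ω} = ENNReal.ofReal (Real.exp (-(2 * b))) := by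
    rw [hA, ← Measure.map_apply hφ hS, hjoint, Measure.prod_apply hS]
    have hpre : ∀ t : ℝ, (Prod.mk t ⁻¹' {p : ℝ × ℝ | p.1 < p.2}) = Ioi t := fun t => rfl
    simp_rw [hpre]
    rw [hdens, lintegral_dens _ hεg,
      setLIntegral_congr_fun measurableSet_Ioi (fun t ht => by
        have ht' : (0:ℝ) < t := ht
        rw [expMeasure_Ioi hl ht'.le,
          ← ENNReal.ofReal_mul (rho_nonneg ha ht')]),
      ← ofReal_integral_eq_lintegral_ofReal (den_int ha hl)
        ((ae_restrict_iff' measurableSet_Ioi).2 (ae_of_all _ (fun t ht =>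
          mul_nonneg (rho_nonneg ha ht) (Real.exp_pos _).le))),
      den_eq ha hl]
  -- τ nonnegative a.e.
  have hτae : ∀ᵐ ω ∂(ℙ : Measure Ω), 0 ≤ τ ω := by
    have h0 : ℙ (τ ⁻¹' (Iic 0)) = 0 := by
      have : ν (Iic 0) = 0 := by
        rw [hdens, withDensity_apply _ measurableSet_Iic, dens_indicator,
          lintegral_indicator measurableSet_Ioi,
          Measure.restrict_restrict measurableSet_Ioi, Ioi_inter_Iic, Ioc_self,
          Measure.restrict_empty, lintegral_zero_measure]
      rw [← Measure.map_apply hτ measurableSet_Iic, ← hν]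
      exact this
    rw [ae_iff]
    refine measure_mono_null (fun ω hω => ?_) h0
    simp only [Set.mem_setOf_eq, not_le] at hω
    exact hω.le
  -- numerator
  have hnum : ∫ ω in {ω | τ ω < σ l ω}, τ ω
      = a / Real.sqrt l * Real.exp (-(2 * b)) := by
    rw [integral_eq_lintegral_of_nonneg_ae (ae_restrict_of_ae hτae)
      hτ.aestronglyMeasurable.restrict]
    have h2 : ∫⁻ ω in {ω | τ ω < σ l ω}, ENNReal.ofReal (τ ω) ∂ℙ
        = ∫⁻ p in {p : ℝ × ℝ | p.1 < p.2}, ENNReal.ofReal p.1 ∂(ν.prod (expMeasure l)) := by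
      rw [← hjoint, setLIntegral_map hS measurable_fst.ennreal_ofReal hφ]
      rfl
    rw [h2, ← lintegral_indicator hS,
      lintegral_prod _ ((measurable_fst.ennreal_ofReal.indicator hS).aemeasurable)]
    have hinner : ∀ t : ℝ,
        (∫⁻ s, Set.indicator {p : ℝ × ℝ | p.1 < p.2} (fun p => ENNReal.ofReal p.1) (t, s)
            ∂(expMeasure l))
          = ENNReal.ofReal t * expMeasure l (Ioi t) := by
      intro t
      have hind2 : (fun s : ℝ => Set.indicator {p : ℝ × ℝ | p.1 < p.2}
            (fun p => ENNReal.ofReal p.1) (t, s))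
          = Set.indicator (Ioi t) (fun _ => ENNReal.ofReal t) := by
        funext s
        by_cases h : t < s <;> simp [Set.indicator_apply, h, Set.mem_setOf_eq]
      rw [hind2, lintegral_indicator measurableSet_Ioi, setLIntegral_const]
    simp_rw [hinner]
    rw [hdens, lintegral_dens (fun t => ENNReal.ofReal t * expMeasure l (Ioi t))
        (measurable_id.ennreal_ofReal.mul hεg),
      setLIntegral_congr_fun measurableSet_Ioi (fun t ht => by
        have ht' : (0:ℝ) < t := ht
        rw [expMeasure_Ioi hl ht'.le,
          ← ENNReal.ofReal_mul ht'.le,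
          ← ENNReal.ofReal_mul (rho_nonneg ha ht'),
          show rho a t * (t * Real.exp (-(l * t))) = t * (rho a t * Real.exp (-(l * t)))
            by ring]),
      ← ofReal_integral_eq_lintegral_ofReal (num_int ha hl)
        ((ae_restrict_iff' measurableSet_Ioi).2 (ae_of_all _ (fun t ht =>
          mul_nonneg ht.le (mul_nonneg (rho_nonneg ha ht) (Real.exp_pos _).le)))),
      num_eq ha hl, ENNReal.toReal_ofReal (by positivity)]
  rw [hnum, hden, ENNReal.toReal_ofReal (Real.exp_pos _).le, mul_div_assoc,
    div_self (ne_of_gt (Real.exp_pos _)), mul_one, hadef,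
    Real.sqrt_mul hD.le l, div_div, mul_assoc]
end
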